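/- arXiv:2311.00080 — 6 statements merged into one kernel-verified Lean document; each statement's English description precedes it below -/
import Mathlib

section
/- Let G be a group such that the second homology group H₂(G) (with trivial integer coefficients) is finite and the abelianization G_ab is a free abelian group. Then G is circularly orderable if and only if G is left-orderable. -/
universe u

/-- A group is left-orderable if it admits a left-invariant strict total order. -/
def IsLeftOrderable (G : Type u) [Group G] : Prop :=
  ∃ r : G → G → Prop, IsStrictTotalOrder G r ∧ ∀ h a b : G, r a b → r (h * a) (h * b)

/-- A group is circularly orderable if it admits a left-invariant circular order cocycle. -/
def IsCircularlyOrderable (G : Type u) [Group G] : Prop :=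
  ∃ c : G → G → G → ℤ,
    (∀ g₁ g₂ g₃ : G, c g₁ g₂ g₃ = -1 ∨ c g₁ g₂ g₃ = 0 ∨ c g₁ g₂ g₃ = 1) ∧
    (∀ g₁ g₂ g₃ : G, c g₁ g₂ g₃ = 0 ↔ g₁ = g₂ ∨ g₁ = g₃ ∨ g₂ = g₃) ∧
    (∀ g₁ g₂ g₃ g₄ : G, c g₂ g₃ g₄ - c g₁ g₃ g₄ + c g₁ g₂ g₄ - c g₁ g₂ g₃ = 0) ∧
    (∀ h g₁ g₂ g₃ : G, c g₁ g₂ g₃ = c (h * g₁) (h * g₂) (h * g₃))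

/-- The kernel of the canonical presentation `FreeGroup G → G`. -/
def presKernel (G : Type u) [Group G] : Subgroup (FreeGroup G) :=
  (FreeGroup.lift (id : G → G)).ker

instance (G : Type u) [Group G] : (presKernel G).Normal :=
  MonoidHom.normal_ker _

/-- The second homology group `H₂(G; ℤ)` computed via Hopf's formula:
`H₂(G) = (R ⊓ [F, F]) / [F, R]` for the canonical free presentation `G = F/R`,
`F = FreeGroup G`. -/
def H2 (G : Type u) [Group G] : Type u :=
  ↥(presKernel G ⊓ commutator (FreeGroup G)) ⧸
    ((⁅(⊤ : Subgroup (FreeGroup G)), presKernel G⁆).subgroupOf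
      (presKernel G ⊓ commutator (FreeGroup G)))

noncomputable instance (G : Type u) [Group G] : Group (H2 G) := by
  unfold H2; infer_instance

noncomputable section
open Classical

set_option linter.unnecessarySeqFocus false

private def sgZ (p q : ℤ) : ℤ := if p < q then 1 else if q < p then -1 else 0

set_option maxHeartbeats 1000000 in
private lemma zkey (p q r s : ℤ) :
    sgZ q r * sgZ r s * sgZ q s - sgZ p r * sgZ r s * sgZ p s
      + sgZ p q * sgZ q s * sgZ p s - sgZ p q * sgZ q r * sgZ p r = 0 := by
  unfold sgZ; split_ifs <;> omega


theorem lo_to_co {G : Type u} [Group G] (h : IsLeftOrderable G) : IsCircularlyOrderable G := by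
  obtain ⟨r, hsto, hinvL⟩ := h
  haveI := hsto
  have irr : ∀ a : G, ¬ r a a := fun a => irrefl_of r a
  set sg : G → G → ℤ := fun a b => if r a b then 1 else if r b a then -1 else 0 with hsgdef
  have hsg3 : ∀ a b, sg a b = -1 ∨ sg a b = 0 ∨ sg a b = 1 := by
    intro a b; simp only [hsgdef]; split_ifs <;> simp
  have hsg0 : ∀ a b, sg a b = 0 ↔ a = b := by
    intro a b; simp only [hsgdef]
    split_ifs with h1 h2
    · constructor
      · intro hc; exact absurd hc (by norm_num)
      · intro hc; subst hc; exact absurd h1 (irr a)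
    · constructor
      · intro hc; exact absurd hc (by norm_num)
      · intro hc; subst hc; exact absurd h2 (irr a)
    · simp only [eq_self_iff_true, true_iff]
      rcases trichotomous_of r a b with hh|hh|hh
      · exact absurd hh h1
      · exact hh
      · exact absurd hh h2
  have hsg_inv : ∀ (u a b : G), sg (u*a) (u*b) = sg a b := by
    intro u a b
    have h1 : r (u*a) (u*b) ↔ r a b :=
      ⟨fun hh => by have := hinvL u⁻¹ _ _ hh; simpa using this, fun hh => hinvL u a b hh⟩
    have h2 : r (u*b) (u*a) ↔ r b a :=
      ⟨fun hh => by have := hinvL u⁻¹ _ _ hh; simpa using this, fun hh => hinvL u b a hh⟩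
    simp only [hsgdef]
    rw [if_congr h1 rfl (if_congr h2 rfl rfl)]
  refine ⟨fun a b c => sg a b * sg b c * sg a c, ?_, ?_, ?_, ?_⟩
  · intro a b c
    show sg a b * sg b c * sg a c = -1 ∨ sg a b * sg b c * sg a c = 0 ∨ sg a b * sg b c * sg a c = 1
    rcases hsg3 a b with h1|h1|h1 <;> rcases hsg3 b c with h2|h2|h2 <;>
      rcases hsg3 a c with h3|h3|h3 <;> rw [h1, h2, h3] <;> norm_num
  · intro a b c
    show sg a b * sg b c * sg a c = 0 ↔ _
    rw [mul_eq_zero, mul_eq_zero, hsg0, hsg0, hsg0]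
    tauto
  · intro g1 g2 g3 g4
    show sg g2 g3 * sg g3 g4 * sg g2 g4 - sg g1 g3 * sg g3 g4 * sg g1 g4
      + sg g1 g2 * sg g2 g4 * sg g1 g4 - sg g1 g2 * sg g2 g3 * sg g1 g3 = 0
    set I : G → G → ℤ := fun t x => if r t x then 1 else 0 with hIdef
    set rk : G → ℤ := fun x => I g1 x + I g2 x + I g3 x + I g4 x with hrkdef
    have hmono : ∀ t x y, r x y → I t x ≤ I t y := by
      intro t x y hxy
      by_cases h : r t x
      · simp [hIdef, h, trans_of r h hxy]
      · simp only [hIdef, if_neg h]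
        split_ifs <;> norm_num
    have hrk : ∀ x y, r x y → (x = g1 ∨ x = g2 ∨ x = g3 ∨ x = g4) → rk x < rk y := by
      intro x y hxy hx
      have m1 := hmono g1 x y hxy
      have m2 := hmono g2 x y hxy
      have m3 := hmono g3 x y hxy
      have hIx : I x x = 0 := by simp [hIdef, irr x]
      have hIy : I x y = 1 := by simp [hIdef, hxy]
      have m4 := hmono g4 x y hxy
      rcases hx with h|h|h|h <;> subst h <;> simp only [hrkdef] <;> linarith
    have hkey : ∀ x y, (x = g1 ∨ x = g2 ∨ x = g3 ∨ x = g4) →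
        (y = g1 ∨ y = g2 ∨ y = g3 ∨ y = g4) → sg x y = sgZ (rk x) (rk y) := by
      intro x y hx hy
      rcases trichotomous_of r x y with hh|hh|hh
      · have hlt := hrk x y hh hx
        have hxyne : ¬ r y x := fun hc => irr x (trans_of r hh hc)
        simp [hsgdef, sgZ, hh, hlt]
      · subst hh
        simp [hsgdef, sgZ, irr x]
      · have hlt := hrk y x hh hy
        have hxyne : ¬ r x y := fun hc => irr x (trans_of r hc hh)
        simp only [hsgdef, sgZ, if_neg hxyne, if_pos hh]
        rw [if_neg (by omega), if_pos hlt]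
    have e12 := hkey g1 g2 (by tauto) (by tauto)
    have e13 := hkey g1 g3 (by tauto) (by tauto)
    have e14 := hkey g1 g4 (by tauto) (by tauto)
    have e23 := hkey g2 g3 (by tauto) (by tauto)
    have e24 := hkey g2 g4 (by tauto) (by tauto)
    have e34 := hkey g3 g4 (by tauto) (by tauto)
    rw [e12, e13, e14, e23, e24, e34]
    exact zkey (rk g1) (rk g2) (rk g3) (rk g4)
  · intro u a b c
    show sg a b * sg b c * sg a c = sg (u*a) (u*b) * sg (u*b) (u*c) * sg (u*a) (u*c)
    rw [hsg_inv, hsg_inv, hsg_inv]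

noncomputable section
open Classical

structure CircOrd (G : Type u) [Group G] where
  c : G → G → G → ℤ
  val : ∀ g₁ g₂ g₃ : G, c g₁ g₂ g₃ = -1 ∨ c g₁ g₂ g₃ = 0 ∨ c g₁ g₂ g₃ = 1
  zero : ∀ g₁ g₂ g₃ : G, c g₁ g₂ g₃ = 0 ↔ g₁ = g₂ ∨ g₁ = g₃ ∨ g₂ = g₃
  coc : ∀ g₁ g₂ g₃ g₄ : G, c g₂ g₃ g₄ - c g₁ g₃ g₄ + c g₁ g₂ g₄ - c g₁ g₂ g₃ = 0
  linv : ∀ h g₁ g₂ g₃ : G, c g₁ g₂ g₃ = c (h * g₁) (h * g₂) (h * g₃)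

namespace CircOrd
variable {G : Type u} [Group G] (co : CircOrd G)

lemma cLB (a b d : G) : -1 ≤ co.c a b d := by rcases co.val a b d with h|h|h <;> rw [h] <;> norm_num
lemma cUB (a b d : G) : co.c a b d ≤ 1 := by rcases co.val a b d with h|h|h <;> rw [h] <;> norm_num

lemma c_swap23 (a b d : G) : co.c a d b = -co.c a b d := by
  have h := co.coc a b d b
  have h1 : co.c b d b = 0 := (co.zero _ _ _).mpr (by tauto)
  have h2 : co.c a b b = 0 := (co.zero _ _ _).mpr (by tauto)
  linarith

lemma c_swap12 (a b d : G) : co.c b a d = -co.c a b d := by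
  have h := co.coc a b a d
  have h1 : co.c a a d = 0 := (co.zero _ _ _).mpr (by tauto)
  have h2 : co.c a b a = 0 := (co.zero _ _ _).mpr (by tauto)
  linarith

lemma c_rot (a b d : G) : co.c a b d = co.c b d a := by
  have h1 := co.c_swap23 b a d
  have h2 := co.c_swap12 a b d
  linarith

lemma c_ne (a b d : G) (h : co.c a b d = 1) : a ≠ b ∧ a ≠ d ∧ b ≠ d := by
  by_contra hc
  have : co.c a b d = 0 := (co.zero _ _ _).mpr (by tauto)
  omega

/-- the relation "basepoint order": `lt1 a b` iff going counterclockwise from `1`,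
`a` appears strictly before `b`. -/
def lt1 (a b : G) : Prop := (a = 1 ∧ b ≠ 1) ∨ co.c 1 a b = 1

lemma lt1_c_of_ne (a b : G) (ha : a ≠ 1) : co.lt1 a b ↔ co.c 1 a b = 1 := by
  unfold lt1; tauto

lemma not_lt1_one (a : G) : ¬ co.lt1 a 1 := by
  rintro (⟨h1, h2⟩|h)
  · exact h2 rfl
  · have : co.c 1 a 1 = 0 := (co.zero _ _ _).mpr (by tauto)
    omega

lemma lt1_one (a : G) (ha : a ≠ 1) : co.lt1 1 a := Or.inl ⟨rfl, ha⟩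

lemma lt1_ne (a b : G) (h : co.lt1 a b) : a ≠ b := by
  rcases h with ⟨h1, h2⟩|h
  · rintro rfl; exact h2 h1
  · exact (co.c_ne 1 a b h).2.2

lemma lt1_ne_one (a b : G) (h : co.lt1 a b) : b ≠ 1 := by
  rintro rfl; exact co.not_lt1_one a h

lemma lt1_irrefl (a : G) : ¬ co.lt1 a a := fun h => co.lt1_ne a a h rfl

lemma lt1_asymm (a b : G) (h : co.lt1 a b) (h' : co.lt1 b a) : False := by
  rcases h with ⟨ha1, hb1⟩|h
  · rcases h' with ⟨hb1', ha1'⟩|h'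
    · exact ha1' ha1
    · have : co.c 1 b a = 0 := (co.zero _ _ _).mpr (Or.inr (Or.inl ha1.symm))
      omega
  · rcases h' with ⟨hb1, ha1⟩|h'
    · have : co.c 1 a b = 0 := (co.zero _ _ _).mpr (Or.inr (Or.inl hb1.symm))
      omega
    · have := co.c_swap23 1 a b
      omega

lemma lt1_total (a b : G) (hne : a ≠ b) : co.lt1 a b ∨ co.lt1 b a := by
  by_cases ha : a = 1
  · subst ha; exact Or.inl (co.lt1_one b (Ne.symm hne))
  by_cases hb : b = 1
  · subst hb; exact Or.inr (co.lt1_one a ha)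
  have h0 : co.c 1 a b ≠ 0 := by
    intro hc
    rcases (co.zero 1 a b).mp hc with h|h|h
    · exact ha h.symm
    · exact hb h.symm
    · exact hne h
  have := co.c_swap23 1 a b
  rcases co.val 1 a b with h|h|h
  · right; rw [co.lt1_c_of_ne b a hb]; omega
  · exact absurd h h0
  · left; exact Or.inr h

lemma lt1_trans (a b d : G) (h1 : co.lt1 a b) (h2 : co.lt1 b d) : co.lt1 a d := by
  rcases h1 with ⟨rfl, hb⟩|h1
  · exact co.lt1_one d (co.lt1_ne_one b d h2)
  · have hb1 : b ≠ 1 := Ne.symm (co.c_ne 1 a b h1).2.1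
    rcases h2 with ⟨hb0, hd⟩|h2
    · exact absurd hb0 hb1
    · -- c 1 a b = 1, c 1 b d = 1 ⊢ lt1 a d
      have ha : a ≠ 1 := Ne.symm (co.c_ne 1 a b h1).1
      rw [co.lt1_c_of_ne a d ha]
      have hc := co.coc 1 a b d
      have u1 := co.cUB a b d
      have u2 := co.cUB 1 a d
      linarith

/-- helper: express `c x a b` in terms of basepoint values. -/
lemma c_expand (x a b : G) : co.c x a b = co.c 1 a b - co.c 1 x b + co.c 1 x a := by
  have := co.coc 1 x a b; linarith

/-- The Euler-type 2-cocycle associated to the circular order. -/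
def f (g h : G) : ℤ := if h = 1 ∨ co.lt1 g (g * h) then 0 else 1

lemma f_val (g h : G) : co.f g h = 0 ∨ co.f g h = 1 := by
  unfold f; split_ifs <;> simp

lemma f_LB (g h : G) : 0 ≤ co.f g h := by rcases co.f_val g h with h|h <;> rw [h] <;> norm_num
lemma f_UB (g h : G) : co.f g h ≤ 1 := by rcases co.f_val g h with h|h <;> rw [h] <;> norm_num

lemma f_eq_zero_iff (u g : G) : co.f u g = 0 ↔ (g = 1 ∨ co.lt1 u (u * g)) := by
  unfold f; split_ifs with h
  · simp [h]
  · simp [h]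

lemma f_eq_one_iff (u g : G) : co.f u g = 1 ↔ (g ≠ 1 ∧ co.lt1 (u * g) u) := by
  unfold f; split_ifs with h
  · simp only [show (0:ℤ) ≠ 1 from by norm_num, false_iff]
    rintro ⟨hg, hlt⟩
    rcases h with h|h
    · exact hg h
    · exact co.lt1_asymm _ _ h hlt
  · push_neg at h
    simp only [eq_self_iff_true, true_iff]
    refine ⟨h.1, ?_⟩
    have hne : u * g ≠ u := by
      intro hc; exact h.1 (by simpa using hc)
    rcases co.lt1_total (u*g) u hne with hh|hh
    · exact hh
    · exact absurd hh h.2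

lemma f_one_left (g : G) : co.f 1 g = 0 := by
  rw [co.f_eq_zero_iff]
  by_cases hg : g = 1
  · exact Or.inl hg
  · exact Or.inr (by rw [one_mul]; exact co.lt1_one g hg)

lemma f_one_right (g : G) : co.f g 1 = 0 := by rw [co.f_eq_zero_iff]; exact Or.inl rfl

lemma f_inv_cancel (g : G) : co.f g⁻¹ g = co.f g g⁻¹ := by
  by_cases hg : g = 1
  · subst hg; simp
  · have h1 : co.f g⁻¹ g = 1 := by
      rw [co.f_eq_one_iff, inv_mul_cancel]
      exact ⟨hg, co.lt1_one g⁻¹ (inv_ne_one.mpr hg)⟩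
    have h2 : co.f g g⁻¹ = 1 := by
      rw [co.f_eq_one_iff, mul_inv_cancel]
      exact ⟨inv_ne_one.mpr hg, co.lt1_one g hg⟩
    rw [h1, h2]

/-- The doubled formula for `f` in terms of `c` and a coboundary of indicator values. -/
lemma two_f (g h : G) :
    2 * co.f g h = 1 - co.c 1 g (g * h)
      + ((if g = 1 then (0:ℤ) else 1) + (if h = 1 then (0:ℤ) else 1)
          - (if g * h = 1 then (0:ℤ) else 1) - 1) := by
  by_cases hg : g = 1
  · subst hg
    have hc : co.c 1 1 (1 * h) = 0 := (co.zero _ _ _).mpr (Or.inl rfl)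
    rw [co.f_one_left, hc]
    simp
  · by_cases hh : h = 1
    · subst hh
      have hc : co.c 1 g (g * 1) = 0 := (co.zero _ _ _).mpr (Or.inr (Or.inr (by rw [mul_one])))
      rw [co.f_one_right, hc]
      simp [hg]
    · by_cases hgh : g * h = 1
      · have hf : co.f g h = 1 := by
          rw [co.f_eq_one_iff, hgh]
          exact ⟨hh, co.lt1_one g hg⟩
        have hc : co.c 1 g (g * h) = 0 := (co.zero _ _ _).mpr (Or.inr (Or.inl hgh.symm))
        rw [hf, hc]
        simp [hg, hh, hgh]
      · have hghg : g * h ≠ g := fun hc => hh (by simpa using hc)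
        rcases co.lt1_total (g*h) g hghg with hlt|hlt
        · have hf : co.f g h = 1 := by rw [co.f_eq_one_iff]; exact ⟨hh, hlt⟩
          have hc : co.c 1 g (g*h) = -1 := by
            have h1 : co.c 1 (g*h) g = 1 := (co.lt1_c_of_ne _ _ hgh).mp hlt
            have := co.c_swap23 1 g (g*h)
            omega
          rw [hf, hc]
          simp [hg, hh, hgh]
        · have hf : co.f g h = 0 := by rw [co.f_eq_zero_iff]; exact Or.inr hlt
          have hc : co.c 1 g (g*h) = 1 := (co.lt1_c_of_ne _ _ hg).mp hlt
          rw [hf, hc]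
          simp [hg, hh, hgh]

/-- `f` is a 2-cocycle. -/
lemma f_coc (g h k : G) : co.f g h + co.f (g * h) k = co.f h k + co.f g (h * k) := by
  have h1 := co.two_f g h
  have h2 := co.two_f (g*h) k
  have h3 := co.two_f h k
  have h4 := co.two_f g (h*k)
  have hin : co.c 1 h (h*k) = co.c g (g*h) (g*h*k) := by
    have := co.linv g 1 h (h*k)
    rw [mul_one] at this
    rw [this, mul_assoc]
  have hco := co.coc 1 g (g*h) (g*h*k)
  rw [hin] at h3
  rw [show g*(h*k) = g*h*k from (mul_assoc g h k).symm] at h4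
  linarith

lemma lt1_mul_ne_one (u a : G) (h : co.lt1 u a) : a ≠ 1 := co.lt1_ne_one u a h

lemma cruxi (u g h : G) (h0 : co.f u g = 0) (h1 : co.f u h = 1) : co.lt1 g h := by
  rw [co.f_eq_zero_iff] at h0
  rw [co.f_eq_one_iff] at h1
  obtain ⟨hh1, hbu⟩ := h1
  by_cases hg1 : g = 1
  · subst hg1; exact co.lt1_one h hh1
  · rcases h0 with h0|h0
    · exact absurd h0 hg1
    · -- lt1 u (u*g), lt1 (u*h) u ⊢ lt1 g h with g ≠ 1
      set a := u * g with hadef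
      set b := u * h with hbdef
      have hu1 : u ≠ 1 := fun hc => co.not_lt1_one b (by rw [← hc]; exact hbu)
      have hgoal : co.c 1 g h = 1 → co.lt1 g h := fun hc => Or.inr hc
      have hconv : co.c 1 g h = co.c u a b := by
        have := co.linv u 1 g h; rw [mul_one] at this; exact this
      have hca : co.c 1 u a = 1 := by
        rcases h0 with ⟨hu, _⟩|h0
        · exact absurd hu hu1
        · exact h0
      have hane : a ≠ 1 := Ne.symm (co.c_ne 1 u a hca).2.1
      by_cases hb1 : b = 1
      · -- goal c u a 1 = 1, using rot: c u a 1 = c 1 u a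
        apply hgoal
        rw [hconv, hb1]
        have : co.c u a 1 = co.c 1 u a := by rw [co.c_rot u a 1, co.c_rot a 1 u]
        rw [this, hca]
      · have hcb : co.c 1 b u = 1 := by
          rcases hbu with ⟨hb, _⟩|hbu
          · exact absurd hb hb1
          · exact hbu
        apply hgoal
        rw [hconv]
        have hexp := co.c_expand u a b
        have hsw := co.c_swap23 1 u b
        have l1 := co.cLB 1 a b
        have u2 := co.cUB u a b
        linarith

lemma cruxiii (u g h : G) (h1 : co.f u g = 1) (h0 : co.f u h = 0) :
    co.lt1 (u * g) (u * h) := by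
  rw [co.f_eq_zero_iff] at h0
  rw [co.f_eq_one_iff] at h1
  rcases h0 with h0|h0
  · rw [h0, mul_one]; exact h1.2
  · exact co.lt1_trans _ _ _ h1.2 h0

lemma cruxii (u g h : G) (heq : co.f u g = co.f u h) (hlt : co.lt1 (u * g) (u * h)) :
    co.lt1 g h := by
  set a := u * g with hadef
  set b := u * h with hbdef
  have hne : g ≠ h := fun hc => co.lt1_ne a b hlt (by rw [hadef, hbdef, hc])
  by_cases hg1 : g = 1
  · subst hg1; exact co.lt1_one h (Ne.symm hne)
  by_cases hh1 : h = 1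
  · -- b = u; f u h = 0; so f u g = 0 → g = 1 ∨ lt1 u a; lt1 a u contra
    exfalso
    have hfh : co.f u h = 0 := by rw [hh1]; exact co.f_one_right u
    rw [hfh, co.f_eq_zero_iff] at heq
    rcases heq with h'|h'
    · exact hg1 h'
    · have hbu : b = u := by rw [hbdef, hh1, mul_one]
      rw [hbu] at hlt
      exact co.lt1_asymm _ _ h' hlt
  -- main: g, h ≠ 1; goal c 1 g h = 1
  have hconv : co.c 1 g h = co.c u a b := by
    have := co.linv u 1 g h; rw [mul_one] at this; exact this
  have hgoal : co.c u a b = 1 → co.lt1 g h := fun hc => Or.inr (by rw [hconv]; exact hc)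
  by_cases hu1 : u = 1
  · apply hgoal
    have ha : a = g := by rw [hadef, hu1, one_mul]
    have hb : b = h := by rw [hbdef, hu1, one_mul]
    rw [← hconv] at *
    rcases hlt with ⟨ha1, _⟩|hlt
    · exact absurd (ha ▸ ha1) hg1
    · rw [ha, hb] at hlt; exact hlt
  rcases co.f_val u g with hf|hf
  · -- both zero: lt1 u a, lt1 u b
    have h0g := (co.f_eq_zero_iff u g).mp hf
    have h0h := (co.f_eq_zero_iff u h).mp (heq ▸ hf)
    have hua : co.lt1 u a := by rcases h0g with h'|h' <;> [exact absurd h' hg1; exact h']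
    have hub : co.lt1 u b := by rcases h0h with h'|h' <;> [exact absurd h' hh1; exact h']
    have hca : co.c 1 u a = 1 := by
      rcases hua with ⟨h', _⟩|h' <;> [exact absurd h' hu1; exact h']
    have hcb : co.c 1 u b = 1 := by
      rcases hub with ⟨h', _⟩|h' <;> [exact absurd h' hu1; exact h']
    have hane : a ≠ 1 := Ne.symm (co.c_ne 1 u a hca).2.1
    have hcab : co.c 1 a b = 1 := by
      rcases hlt with ⟨h', _⟩|h' <;> [exact absurd h' hane; exact h']
    apply hgoal
    have hexp := co.c_expand u a b
    linarith
  · -- both one: lt1 a u, lt1 b u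
    have h1g := (co.f_eq_one_iff u g).mp hf
    have h1h := (co.f_eq_one_iff u h).mp (heq ▸ hf)
    have hau : co.lt1 a u := h1g.2
    have hbu : co.lt1 b u := h1h.2
    have hbne : b ≠ 1 := co.lt1_ne_one a b hlt
    have hcb : co.c 1 b u = 1 := by
      rcases hbu with ⟨h', _⟩|h' <;> [exact absurd h' hbne; exact h']
    by_cases ha1 : a = 1
    · apply hgoal
      rw [ha1]
      have : co.c u 1 b = co.c 1 b u := co.c_rot u 1 b
      rw [this, hcb]
    · have hca : co.c 1 a u = 1 := by
        rcases hau with ⟨h', _⟩|h' <;> [exact absurd h' ha1; exact h']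
      have hcab : co.c 1 a b = 1 := by
        rcases hlt with ⟨h', _⟩|h' <;> [exact absurd h' ha1; exact h']
      apply hgoal
      have hexp := co.c_expand u a b
      have hs1 := co.c_swap23 1 u b
      have hs2 := co.c_swap23 1 u a
      linarith

lemma lt1_forward (u g h : G) (hlt : co.lt1 g h) :
    co.f u g < co.f u h ∨ (co.f u g = co.f u h ∧ co.lt1 (u * g) (u * h)) := by
  rcases co.f_val u g with hfg|hfg <;> rcases co.f_val u h with hfh|hfh
  · right
    refine ⟨by rw [hfg, hfh], ?_⟩
    have hne : u * g ≠ u * h := fun hc => co.lt1_ne g h hlt (by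
      have := mul_left_cancel hc; exact this)
    rcases co.lt1_total (u*g) (u*h) hne with h'|h'
    · exact h'
    · exact absurd (co.cruxii u h g (by rw [hfg, hfh]) h') (fun hh => co.lt1_asymm _ _ hlt hh)
  · left; rw [hfg, hfh]; norm_num
  · exfalso; exact co.lt1_asymm _ _ hlt (co.cruxi u h g hfh hfg)
  · right
    refine ⟨by rw [hfg, hfh], ?_⟩
    have hne : u * g ≠ u * h := fun hc => co.lt1_ne g h hlt (mul_left_cancel hc)
    rcases co.lt1_total (u*g) (u*h) hne with h'|h'
    · exact h'
    · exact absurd (co.cruxii u h g (by rw [hfg, hfh]) h') (fun hh => co.lt1_asymm _ _ hlt hh)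

/-- The key invariance lemma for the lexicographic lift of the circular order. -/
lemma ltlex_inv (u g h : G) (m n : ℤ)
    (hlt : m < n ∨ (m = n ∧ co.lt1 g h)) :
    m + co.f u g < n + co.f u h ∨
      (m + co.f u g = n + co.f u h ∧ co.lt1 (u * g) (u * h)) := by
  rcases hlt with hmn|⟨hmn, hgh⟩
  · by_cases hc : m + co.f u g < n + co.f u h
    · exact Or.inl hc
    · right
      have h1 := co.f_LB u g
      have h2 := co.f_UB u g
      have h3 := co.f_LB u h
      have h4 := co.f_UB u h
      have hfg : co.f u g = 1 := by omega
      have hfh : co.f u h = 0 := by omega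
      exact ⟨by omega, co.cruxiii u g h hfg hfh⟩
  · rcases co.lt1_forward u g h hgh with h'|⟨h1, h2⟩
    · left; omega
    · right; exact ⟨by omega, h2⟩

end CircOrd

/-- The central extension of `G` by `ℤ` determined by the circular order cocycle. -/
@[ext]
structure EE {G : Type u} [Group G] (co : CircOrd G) : Type u where
  m : ℤ
  g : G

namespace EE
variable {G : Type u} [Group G] {co : CircOrd G}

noncomputable instance : Mul (EE co) := ⟨fun x y => ⟨x.m + y.m + co.f x.g y.g, x.g * y.g⟩⟩
instance : One (EE co) := ⟨⟨0, 1⟩⟩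
noncomputable instance : Inv (EE co) := ⟨fun x => ⟨-x.m - co.f x.g x.g⁻¹, x.g⁻¹⟩⟩

lemma mul_m (x y : EE co) : (x * y).m = x.m + y.m + co.f x.g y.g := rfl
lemma mul_g (x y : EE co) : (x * y).g = x.g * y.g := rfl
lemma one_m : (1 : EE co).m = 0 := rfl
lemma one_g : (1 : EE co).g = 1 := rfl
lemma inv_m (x : EE co) : (x⁻¹).m = -x.m - co.f x.g x.g⁻¹ := rfl
lemma inv_g (x : EE co) : (x⁻¹).g = x.g⁻¹ := rfl

noncomputable instance instGroup : Group (EE co) :=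
  Group.ofLeftAxioms
    (fun a b c => by
      ext
      · show (a*b).m + c.m + co.f (a*b).g c.g = a.m + (b*c).m + co.f a.g (b*c).g
        rw [mul_g, mul_m, mul_m, mul_g]
        have := co.f_coc a.g b.g c.g
        linarith
      · show (a.g * b.g) * c.g = a.g * (b.g * c.g)
        exact mul_assoc _ _ _)
    (fun a => by
      ext
      · show 0 + a.m + co.f 1 a.g = a.m
        rw [co.f_one_left]; ring
      · exact one_mul a.g)
    (fun a => by
      ext
      · show (-a.m - co.f a.g a.g⁻¹) + a.m + co.f a.g⁻¹ a.g = 0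
        rw [co.f_inv_cancel]; ring
      · exact inv_mul_cancel a.g)

lemma central (a : ℤ) (x : EE co) : (⟨a, 1⟩ : EE co) * x = x * ⟨a, 1⟩ := by
  ext
  · show a + x.m + co.f 1 x.g = x.m + a + co.f x.g 1
    rw [co.f_one_left, co.f_one_right]; ring
  · show 1 * x.g = x.g * 1
    rw [one_mul, mul_one]

lemma z_pow (a : ℤ) (n : ℕ) : ((⟨a, 1⟩ : EE co) ^ n) = ⟨n * a, 1⟩ := by
  induction n with
  | zero => ext <;> simp [one_m, one_g]
  | succ n ih =>
    rw [pow_succ, ih]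
    ext
    · show (n : ℤ) * a + a + co.f 1 1 = ((n : ℕ) + 1 : ℕ) * a
      rw [co.f_one_left]; push_cast; ring
    · show (1 : G) * 1 = 1
      rw [mul_one]

/-- projection to `G`. -/
noncomputable def projG : EE co →* G where
  toFun := EE.g
  map_one' := rfl
  map_mul' := fun _ _ => rfl

end EE

set_option maxHeartbeats 2000000 in
theorem co_to_lo {G : Type u} [Group G] (hH2 : Finite (H2 G))
    (hab : ∃ ι : Type u, Nonempty (Additive (Abelianization G) ≃+ FreeAbelianGroup ι))
    (co : CircOrd G) : IsLeftOrderable G := by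
  classical
  -- the canonical presentation
  set π : FreeGroup G →* G := FreeGroup.lift (id : G → G) with hπdef
  have hπof : ∀ g : G, π (FreeGroup.of g) = g := fun g => FreeGroup.lift_apply_of
  have hπsurj : Function.Surjective π := fun g => ⟨FreeGroup.of g, hπof g⟩
  have hmemR : ∀ w, w ∈ presKernel G ↔ π w = 1 := fun w => Iff.rfl
  -- the lift to the central extension
  set σ : FreeGroup G →* EE co := FreeGroup.lift (fun g => (⟨0, g⟩ : EE co)) with hσdef
  have hσof : ∀ g : G, σ (FreeGroup.of g) = ⟨0, g⟩ := fun g => FreeGroup.lift_apply_of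
  have hπσ : ∀ w, (σ w).g = π w := by
    have : (EE.projG).comp σ = π := by
      apply FreeGroup.ext_hom
      intro a
      show EE.projG (σ (FreeGroup.of a)) = π (FreeGroup.of a)
      rw [hσof, hπof]; rfl
    intro w
    have := DFunLike.congr_fun this w
    exact this
  set ψ : FreeGroup G → ℤ := fun w => (σ w).m with hψdef
  have hσR : ∀ w, π w = 1 → σ w = ⟨ψ w, 1⟩ := by
    intro w hw; ext
    · rfl
    · rw [hπσ w, hw]
  have hψ1 : ψ 1 = 0 := by
    show (σ 1).m = 0
    rw [map_one]; rfl
  have hψmul : ∀ w w', π w = 1 → π w' = 1 → ψ (w * w') = ψ w + ψ w' := by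
    intro w w' hw hw'
    show (σ (w * w')).m = _
    rw [map_mul, EE.mul_m, hπσ w, hπσ w', hw, hw', co.f_one_left]
    ring
  have hψinv : ∀ w, π w = 1 → ψ w⁻¹ = -ψ w := by
    intro w hw
    have h1 : π w⁻¹ = 1 := by rw [map_inv, hw, inv_one]
    have := hψmul w w⁻¹ hw h1
    rw [mul_inv_cancel] at this
    rw [hψ1] at this
    linarith
  have hψpow : ∀ w (n : ℕ), π w = 1 → ψ (w ^ n) = n * ψ w := by
    intro w n hw
    show (σ (w ^ n)).m = _
    rw [map_pow, hσR w hw, EE.z_pow]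
  -- ψ vanishes on [F, R]
  have hψcomm : ∀ w ∈ ⁅(⊤ : Subgroup (FreeGroup G)), presKernel G⁆, ψ w = 0 := by
    have hle : ⁅(⊤ : Subgroup (FreeGroup G)), presKernel G⁆ ≤ σ.ker := by
      rw [Subgroup.commutator_le]
      intro g1 _ g2 hg2
      rw [MonoidHom.mem_ker, map_commutatorElement]
      have h2 : σ g2 = ⟨ψ g2, 1⟩ := hσR g2 ((hmemR g2).mp hg2)
      rw [h2]
      exact commutatorElement_eq_one_iff_commute.mpr (EE.central (ψ g2) (σ g1)).symm
    intro w hw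
    have : σ w = 1 := hle hw
    show (σ w).m = 0
    rw [this]; rfl
  -- ψ vanishes on R ∩ [F, F]  (uses finiteness of H₂)
  have hψtor : ∀ w, π w = 1 → w ∈ commutator (FreeGroup G) → ψ w = 0 := by
    intro w hwR hwC
    set K := presKernel G ⊓ commutator (FreeGroup G) with hKdef
    set N := (⁅(⊤ : Subgroup (FreeGroup G)), presKernel G⁆).subgroupOf K with hNdef
    have hx : w ∈ K := ⟨(hmemR w).mpr hwR, hwC⟩
    set x : ↥K := ⟨w, hx⟩ with hxdef
    haveI : Finite (↥K ⧸ N) := hH2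
    have hfin : IsOfFinOrder (QuotientGroup.mk x : ↥K ⧸ N) := isOfFinOrder_of_finite _
    obtain ⟨n, hn, hpow⟩ := isOfFinOrder_iff_pow_eq_one.mp hfin
    have hxn : x ^ n ∈ N := by
      rw [← QuotientGroup.eq_one_iff]
      rw [← hpow]
      rfl
    have hmem : ((x : ↥K) ^ n : ↥K) ∈ N := hxn
    rw [hNdef, Subgroup.mem_subgroupOf] at hmem
    have hcoe : ((x ^ n : ↥K) : FreeGroup G) = w ^ n := by
      rw [SubgroupClass.coe_pow]
    rw [hcoe] at hmem
    have h0 : ψ (w ^ n) = 0 := hψcomm _ hmem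
    rw [hψpow w n hwR] at h0
    have : (n : ℤ) ≠ 0 := Int.natCast_ne_zero.mpr hn.ne'
    exact (mul_eq_zero.mp h0).resolve_left this
  -- abelianization machinery
  set ab : FreeGroup G →* Abelianization (FreeGroup G) := Abelianization.of with habdef
  have habsurj : Function.Surjective ab := fun x =>
    Quotient.exists_rep x
  set q : Abelianization (FreeGroup G) →* Abelianization G :=
    Abelianization.lift ((Abelianization.of).comp π) with hqdef
  have hq_ab : ∀ w, q (ab w) = Abelianization.of (π w) := fun w => Abelianization.lift_apply_of (f := _) (x := _)
  have habC : ∀ u, u ∈ commutator (FreeGroup G) → ab u = 1 := by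
    intro u hu
    exact (QuotientGroup.eq_one_iff u).mpr hu
  have hψcongr : ∀ r r', π r = 1 → π r' = 1 → ab r = ab r' → ψ r = ψ r' := by
    intro r r' hr hr' heq
    have hd : π (r⁻¹ * r') = 1 := by rw [map_mul, map_inv, hr, hr']; simp
    have hdC : r⁻¹ * r' ∈ commutator (FreeGroup G) := by
      have : ab (r⁻¹ * r') = 1 := by
        rw [map_mul, map_inv, heq]; simp
      exact (QuotientGroup.eq_one_iff _).mp this
    have h0 : ψ (r⁻¹ * r') = 0 := hψtor _ hd hdC
    have := hψmul r (r⁻¹ * r') hr hd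
    rw [mul_inv_cancel_left] at this
    linarith
  -- the representative machinery : elements of ker q come from R
  have hrep : ∀ x, q x = 1 → ∃ r, π r = 1 ∧ ab r = x := by
    intro x hx
    obtain ⟨w, rfl⟩ := habsurj x
    rw [hq_ab] at hx
    have hπw : π w ∈ commutator G := (QuotientGroup.eq_one_iff _).mp hx
    have hcommG : commutator G = Subgroup.map π (commutator (FreeGroup G)) := by
      unfold commutator
      rw [Subgroup.map_commutator, Subgroup.map_top_of_surjective π hπsurj]
    rw [hcommG] at hπw
    obtain ⟨u, huC, huw⟩ := hπw
    refine ⟨w * u⁻¹, ?_, ?_⟩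
    · rw [map_mul, map_inv, huw]; simp
    · rw [map_mul, map_inv, habC u huC]; simp
  -- the splitting coming from freeness of the abelianization of G
  obtain ⟨ι, ⟨e⟩⟩ := hab
  set qA : Additive (Abelianization (FreeGroup G)) →+ Additive (Abelianization G) :=
    MonoidHom.toAdditive q with hqAdef
  have hqAsurj : Function.Surjective qA := by
    intro y
    obtain ⟨w, hw⟩ : ∃ w, q w = Additive.toMul y := by
      obtain ⟨g, hg⟩ : ∃ g, Abelianization.of g = Additive.toMul y :=
        Quotient.exists_rep _
      obtain ⟨v, hv⟩ := hπsurj g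
      exact ⟨ab v, by rw [hq_ab, hv, hg]⟩
    exact ⟨Additive.ofMul w, by simp [hqAdef, hw]⟩
  have hpre : ∀ i : ι, ∃ x, qA x = e.symm (FreeAbelianGroup.of i) := fun i => hqAsurj _
  set pre : ι → Additive (Abelianization (FreeGroup G)) := fun i => (hpre i).choose with hpredef
  have hpre_spec : ∀ i, qA (pre i) = e.symm (FreeAbelianGroup.of i) := fun i => (hpre i).choose_spec
  set s0 : FreeAbelianGroup ι →+ Additive (Abelianization (FreeGroup G)) :=
    FreeAbelianGroup.lift pre with hs0def
  have hs0 : ∀ t, qA (s0 t) = e.symm t := by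
    intro t
    refine FreeAbelianGroup.induction_on t ?_ ?_ ?_ ?_
    · simp
    · intro i
      rw [hs0def]
      rw [show s0 (FreeAbelianGroup.of i) = pre i from FreeAbelianGroup.lift_apply_of (f := _) (x := _)]
      rw [hpre_spec]
    · intro i h
      rw [map_neg, map_neg, map_neg, h]
    · intro a b ha hb
      rw [map_add, map_add, map_add, ha, hb]
  set sfun : Abelianization G → Abelianization (FreeGroup G) :=
    fun a => Additive.toMul (s0 (e (Additive.ofMul a))) with hsfundef
  have hqs : ∀ a, q (sfun a) = a := by
    intro a
    have h1 := hs0 (e (Additive.ofMul a))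
    rw [AddEquiv.symm_apply_apply] at h1
    have : qA (s0 (e (Additive.ofMul a))) = Additive.ofMul a := h1
    simpa [hqAdef, hsfundef] using congrArg Additive.toMul this
  have hsmul : ∀ a b, sfun (a * b) = sfun a * sfun b := by
    intro a b
    rw [hsfundef]
    simp only [ofMul_mul, map_add, toMul_add]
  have hs1 : sfun 1 = 1 := by
    rw [hsfundef]
    simp only [ofMul_one, map_zero, toMul_zero]
  -- the normalization map and the extension Φ of ψ to all of F
  set Nf : Abelianization (FreeGroup G) → Abelianization (FreeGroup G) :=
    fun x => x * (sfun (q x))⁻¹ with hNfdef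
  have hN1 : ∀ x, q (Nf x) = 1 := by
    intro x
    rw [hNfdef]
    simp only [map_mul, map_inv, hqs, mul_inv_cancel]
  have hNmul : ∀ x y, Nf (x * y) = Nf x * Nf y := by
    intro x y
    show (x * y) * (sfun (q (x * y)))⁻¹ = (x * (sfun (q x))⁻¹) * (y * (sfun (q y))⁻¹)
    rw [map_mul, hsmul, mul_inv, mul_mul_mul_comm]
  set Φ : FreeGroup G → ℤ := fun w => ψ (hrep (Nf (ab w)) (hN1 _)).choose with hΦdef
  have hΦspec : ∀ w, π ((hrep (Nf (ab w)) (hN1 _)).choose) = 1 ∧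
      ab ((hrep (Nf (ab w)) (hN1 _)).choose) = Nf (ab w) := fun w =>
    (hrep (Nf (ab w)) (hN1 _)).choose_spec
  have hΦadd : ∀ w w', Φ (w * w') = Φ w + Φ w' := by
    intro w w'
    obtain ⟨hr1, he1⟩ := hΦspec w
    obtain ⟨hr2, he2⟩ := hΦspec w'
    obtain ⟨hr3, he3⟩ := hΦspec (w * w')
    set r1 := (hrep (Nf (ab w)) (hN1 _)).choose
    set r2 := (hrep (Nf (ab w')) (hN1 _)).choose
    set r3 := (hrep (Nf (ab (w * w'))) (hN1 _)).choose
    have hab3 : ab r3 = ab (r1 * r2) := by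
      rw [map_mul, he1, he2, he3, map_mul, hNmul]
    have hπ12 : π (r1 * r2) = 1 := by rw [map_mul, hr1, hr2, mul_one]
    have := hψcongr r3 (r1 * r2) hr3 hπ12 hab3
    rw [hψmul r1 r2 hr1 hr2] at this
    exact this
  have hΦR : ∀ w, π w = 1 → Φ w = ψ w := by
    intro w hw
    obtain ⟨hr1, he1⟩ := hΦspec w
    have hqab : q (ab w) = 1 := by rw [hq_ab, hw]; exact map_one _
    have hNw : Nf (ab w) = ab w := by rw [hNfdef]; simp only [hqab, hs1, inv_one, mul_one]
    exact hψcongr _ w hr1 hw (he1.trans hNw)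
  -- the key multiplication rule
  have hsec : ∀ g h : G, Φ (FreeGroup.of g) + Φ (FreeGroup.of h)
      = co.f g h + Φ (FreeGroup.of (g * h)) := by
    intro g h
    set r : FreeGroup G := FreeGroup.of g * FreeGroup.of h * (FreeGroup.of (g * h))⁻¹ with hrdef
    have hπr : π r = 1 := by
      rw [hrdef, map_mul, map_mul, map_inv, hπof, hπof, hπof, mul_inv_cancel]
    have hψr : ψ r = co.f g h := by
      show (σ r).m = _
      rw [hrdef, map_mul, map_mul, map_inv, hσof, hσof, hσof]
      rw [EE.mul_m, EE.mul_m, EE.inv_m, EE.mul_g, EE.inv_g]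
      show (0:ℤ) + 0 + co.f g h + (-0 - co.f (g*h) (g*h)⁻¹) + co.f (g * h) (g * h)⁻¹ = co.f g h
      ring
    have h1 : Φ (FreeGroup.of g * FreeGroup.of h) = Φ (FreeGroup.of g) + Φ (FreeGroup.of h) :=
      hΦadd _ _
    have h2 : FreeGroup.of g * FreeGroup.of h = r * FreeGroup.of (g * h) := by
      rw [hrdef, inv_mul_cancel_right]
    rw [h2, hΦadd, hΦR r hπr, hψr] at h1
    linarith
  -- the left order on G
  refine ⟨fun a b => Φ (FreeGroup.of b) < Φ (FreeGroup.of a) ∨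
    (Φ (FreeGroup.of a) = Φ (FreeGroup.of b) ∧ co.lt1 a b), ?_, ?_⟩
  · refine { trichotomous := ?_, irrefl := ?_, trans := ?_ }
    · -- trichotomous
      intro a b hn1 hn2
      rcases lt_trichotomy (Φ (FreeGroup.of a)) (Φ (FreeGroup.of b)) with h|h|h
      · exact absurd (Or.inl h) hn2
      · by_cases hab' : a = b
        · exact hab'
        · rcases co.lt1_total a b hab' with h'|h'
          · exact absurd (Or.inr ⟨h, h'⟩) hn1
          · exact absurd (Or.inr ⟨h.symm, h'⟩) hn2
      · exact absurd (Or.inl h) hn1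
    · -- irrefl
      intro a h
      rcases h with h|⟨_, h⟩
      · exact lt_irrefl _ h
      · exact co.lt1_irrefl a h
    · -- trans
      intro a b c hab' hbc
      rcases hab' with h1|⟨h1, h1'⟩ <;> rcases hbc with h2|⟨h2, h2'⟩
      · left; omega
      · left; omega
      · left; omega
      · right; exact ⟨by omega, co.lt1_trans a b c h1' h2'⟩
  · -- left invariance
    intro u a b hr
    have key := co.ltlex_inv u a b (-Φ (FreeGroup.of a)) (-Φ (FreeGroup.of b))
      (by rcases hr with h|⟨h1, h2⟩
          · left; omega
          · right; exact ⟨by omega, h2⟩)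
    have ea := hsec u a
    have eb := hsec u b
    rcases key with h|⟨h1, h2⟩
    · left; omega
    · right
      refine ⟨by omega, h2⟩


/-- If `H₂(G)` is finite and the abelianization of `G` is free abelian,
then `G` is circularly orderable if and only if it is left-orderable. -/
theorem circularlyOrderable_iff_leftOrderable_of_finite_H2
    (G : Type u) [Group G] (hH2 : Finite (H2 G))
    (hab : ∃ ι : Type u, Nonempty (Additive (Abelianization G) ≃+ FreeAbelianGroup ι)) :
    IsCircularlyOrderable G ↔ IsLeftOrderable G := by
  constructor
  · rintro ⟨c, hval, hzero, hco, hinv⟩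
    exact co_to_lo hH2 hab ⟨c, hval, hzero, hco, hinv⟩
  · exact lo_to_co

end
end
end

section
/- Let 1 → A → G̃ → G → 1 and 1 → B → Ĝ → G → 1 be short exact sequences of groups, and let p : G̃ → Ĝ be a group homomorphism with p(A) ⊆ B which induces the identity map on the common quotient G. If A is left-orderable and Ĝ is circularly orderable, then G̃ is circularly orderable. -/
universe u v w x y

section CircAux

variable {T : Type*} {S : Type*}

open Classical in
noncomputable def fsgn (lt : T → T → Prop) (a b : T) : ℤ :=
  if a = b then 0 else if lt a b then 1 else -1

open Classical in
noncomputable def lexc (f : T → S) (d : S → S → S → ℤ) (lt : T → T → Prop)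
    (g₁ g₂ g₃ : T) : ℤ :=
  if f g₁ = f g₂ then
    if f g₁ = f g₃ then fsgn lt g₂ g₃ - fsgn lt g₁ g₃ + fsgn lt g₁ g₂
    else fsgn lt g₁ g₂
  else if f g₂ = f g₃ then fsgn lt g₂ g₃
  else if f g₁ = f g₃ then fsgn lt g₃ g₁
  else d (f g₁) (f g₂) (f g₃)

variable {lt : T → T → Prop} {f : T → S} {d : S → S → S → ℤ}

lemma fsgn_self (a : T) : fsgn lt a a = 0 := by simp [fsgn]

lemma fsgn_of_lt (hirr : ∀ x, ¬ lt x x) {a b : T} (h : lt a b) : fsgn lt a b = 1 := by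
  have hne : a ≠ b := by rintro rfl; exact hirr a h
  simp [fsgn, hne, h]

lemma fsgn_of_gt (hirr : ∀ x, ¬ lt x x) (hasym : ∀ x y, lt x y → ¬ lt y x)
    {a b : T} (h : lt b a) : fsgn lt a b = -1 := by
  have hne : a ≠ b := by rintro rfl; exact hirr a h
  have h2 : ¬ lt a b := hasym b a h
  simp [fsgn, hne, h2]

lemma fsgn_zero_iff (a b : T) : fsgn lt a b = 0 ↔ a = b := by
  unfold fsgn; split_ifs <;> simp_all

lemma fsgn_mem (a b : T) : fsgn lt a b = -1 ∨ fsgn lt a b = 0 ∨ fsgn lt a b = 1 := by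
  unfold fsgn; split_ifs <;> simp

lemma fsgn_antisym (hirr : ∀ x, ¬ lt x x) (hasym : ∀ x y, lt x y → ¬ lt y x)
    {a b : T} (h : a = b ∨ lt a b ∨ lt b a) : fsgn lt b a = - fsgn lt a b := by
  rcases h with rfl | h | h
  · simp [fsgn_self]
  · rw [fsgn_of_lt hirr h, fsgn_of_gt hirr hasym h]
  · rw [fsgn_of_gt hirr hasym h, fsgn_of_lt hirr h]; norm_num

lemma lexc_tt {a b c : T} (h1 : f a = f b) (h2 : f a = f c) :
    lexc f d lt a b c = fsgn lt b c - fsgn lt a c + fsgn lt a b := by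
  simp only [lexc]; rw [if_pos h1, if_pos h2]

lemma lexc_tf {a b c : T} (h1 : f a = f b) (h2 : ¬ f a = f c) :
    lexc f d lt a b c = fsgn lt a b := by
  simp only [lexc]; rw [if_pos h1, if_neg h2]

lemma lexc_ft {a b c : T} (h1 : ¬ f a = f b) (h2 : f b = f c) :
    lexc f d lt a b c = fsgn lt b c := by
  simp only [lexc]; rw [if_neg h1, if_pos h2]

lemma lexc_fft {a b c : T} (h1 : ¬ f a = f b) (h2 : ¬ f b = f c) (h3 : f a = f c) :
    lexc f d lt a b c = fsgn lt c a := by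
  simp only [lexc]; rw [if_neg h1, if_neg h2, if_pos h3]

lemma lexc_fff {a b c : T} (h1 : ¬ f a = f b) (h2 : ¬ f b = f c) (h3 : ¬ f a = f c) :
    lexc f d lt a b c = d (f a) (f b) (f c) := by
  simp only [lexc]; rw [if_neg h1, if_neg h2, if_neg h3]

lemma fiber_triple (hirr : ∀ x, ¬ lt x x) (hasym : ∀ x y, lt x y → ¬ lt y x)
    (htrans : ∀ x y z, lt x y → lt y z → lt x z) {a b c : T}
    (cab : a = b ∨ lt a b ∨ lt b a) (cac : a = c ∨ lt a c ∨ lt c a)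
    (cbc : b = c ∨ lt b c ∨ lt c b) :
    (fsgn lt b c - fsgn lt a c + fsgn lt a b = -1 ∨
     fsgn lt b c - fsgn lt a c + fsgn lt a b = 0 ∨
     fsgn lt b c - fsgn lt a c + fsgn lt a b = 1) ∧
    (fsgn lt b c - fsgn lt a c + fsgn lt a b = 0 ↔ a = b ∨ a = c ∨ b = c) := by
  have ne_lt : ∀ x y : T, lt x y → x ≠ y := by
    intro x y hxy e; subst e; exact hirr _ hxy
  rcases cab with rfl | h1 | h1
  · rw [fsgn_self]
    refine ⟨Or.inr (Or.inl (by omega)), ?_⟩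
    simp
  · rcases cac with rfl | h2 | h2
    · rw [fsgn_self, fsgn_antisym hirr hasym (Or.inr (Or.inl h1))]
      refine ⟨Or.inr (Or.inl (by omega)), ?_⟩
      simp
    · rcases cbc with rfl | h3 | h3
      · rw [fsgn_self]
        refine ⟨Or.inr (Or.inl (by omega)), ?_⟩
        simp
      · rw [fsgn_of_lt hirr h1, fsgn_of_lt hirr h2, fsgn_of_lt hirr h3]
        refine ⟨Or.inr (Or.inr (by norm_num)), ?_⟩
        norm_num [ne_lt _ _ h1, ne_lt _ _ h2, ne_lt _ _ h3]
      · rw [fsgn_of_lt hirr h1, fsgn_of_lt hirr h2, fsgn_of_gt hirr hasym h3]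
        refine ⟨Or.inl (by norm_num), ?_⟩
        norm_num [ne_lt _ _ h1, ne_lt _ _ h2, (ne_lt _ _ h3).symm]
    · rcases cbc with rfl | h3 | h3
      · exact absurd h1 (hasym _ _ h2)
      · exact absurd h1 (hasym _ _ (htrans _ _ _ h3 h2))
      · rw [fsgn_of_gt hirr hasym h3, fsgn_of_gt hirr hasym h2, fsgn_of_lt hirr h1]
        refine ⟨Or.inr (Or.inr (by norm_num)), ?_⟩
        norm_num [ne_lt _ _ h1, (ne_lt _ _ h2).symm, (ne_lt _ _ h3).symm]
  · rcases cac with rfl | h2 | h2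
    · rw [fsgn_self, fsgn_antisym hirr hasym (Or.inr (Or.inr h1))]
      refine ⟨Or.inr (Or.inl (by omega)), ?_⟩
      simp
    · rcases cbc with rfl | h3 | h3
      · exact absurd h2 (hasym _ _ h1)
      · rw [fsgn_of_lt hirr h3, fsgn_of_lt hirr h2, fsgn_of_gt hirr hasym h1]
        refine ⟨Or.inl (by norm_num), ?_⟩
        norm_num [(ne_lt _ _ h1).symm, ne_lt _ _ h2, ne_lt _ _ h3]
      · exact absurd h1 (hasym _ _ (htrans _ _ _ h2 h3))
    · rcases cbc with rfl | h3 | h3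
      · rw [fsgn_self]
        refine ⟨Or.inr (Or.inl (by omega)), ?_⟩
        simp
      · rw [fsgn_of_lt hirr h3, fsgn_of_gt hirr hasym h2, fsgn_of_gt hirr hasym h1]
        refine ⟨Or.inr (Or.inr (by norm_num)), ?_⟩
        norm_num [(ne_lt _ _ h1).symm, (ne_lt _ _ h2).symm, ne_lt _ _ h3]
      · rw [fsgn_of_gt hirr hasym h3, fsgn_of_gt hirr hasym h2,
          fsgn_of_gt hirr hasym h1]
        refine ⟨Or.inl (by norm_num), ?_⟩
        norm_num [(ne_lt _ _ h1).symm, (ne_lt _ _ h2).symm, (ne_lt _ _ h3).symm]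

lemma lexc_mem_zero (hd1 : ∀ x y z : S, d x y z = -1 ∨ d x y z = 0 ∨ d x y z = 1)
    (hd0 : ∀ x y z : S, d x y z = 0 ↔ x = y ∨ x = z ∨ y = z)
    (hirr : ∀ x, ¬ lt x x) (hasym : ∀ x y, lt x y → ¬ lt y x)
    (htrans : ∀ x y z, lt x y → lt y z → lt x z)
    (tot : ∀ x y : T, f x = f y → x = y ∨ lt x y ∨ lt y x)
    (g₁ g₂ g₃ : T) :
    (lexc f d lt g₁ g₂ g₃ = -1 ∨ lexc f d lt g₁ g₂ g₃ = 0 ∨ lexc f d lt g₁ g₂ g₃ = 1) ∧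
    (lexc f d lt g₁ g₂ g₃ = 0 ↔ g₁ = g₂ ∨ g₁ = g₃ ∨ g₂ = g₃) := by
  by_cases h1 : f g₁ = f g₂
  · by_cases h2 : f g₁ = f g₃
    · rw [lexc_tt h1 h2]
      exact fiber_triple hirr hasym htrans (tot _ _ h1) (tot _ _ h2)
        (tot _ _ (h1.symm.trans h2))
    · rw [lexc_tf h1 h2]
      refine ⟨fsgn_mem _ _, ?_⟩
      rw [fsgn_zero_iff]
      constructor
      · exact fun h => Or.inl h
      · rintro (h | h | h)
        · exact h
        · exact absurd (congrArg f h) h2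
        · exact absurd (h1.trans (congrArg f h)) h2
  · by_cases h3 : f g₂ = f g₃
    · rw [lexc_ft h1 h3]
      refine ⟨fsgn_mem _ _, ?_⟩
      rw [fsgn_zero_iff]
      constructor
      · exact fun h => Or.inr (Or.inr h)
      · rintro (h | h | h)
        · exact absurd (congrArg f h) h1
        · exact absurd ((congrArg f h).trans h3.symm) h1
        · exact h
    · by_cases h4 : f g₁ = f g₃
      · rw [lexc_fft h1 h3 h4]
        refine ⟨fsgn_mem _ _, ?_⟩
        rw [fsgn_zero_iff]
        constructor
        · exact fun h => Or.inr (Or.inl h.symm)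
        · rintro (h | h | h)
          · exact absurd (congrArg f h) h1
          · exact h.symm
          · exact absurd (congrArg f h) h3
      · rw [lexc_fff h1 h3 h4]
        refine ⟨hd1 _ _ _, ?_⟩
        rw [hd0]
        constructor
        · rintro (h | h | h)
          · exact absurd h h1
          · exact absurd h h4
          · exact absurd h h3
        · rintro (h | h | h)
          · exact absurd (congrArg f h) h1
          · exact absurd (congrArg f h) h4
          · exact absurd (congrArg f h) h3

lemma lexc_cocycle (hd0 : ∀ x y z : S, d x y z = 0 ↔ x = y ∨ x = z ∨ y = z)
    (hd3 : ∀ x y z w : S, d y z w - d x z w + d x y w - d x y z = 0)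
    (hirr : ∀ x, ¬ lt x x) (hasym : ∀ x y, lt x y → ¬ lt y x)
    (tot : ∀ x y : T, f x = f y → x = y ∨ lt x y ∨ lt y x)
    (g₁ g₂ g₃ g₄ : T) :
    lexc f d lt g₂ g₃ g₄ - lexc f d lt g₁ g₃ g₄ + lexc f d lt g₁ g₂ g₄
      - lexc f d lt g₁ g₂ g₃ = 0 := by
  have dcyc : ∀ x y z : S, d y z x = d x y z := by
    intro x y z
    have h := hd3 x y z x
    have h1 : d x z x = 0 := (hd0 x z x).2 (Or.inr (Or.inl rfl))
    have h2 : d x y x = 0 := (hd0 x y x).2 (Or.inr (Or.inl rfl))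
    omega
  have dswap12 : ∀ x y z : S, d y x z = - d x y z := by
    intro x y z
    have h := hd3 x y x z
    have h1 : d x x z = 0 := (hd0 x x z).2 (Or.inl rfl)
    have h2 : d x y x = 0 := (hd0 x y x).2 (Or.inr (Or.inl rfl))
    omega
  have dswap23 : ∀ x y z : S, d x z y = - d x y z := by
    intro x y z
    rw [dcyc y x z, dswap12 x y z]
  by_cases h12 : f g₁ = f g₂ <;> by_cases h13 : f g₁ = f g₃ <;>
    by_cases h14 : f g₁ = f g₄ <;> by_cases h23 : f g₂ = f g₃ <;>
    by_cases h24 : f g₂ = f g₄ <;> by_cases h34 : f g₃ = f g₄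
  all_goals try
    exact absurd (h12.symm.trans h13) h23
  all_goals try
    exact absurd (h12.trans h23) h13
  all_goals try
    exact absurd (h13.trans h23.symm) h12
  all_goals try
    exact absurd (h12.symm.trans h14) h24
  all_goals try
    exact absurd (h12.trans h24) h14
  all_goals try
    exact absurd (h14.trans h24.symm) h12
  all_goals try
    exact absurd (h13.symm.trans h14) h34
  all_goals try
    exact absurd (h13.trans h34) h14
  all_goals try
    exact absurd (h14.trans h34.symm) h13
  all_goals try
    exact absurd (h23.symm.trans h24) h34
  all_goals try
    exact absurd (h23.trans h34) h24
  all_goals try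
    exact absurd (h24.trans h34.symm) h23
  -- case 15: all in one fiber
  · rw [lexc_tt h23 h24, lexc_tt h13 h14, lexc_tt h12 h14, lexc_tt h12 h13]
    omega
  -- case 11: f1 = f2 = f3 ≠ f4
  · rw [lexc_tf h23 h24, lexc_tf h13 h14, lexc_tf h12 h14, lexc_tt h12 h13]
    omega
  -- case 12: f1 = f2 = f4 ≠ f3
  · rw [lexc_fft h23 h34 h24, lexc_fft h13 h34 h14, lexc_tt h12 h14, lexc_tf h12 h13]
    have A24 := fsgn_antisym hirr hasym (tot g₂ g₄ h24)
    have A14 := fsgn_antisym hirr hasym (tot g₁ g₄ h14)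
    omega
  -- case 8: f1 = f2, f3 = f4
  · rw [lexc_ft h23 h34, lexc_ft h13 h34, lexc_tf h12 h14, lexc_tf h12 h13]
    omega
  -- case 2: f1 = f2 only
  · rw [lexc_fff h23 h34 h24, lexc_fff h13 h34 h14, lexc_tf h12 h14, lexc_tf h12 h13]
    rw [h12]
    omega
  -- case 13: f1 = f3 = f4 ≠ f2
  · rw [lexc_ft h23 h34, lexc_tt h13 h14, lexc_fft h12 h24 h14, lexc_fft h12 h23 h13]
    have A14 := fsgn_antisym hirr hasym (tot g₁ g₄ h14)
    have A13 := fsgn_antisym hirr hasym (tot g₁ g₃ h13)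
    omega
  -- case 9: f1 = f3, f2 = f4
  · rw [lexc_fft h23 h34 h24, lexc_tf h13 h14, lexc_ft h12 h24, lexc_fft h12 h23 h13]
    have A24 := fsgn_antisym hirr hasym (tot g₂ g₄ h24)
    have A13 := fsgn_antisym hirr hasym (tot g₁ g₃ h13)
    omega
  -- case 3: f1 = f3 only
  · rw [lexc_fff h23 h34 h24, lexc_tf h13 h14, lexc_fff h12 h24 h14, lexc_fft h12 h23 h13]
    have A13 := fsgn_antisym hirr hasym (tot g₁ g₃ h13)
    rw [← h13]
    have S := dswap12 (f g₁) (f g₂) (f g₄)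
    omega
  -- case 10: f1 = f4, f2 = f3
  · rw [lexc_tf h23 h24, lexc_fft h13 h34 h14, lexc_fft h12 h24 h14, lexc_ft h12 h23]
    omega
  -- case 4: f1 = f4 only
  · rw [lexc_fff h23 h34 h24, lexc_fft h13 h34 h14, lexc_fft h12 h24 h14,
      lexc_fff h12 h23 h13]
    rw [← h14]
    have C := dcyc (f g₁) (f g₂) (f g₃)
    omega
  -- case 14: f2 = f3 = f4 ≠ f1
  · rw [lexc_tt h23 h24, lexc_ft h13 h34, lexc_ft h12 h24, lexc_ft h12 h23]
    omega
  -- case 5: f2 = f3 only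
  · rw [lexc_tf h23 h24, lexc_fff h13 h34 h14, lexc_fff h12 h24 h14, lexc_ft h12 h23]
    rw [h23]
    omega
  -- case 6: f2 = f4 only
  · rw [lexc_fft h23 h34 h24, lexc_fff h13 h34 h14, lexc_ft h12 h24,
      lexc_fff h12 h23 h13]
    have A24 := fsgn_antisym hirr hasym (tot g₂ g₄ h24)
    rw [← h24]
    have S := dswap23 (f g₁) (f g₂) (f g₃)
    omega
  -- case 7: f3 = f4 only
  · rw [lexc_ft h23 h34, lexc_ft h13 h34, lexc_fff h12 h24 h14, lexc_fff h12 h23 h13]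
    rw [← h34]
    omega
  -- case 1: all distinct
  · rw [lexc_fff h23 h34 h24, lexc_fff h13 h34 h14, lexc_fff h12 h24 h14,
      lexc_fff h12 h23 h13]
    have := hd3 (f g₁) (f g₂) (f g₃) (f g₄)
    omega

end CircAux


def ltOf {A Gt : Type*} [Group A] [Group Gt] (r : A → A → Prop) (i : A →* Gt)
    (a b : Gt) : Prop :=
  ∃ x : A, r 1 x ∧ i x = a⁻¹ * b

lemma ltOf_mul {A Gt : Type*} [Group A] [Group Gt] (r : A → A → Prop) (i : A →* Gt)
    (h a b : Gt) : ltOf r i (h * a) (h * b) ↔ ltOf r i a b := by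
  unfold ltOf
  have e : (h * a)⁻¹ * (h * b) = a⁻¹ * b := by group
  rw [e]


/-- Given short exact sequences `1 → A → G̃ → G → 1` and
`1 → B → Ĝ → G → 1` and a homomorphism `p : G̃ → Ĝ` with `p(A) ⊆ B` inducing the
identity on `G`, if `A` is left-orderable and `Ĝ` is circularly orderable,
then `G̃` is circularly orderable. -/
theorem circularlyOrderable_of_extension_morphism
    {A : Type u} {Gt : Type v} {B : Type w} {Gh : Type x} {G : Type y}
    [Group A] [Group Gt] [Group B] [Group Gh] [Group G]
    (i : A →* Gt) (q : Gt →* G) (j : B →* Gh) (q' : Gh →* G) (p : Gt →* Gh)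
    (hi : Function.Injective i) (hq : Function.Surjective q) (hiq : q.ker = i.range)
    (hj : Function.Injective j) (hq' : Function.Surjective q') (hjq : q'.ker = j.range)
    (hpA : ∀ a : A, p (i a) ∈ j.range)
    (hpG : ∀ x : Gt, q' (p x) = q x)
    (hA : IsLeftOrderable A) (hGh : IsCircularlyOrderable Gh) :
    IsCircularlyOrderable Gt := by
  classical
  obtain ⟨r, hSTO, hrinv⟩ := hA
  obtain ⟨d, hd1, hd0, hd3, hdinv⟩ := hGh
  have hirrA : ∀ x : A, ¬ r x x := fun x => hSTO.toIsStrictOrder.toIrrefl.irrefl x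
  have htransA : ∀ x y z : A, r x y → r y z → r x z := fun x y z =>
    hSTO.toIsStrictOrder.toIsTrans.trans x y z
  have htriA : ∀ x y : A, r x y ∨ x = y ∨ r y x := @trichotomous_of A r hSTO.toTrichotomous
  have hirr : ∀ u : Gt, ¬ ltOf r i u u := by
    rintro u ⟨a, hra, hia⟩
    have h1 : i a = 1 := by simpa using hia
    have h2 : a = 1 := hi (by simpa using h1)
    exact hirrA 1 (h2 ▸ hra)
  have hasym : ∀ u v : Gt, ltOf r i u v → ¬ ltOf r i v u := by
    rintro u v ⟨a, hra, hia⟩ ⟨b, hrb, hib⟩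
    have hab : i (a * b) = 1 := by rw [map_mul, hia, hib]; group
    have hab1 : a * b = 1 := hi (by simpa using hab)
    have hb : b = a⁻¹ := eq_inv_of_mul_eq_one_right hab1
    subst hb
    have h2 : r a⁻¹ 1 := by
      have := hrinv a⁻¹ 1 a hra
      simpa using this
    exact hirrA 1 (htransA 1 a⁻¹ 1 hrb h2)
  have htrans : ∀ u v w : Gt, ltOf r i u v → ltOf r i v w → ltOf r i u w := by
    rintro u v w ⟨a, hra, hia⟩ ⟨b, hrb, hib⟩
    refine ⟨a * b, ?_, ?_⟩
    · have h1 : r a (a * b) := by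
        have := hrinv a 1 b hrb
        simpa using this
      exact htransA _ _ _ hra h1
    · rw [map_mul, hia, hib]; group
  have tot : ∀ u v : Gt, p u = p v → u = v ∨ ltOf r i u v ∨ ltOf r i v u := by
    intro u v hpv
    have hqe : q u = q v := by rw [← hpG u, ← hpG v, hpv]
    have hq1 : q (u⁻¹ * v) = 1 := by rw [map_mul, map_inv, hqe]; group
    have hker : u⁻¹ * v ∈ q.ker := MonoidHom.mem_ker.mpr hq1
    rw [hiq] at hker
    obtain ⟨x, hx⟩ := hker
    rcases htriA 1 x with h | h | h
    · exact Or.inr (Or.inl ⟨x, h, hx⟩)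
    · left
      have h1 : u⁻¹ * v = 1 := by rw [← hx, ← h, map_one]
      exact (inv_mul_eq_one.mp h1)
    · refine Or.inr (Or.inr ⟨x⁻¹, ?_, ?_⟩)
      · have := hrinv x⁻¹ x 1 h
        simpa using this
      · rw [map_inv, hx, mul_inv_rev, inv_inv]
  refine ⟨lexc (⇑p) d (ltOf r i), ?_, ?_, ?_, ?_⟩
  · exact fun g₁ g₂ g₃ =>
      (lexc_mem_zero hd1 hd0 hirr hasym htrans tot g₁ g₂ g₃).1
  · exact fun g₁ g₂ g₃ =>
      (lexc_mem_zero hd1 hd0 hirr hasym htrans tot g₁ g₂ g₃).2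
  · exact fun g₁ g₂ g₃ g₄ => lexc_cocycle hd0 hd3 hirr hasym tot g₁ g₂ g₃ g₄
  · intro h g₁ g₂ g₃
    have e1 : ∀ u v : Gt, (h * u = h * v) ↔ u = v := fun u v => mul_right_inj h
    have e2 : ∀ u v : Gt, (p (h * u) = p (h * v)) ↔ (p u = p v) := fun u v => by
      rw [map_mul, map_mul, mul_right_inj]
    have e3 : ∀ u v : Gt, ltOf r i (h * u) (h * v) ↔ ltOf r i u v := fun u v =>
      ltOf_mul r i h u v
    have e4 : d (p (h * g₁)) (p (h * g₂)) (p (h * g₃)) = d (p g₁) (p g₂) (p g₃) := by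
      rw [map_mul, map_mul, map_mul]
      exact (hdinv (p h) _ _ _).symm
    simp only [lexc, fsgn, e1, e2, e3, e4]
end

section
/- Let G be a circularly orderable group such that H₁(G) is free abelian and H₂(G) is torsion-free. Let 1 → A → G_u →^π G → 1 be a central extension with A ≅ H₂(G) which is universal in the sense that for every central extension 1 → B → E →^p G → 1 there exists a group homomorphism f : G_u → E with p ∘ f = π. Then G_u is left-orderable. -/
universe u
/-- helper: build a strict total order -/
theorem isSTO_of {α : Type u} {r : α → α → Prop}
    (irr : ∀ a, ¬ r a a) (tr : ∀ a b c, r a b → r b c → r a c)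
    (tot : ∀ a b, a ≠ b → r a b ∨ r b a) : IsStrictTotalOrder α r := by
  refine { trichotomous := ?_, irrefl := irr, trans := tr }
  intro a b
  by_cases h : a = b
  · exact fun _ _ => h
  · rcases tot a b h with h' | h'
    · exact fun hn _ => absurd h' hn
    · exact fun _ hn => absurd h' hn

structure CircCocycle (G : Type u) [Group G] where
  c : G → G → G → ℤ
  vals : ∀ g₁ g₂ g₃, c g₁ g₂ g₃ = -1 ∨ c g₁ g₂ g₃ = 0 ∨ c g₁ g₂ g₃ = 1
  zero : ∀ g₁ g₂ g₃, c g₁ g₂ g₃ = 0 ↔ g₁ = g₂ ∨ g₁ = g₃ ∨ g₂ = g₃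
  cocycle : ∀ g₁ g₂ g₃ g₄, c g₂ g₃ g₄ - c g₁ g₃ g₄ + c g₁ g₂ g₄ - c g₁ g₂ g₃ = 0
  linv : ∀ h g₁ g₂ g₃, c g₁ g₂ g₃ = c (h * g₁) (h * g₂) (h * g₃)

namespace CircCocycle

variable {G : Type u} [Group G] (co : CircCocycle G)

theorem c_self₁₂ (a b : G) : co.c a a b = 0 := (co.zero a a b).mpr (Or.inl rfl)
theorem c_self₁₃ (a b : G) : co.c a b a = 0 := (co.zero a b a).mpr (Or.inr (Or.inl rfl))
theorem c_self₂₃ (a b : G) : co.c a b b = 0 := (co.zero a b b).mpr (Or.inr (Or.inr rfl))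

theorem cyc (a b d : G) : co.c a b d = co.c b d a := by
  have h := co.cocycle a b d a
  rw [co.c_self₁₃ a d, co.c_self₁₃ a b] at h
  omega

theorem swap (a b d : G) : co.c a b d = - co.c a d b := by
  have h := co.cocycle a b d b
  rw [co.c_self₁₃ b d, co.c_self₂₃ a b] at h
  omega

theorem c_pm (a b d : G) (h1 : a ≠ b) (h2 : a ≠ d) (h3 : b ≠ d) :
    co.c a b d = 1 ∨ co.c a b d = -1 := by
  have hz : co.c a b d ≠ 0 := by
    rw [Ne, co.zero]; push_neg; exact ⟨h1, h2, h3⟩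
  rcases co.vals a b d with h | h | h <;> omega

/-- the cut order at the identity -/
def lt (x y : G) : Prop := (x = 1 ∧ y ≠ 1) ∨ co.c 1 x y = 1

theorem lt_ne {x y : G} (h : co.lt x y) : x ≠ y := by
  rcases h with ⟨h1, h2⟩ | h
  · rintro rfl; exact h2 h1
  · rintro rfl; rw [co.c_self₂₃] at h; omega

theorem not_lt_one (x : G) : ¬ co.lt x 1 := by
  rintro (⟨h1, h2⟩ | h)
  · exact h2 rfl
  · rw [co.c_self₁₃] at h; omega

theorem one_lt {x : G} (h : x ≠ 1) : co.lt 1 x := Or.inl ⟨rfl, h⟩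

theorem ne_one_of_lt {x y : G} (h : co.lt x y) : y ≠ 1 := by
  rintro rfl; exact co.not_lt_one x h

theorem lt_ne_one_left {x y : G} (h : co.lt x y) (hx : x ≠ 1) : co.c 1 x y = 1 := by
  rcases h with ⟨h1, _⟩ | h
  · exact absurd h1 hx
  · exact h

theorem lt_asymm {x y : G} (h : co.lt x y) : ¬ co.lt y x := by
  intro h'
  rcases h with ⟨h1, h2⟩ | h
  · rcases h' with ⟨h1', h2'⟩ | h'
    · exact h2 h1'
    · subst h1; rw [co.c_self₁₃] at h'; omega
  · rcases h' with ⟨h1', h2'⟩ | h'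
    · subst h1'; rw [co.c_self₁₃] at h; omega
    · have := co.swap 1 x y; omega

theorem lt_total {x y : G} (h : x ≠ y) : co.lt x y ∨ co.lt y x := by
  by_cases hx : x = 1
  · subst hx; exact Or.inl (co.one_lt (Ne.symm h))
  by_cases hy : y = 1
  · subst hy; exact Or.inr (co.one_lt hx)
  rcases co.c_pm 1 x y (Ne.symm hx) (Ne.symm hy) h with h' | h'
  · exact Or.inl (Or.inr h')
  · have := co.swap 1 x y
    exact Or.inr (Or.inr (by omega))

theorem lt_trans {x y z : G} (h1 : co.lt x y) (h2 : co.lt y z) : co.lt x z := by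
  by_cases hx : x = 1
  · exact Or.inl ⟨hx, co.ne_one_of_lt h2⟩
  have hy : y ≠ 1 := co.ne_one_of_lt h1
  have c1 : co.c 1 x y = 1 := co.lt_ne_one_left h1 hx
  have c2 : co.c 1 y z = 1 := co.lt_ne_one_left h2 hy
  have hc := co.cocycle 1 x y z
  have v1 := co.vals x y z
  have v2 := co.vals 1 x z
  refine Or.inr ?_
  omega

/-- increasing triples are positively oriented -/
theorem c_of_lt_lt {x y z : G} (h1 : co.lt x y) (h2 : co.lt y z) : co.c x y z = 1 := by
  by_cases hx : x = 1
  · subst hx; exact co.lt_ne_one_left h2 (co.ne_one_of_lt h1)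
  have c1 : co.c 1 x y = 1 := co.lt_ne_one_left h1 hx
  have c2 : co.c 1 y z = 1 := co.lt_ne_one_left h2 (co.ne_one_of_lt h1)
  have c3 : co.c 1 x z = 1 := co.lt_ne_one_left (co.lt_trans h1 h2) hx
  have hc := co.cocycle 1 x y z
  omega

end CircCocycle
namespace CircCocycle
variable {G : Type u} [Group G] (co : CircCocycle G)

open scoped Classical

/-- the Euler-type cocycle -/
noncomputable def tau (g h : G) : ℤ := if h ≠ 1 ∧ co.lt (g * h) g then 1 else 0

theorem tau_nonneg (g h : G) : 0 ≤ co.tau g h := by unfold tau; split <;> omega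
theorem tau_le_one (g h : G) : co.tau g h ≤ 1 := by unfold tau; split <;> omega

theorem tau_one_right (g : G) : co.tau g 1 = 0 := by
  unfold tau; rw [if_neg]; rintro ⟨h, _⟩; exact h rfl

theorem tau_one_left (h : G) : co.tau 1 h = 0 := by
  unfold tau; rw [if_neg]; rintro ⟨_, hlt⟩; rw [one_mul] at hlt; exact co.not_lt_one h hlt

theorem tau_eq_ite (g h : G) (hh : h ≠ 1) :
    co.tau g h = if co.lt (g * h) g then 1 else 0 := by
  unfold tau
  by_cases hl : co.lt (g * h) g
  · rw [if_pos ⟨hh, hl⟩, if_pos hl]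
  · rw [if_neg (by tauto), if_neg hl]

/-- counting lemma: orientation of a triple versus the cut order -/
theorem count_lemma (x y z : G) (hxy : x ≠ y) (hyz : y ≠ z) (hxz : x ≠ z) :
    ((if co.lt y x then (1:ℤ) else 0) + (if co.lt z y then 1 else 0)
      - (if co.lt z x then 1 else 0)) = if co.c x y z = -1 then 1 else 0 := by
  rcases co.lt_total hxy with h1 | h1
  · rcases co.lt_total hyz with h2 | h2
    · -- x < y < z
      have h3 : co.lt x z := co.lt_trans h1 h2
      have hc : co.c x y z = 1 := co.c_of_lt_lt h1 h2
      rw [if_neg (co.lt_asymm h1), if_neg (co.lt_asymm h2), if_neg (co.lt_asymm h3),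
        if_neg (by omega)]
      ring
    · rcases co.lt_total hxz with h3 | h3
      · -- x < z < y
        have hc : co.c x z y = 1 := co.c_of_lt_lt h3 h2
        have hs := co.swap x y z
        rw [if_neg (co.lt_asymm h1), if_pos h2, if_neg (co.lt_asymm h3), if_pos (by omega)]
        norm_num
      · -- z < x < y
        have hc : co.c z x y = 1 := co.c_of_lt_lt h3 h1
        have hcyc : co.c z x y = co.c x y z := co.cyc z x y
        rw [if_neg (co.lt_asymm h1), if_pos h2, if_pos h3, if_neg (by omega)]
        ring
  · rcases co.lt_total hyz with h2 | h2
    · rcases co.lt_total hxz with h3 | h3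
      · -- y < x < z  (have y<x, y<z, x<z)
        have hc : co.c y x z = 1 := co.c_of_lt_lt h1 h3
        have e1 : co.c y x z = co.c x z y := co.cyc y x z
        have e2 : co.c x y z = - co.c x z y := co.swap x y z
        rw [if_pos h1, if_neg (co.lt_asymm h2), if_neg (co.lt_asymm h3), if_pos (by omega)]
        norm_num
      · -- y < z < x
        have hc : co.c y z x = 1 := co.c_of_lt_lt h2 h3
        have e1 : co.c y z x = co.c z x y := co.cyc y z x
        have e2 : co.c z x y = co.c x y z := co.cyc z x y
        rw [if_pos h1, if_neg (co.lt_asymm h2), if_pos h3, if_neg (by omega)]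
        ring
    · -- z < y < x
      have h3 : co.lt z x := co.lt_trans h2 h1
      have hc : co.c z y x = 1 := co.c_of_lt_lt h2 h1
      have e1 : co.c z y x = co.c y x z := co.cyc z y x
      have e2 : co.c y x z = co.c x z y := co.cyc y x z
      have e3 : co.c x y z = - co.c x z y := co.swap x y z
      rw [if_pos h1, if_pos h2, if_pos h3, if_pos (by omega)]
      ring

theorem tau_cocycle (g h k : G) :
    co.tau g h + co.tau (g * h) k = co.tau h k + co.tau g (h * k) := by
  by_cases hk : k = 1
  · subst hk; rw [co.tau_one_right, co.tau_one_right, mul_one]; ring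
  by_cases hh : h = 1
  · subst hh; rw [co.tau_one_left, co.tau_one_right, mul_one, one_mul]
  by_cases hhk : h * k = 1
  · -- k = h⁻¹
    have e1 : g * h * k = g := by rw [mul_assoc, hhk, mul_one]
    rw [co.tau_eq_ite g h hh, co.tau_eq_ite (g*h) k hk, co.tau_eq_ite h k hk, hhk,
      co.tau_one_right, e1, if_pos (co.one_lt hh)]
    have hne : g * h ≠ g := fun e => hh (mul_left_cancel (e.trans (mul_one g).symm))
    rcases co.lt_total hne with hl | hl
    · rw [if_pos hl, if_neg (co.lt_asymm hl)]
    · rw [if_neg (co.lt_asymm hl), if_pos hl]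
      ring
  · rw [co.tau_eq_ite g h hh, co.tau_eq_ite (g*h) k hk, co.tau_eq_ite h k hk,
      co.tau_eq_ite g (h*k) hhk]
    have hxy : g ≠ g * h := fun e => hh (mul_left_cancel ((mul_one g).trans e)).symm
    have hyz : g * h ≠ g * h * k :=
      fun e => hk (mul_left_cancel ((mul_one (g*h)).trans e)).symm
    have hxz : g ≠ g * h * k := by
      rw [mul_assoc]
      exact fun e => hhk (mul_left_cancel ((mul_one g).trans e)).symm
    have hM := co.count_lemma g (g * h) (g * h * k) hxy hyz hxz
    have hinv : co.c 1 h (h * k) = co.c g (g * h) (g * (h * k)) := by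
      have := co.linv g 1 h (h * k); rwa [mul_one] at this
    -- relate [h*k < h] to c g (g*h) (g*h*k) = -1
    have hcut : co.lt (h * k) h ↔ co.c 1 h (h * k) = -1 := by
      constructor
      · intro hl
        have : co.c 1 (h*k) h = 1 := co.lt_ne_one_left hl hhk
        have hs := co.swap 1 h (h*k); omega
      · intro hc
        have hs := co.swap 1 h (h*k)
        have : co.c 1 (h*k) h = 1 := by omega
        exact Or.inr this
    have e : co.lt (h*k) h ↔ co.c g (g*h) (g*h*k) = -1 := by
      rw [hcut, hinv, mul_assoc]
    by_cases hl : co.lt (h*k) h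
    · rw [if_pos hl]
      rw [if_pos (e.mp hl)] at hM
      rw [mul_assoc] at hM ⊢
      omega
    · rw [if_neg hl]
      rw [if_neg (fun hc => hl (e.mpr hc))] at hM
      rw [mul_assoc] at hM ⊢
      omega

end CircCocycle
namespace CircCocycle
variable {G : Type u} [Group G] (co : CircCocycle G)

open scoped Classical

theorem tau_cond {g h : G} (h1 : co.tau g h = 1) : h ≠ 1 ∧ co.lt (g * h) g := by
  by_contra hc
  rw [tau, if_neg hc] at h1
  omega

theorem tau_not_cond {g h : G} (h0 : co.tau g h = 0) : h = 1 ∨ ¬ co.lt (g * h) g := by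
  by_contra hc
  push_neg at hc
  rw [tau, if_pos ⟨hc.1, hc.2⟩] at h0
  omega

theorem tau_zero_or_one (g h : G) : co.tau g h = 0 ∨ co.tau g h = 1 := by
  have := co.tau_nonneg g h; have := co.tau_le_one g h; omega

/-- if `a` is in the wrapped part and `b` is not, then `f*a < f*b` -/
theorem lt_of_tau_one_zero {f a b : G} (h1 : co.tau f a = 1) (h0 : co.tau f b = 0) :
    co.lt (f * a) (f * b) := by
  obtain ⟨_, hfa⟩ := co.tau_cond h1
  rcases co.tau_not_cond h0 with hb | hfb
  · subst hb; rwa [mul_one]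
  · by_cases hb : b = 1
    · subst hb; rwa [mul_one]
    · have hne : f * b ≠ f := fun e => hb (mul_left_cancel (e.trans (mul_one f).symm))
      rcases co.lt_total hne with hl | hl
      · exact absurd hl hfb
      · exact co.lt_trans hfa hl

/-- monotonicity of the lift -/
theorem tau_mono {f a b : G} (hab : co.lt a b) :
    co.tau f a < co.tau f b ∨ (co.tau f a = co.tau f b ∧ co.lt (f * a) (f * b)) := by
  have hb1 : b ≠ 1 := co.ne_one_of_lt hab
  have hfne : f * a ≠ f * b := fun e => co.lt_ne hab (mul_left_cancel e)
  have hfbne : f * b ≠ f := fun e => hb1 (mul_left_cancel (e.trans (mul_one f).symm))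
  by_cases ha1 : a = 1
  · subst ha1
    rcases co.tau_zero_or_one f b with e | e
    · right
      rw [co.tau_one_right, e]
      refine ⟨rfl, ?_⟩
      rw [mul_one]
      rcases co.tau_not_cond e with h | h
      · exact absurd h hb1
      · rcases co.lt_total hfbne with hl | hl
        · exact absurd hl h
        · exact hl
    · left; rw [co.tau_one_right, e]; omega
  -- now a ≠ 1
  have hfane : f * a ≠ f := fun e => ha1 (mul_left_cancel (e.trans (mul_one f).symm))
  have hcfab : co.c f (f * a) (f * b) = 1 := by
    have h1 : co.c 1 a b = 1 := co.lt_ne_one_left hab ha1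
    have hi := co.linv f 1 a b
    rw [mul_one] at hi
    omega
  have key : co.lt (f * a) (f * b) → True := fun _ => trivial
  rcases co.tau_zero_or_one f a with ea | ea <;> rcases co.tau_zero_or_one f b with eb | eb
  · -- (0,0): f < f*a and f < f*b
    right
    refine ⟨by omega, ?_⟩
    have hfa : co.lt f (f * a) := by
      rcases co.tau_not_cond ea with h | h
      · exact absurd h ha1
      · rcases co.lt_total hfane with hl | hl
        · exact absurd hl h
        · exact hl
    rcases co.lt_total hfne with hl | hl
    · exact hl
    · exfalso
      have hfb : co.lt f (f * b) := by
        rcases co.tau_not_cond eb with h | h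
        · exact absurd h hb1
        · rcases co.lt_total hfbne with hl' | hl'
          · exact absurd hl' h
          · exact hl'
      have h1 : co.c f (f * b) (f * a) = 1 := co.c_of_lt_lt hfb hl
      have hs := co.swap f (f * a) (f * b)
      omega
  · left; omega
  · -- (1,0): impossible
    exfalso
    obtain ⟨_, hfa⟩ := co.tau_cond ea
    have hfb : co.lt f (f * b) := by
      rcases co.tau_not_cond eb with h | h
      · exact absurd h hb1
      · rcases co.lt_total hfbne with hl' | hl'
        · exact absurd hl' h
        · exact hl'
    have h1 : co.c (f * a) f (f * b) = 1 := co.c_of_lt_lt hfa hfb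
    have hcyc : co.c (f * a) f (f * b) = co.c f (f * b) (f * a) := co.cyc _ _ _
    have hs := co.swap f (f * a) (f * b)
    omega
  · -- (1,1): both wrapped
    right
    refine ⟨by omega, ?_⟩
    obtain ⟨_, hfa⟩ := co.tau_cond ea
    obtain ⟨_, hfb⟩ := co.tau_cond eb
    rcases co.lt_total hfne with hl | hl
    · exact hl
    · exfalso
      have h1 : co.c (f * b) (f * a) f = 1 := co.c_of_lt_lt hl hfa
      have hcyc : co.c (f * b) (f * a) f = co.c f (f * b) (f * a) := by
        rw [co.cyc (f*b) (f*a) f, co.cyc (f*a) f (f*b)]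
      have hs := co.swap f (f * a) (f * b)
      omega

theorem tau_inv (g : G) : co.tau g g⁻¹ = co.tau g⁻¹ g := by
  have h := co.tau_cocycle g g⁻¹ g
  rw [mul_inv_cancel, inv_mul_cancel, co.tau_one_left, co.tau_one_right] at h
  omega

end CircCocycle

/-- The central extension of `G` by `ℤ` determined by a circular order cocycle. -/
structure CircExt {G : Type u} [Group G] (co : CircCocycle G) : Type u where
  n : ℤ
  g : G

namespace CircExt
variable {G : Type u} [Group G] {co : CircCocycle G}

noncomputable instance : Group (CircExt co) where
  mul x y := ⟨x.n + y.n + co.tau x.g y.g, x.g * y.g⟩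
  one := ⟨0, 1⟩
  inv x := ⟨-x.n - co.tau x.g x.g⁻¹, x.g⁻¹⟩
  mul_assoc x y z := by
    have h := co.tau_cocycle x.g y.g z.g
    show CircExt.mk _ _ = CircExt.mk _ _
    rw [CircExt.mk.injEq]
    constructor
    · show x.n + y.n + co.tau x.g y.g + z.n + co.tau (x.g * y.g) z.g
        = x.n + (y.n + z.n + co.tau y.g z.g) + co.tau x.g (y.g * z.g)
      omega
    · exact mul_assoc _ _ _
  one_mul x := by
    show CircExt.mk (0 + x.n + co.tau 1 x.g) (1 * x.g) = x
    rw [co.tau_one_left, one_mul]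
    show CircExt.mk (0 + x.n + 0) x.g = x
    rw [show (0 : ℤ) + x.n + 0 = x.n by omega]
  mul_one x := by
    show CircExt.mk (x.n + 0 + co.tau x.g 1) (x.g * 1) = x
    rw [co.tau_one_right, mul_one]
    rw [show x.n + 0 + 0 = x.n by omega]
  inv_mul_cancel x := by
    show CircExt.mk (-x.n - co.tau x.g x.g⁻¹ + x.n + co.tau x.g⁻¹ x.g) (x.g⁻¹ * x.g)
      = CircExt.mk 0 1
    rw [CircExt.mk.injEq, inv_mul_cancel]
    have := co.tau_inv x.g
    exact ⟨by omega, rfl⟩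

theorem mul_def (x y : CircExt co) :
    x * y = ⟨x.n + y.n + co.tau x.g y.g, x.g * y.g⟩ := rfl

theorem one_def : (1 : CircExt co) = ⟨0, 1⟩ := rfl

/-- projection to `G` -/
noncomputable def proj : CircExt co →* G where
  toFun := CircExt.g
  map_one' := rfl
  map_mul' _ _ := rfl

theorem proj_surjective : Function.Surjective (proj (co := co)) :=
  fun g => ⟨⟨0, g⟩, rfl⟩

theorem mem_ker_proj {x : CircExt co} : x ∈ (proj (co := co)).ker ↔ x.g = 1 := Iff.rfl

theorem ker_proj_central : (proj (co := co)).ker ≤ Subgroup.center (CircExt co) := by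
  intro x hx
  rw [Subgroup.mem_center_iff]
  intro y
  have hg : x.g = 1 := hx
  rw [mul_def, mul_def, hg, mul_one, one_mul, co.tau_one_left, co.tau_one_right]
  rw [CircExt.mk.injEq]
  exact ⟨by omega, rfl⟩

/-- the left-invariant order on the extension -/
def elt (x y : CircExt co) : Prop := x.n < y.n ∨ (x.n = y.n ∧ co.lt x.g y.g)

theorem elt_irrefl (x : CircExt co) : ¬ elt x x := by
  rintro (h | ⟨_, h⟩)
  · omega
  · exact co.lt_ne h rfl

theorem elt_trans {x y z : CircExt co} (h1 : elt x y) (h2 : elt y z) : elt x z := by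
  rcases h1 with h1 | ⟨e1, h1⟩ <;> rcases h2 with h2 | ⟨e2, h2⟩
  · exact Or.inl (by omega)
  · exact Or.inl (by omega)
  · exact Or.inl (by omega)
  · exact Or.inr ⟨by omega, co.lt_trans h1 h2⟩

theorem elt_total {x y : CircExt co} (h : x ≠ y) : elt x y ∨ elt y x := by
  rcases lt_trichotomy x.n y.n with hn | hn | hn
  · exact Or.inl (Or.inl hn)
  · have hg : x.g ≠ y.g := by
      intro e
      apply h
      cases x; cases y
      simp_all
    rcases co.lt_total hg with hl | hl
    · exact Or.inl (Or.inr ⟨hn, hl⟩)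
    · exact Or.inr (Or.inr ⟨hn.symm, hl⟩)
  · exact Or.inr (Or.inl hn)

theorem elt_invariant (h x y : CircExt co) (hxy : elt x y) : elt (h * x) (h * y) := by
  rw [mul_def, mul_def]
  rcases hxy with hn | ⟨hn, hg⟩
  · -- x.n < y.n
    rcases co.tau_zero_or_one h.g x.g with ea | ea <;>
      rcases co.tau_zero_or_one h.g y.g with eb | eb
    · exact Or.inl (by simp only []; omega)
    · exact Or.inl (by simp only []; omega)
    · -- tau = 1, 0 : might be equal level
      by_cases he : h.n + x.n + co.tau h.g x.g < h.n + y.n + co.tau h.g y.g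
      · exact Or.inl he
      · have : h.n + x.n + co.tau h.g x.g = h.n + y.n + co.tau h.g y.g := by omega
        exact Or.inr ⟨this, co.lt_of_tau_one_zero ea eb⟩
    · exact Or.inl (by simp only []; omega)
  · -- equal level, x.g < y.g
    rcases co.tau_mono (f := h.g) hg with hm | ⟨hm, hl⟩
    · exact Or.inl (by simp only []; omega)
    · exact Or.inr ⟨by simp only []; omega, hl⟩

end CircExt

/-- Every torsion-free abelian group admits a left-invariant strict total order. -/
theorem exists_leftOrder_of_comm_torsionFree {A : Type u} [Group A]
    (comm : ∀ a b : A, a * b = b * a)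
    (tf : ∀ a : A, IsOfFinOrder a → a = 1) :
    ∃ r : A → A → Prop, IsStrictTotalOrder A r ∧ ∀ h a b : A, r a b → r (h * a) (h * b) := by
  classical
  -- positive cones
  let S : Set (Set A) := {P | (∀ x ∈ P, ∀ y ∈ P, x * y ∈ P) ∧ (1 : A) ∉ P}
  obtain ⟨P, hPmax⟩ : ∃ P, Maximal (· ∈ S) P := by
    apply zorn_subset
    intro c hcS hchain
    refine ⟨⋃₀ c, ⟨?_, ?_⟩, fun s hs => Set.subset_sUnion_of_mem hs⟩
    · rintro x ⟨s, hs, hxs⟩ y ⟨t, ht, hyt⟩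
      rcases hchain.total hs ht with hst | hts
      · exact ⟨t, ht, (hcS ht).1 x (hst hxs) y hyt⟩
      · exact ⟨s, hs, (hcS hs).1 x hxs y (hts hyt)⟩
    · rintro ⟨s, hs, h1s⟩
      exact (hcS hs).2 h1s
  have hP : P ∈ S := hPmax.1
  have hpow : ∀ p ∈ P, ∀ k : ℕ, 0 < k → p ^ k ∈ P := by
    intro p hp k hk
    induction k with
    | zero => omega
    | succ m ih =>
      rcases Nat.eq_zero_or_pos m with hm | hm
      · subst hm; simpa using hp
      · rw [pow_succ]
        exact hP.1 _ (ih hm) _ hp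
  -- the key extension step
  have hext : ∀ b : A, b ∉ P → b ≠ 1 →
      ∃ p : A, ∃ n : ℕ, (p = 1 ∨ p ∈ P) ∧ 1 = p * b ^ n ∧ (0 < n ∨ p ∈ P) := by
    intro b hbP hb1
    set Q : Set A :=
      {x | ∃ p : A, ∃ n : ℕ, (p = 1 ∨ p ∈ P) ∧ x = p * b ^ n ∧ (0 < n ∨ p ∈ P)} with hQdef
    have hQmul : ∀ x ∈ Q, ∀ y ∈ Q, x * y ∈ Q := by
      rintro x ⟨p, n, hp, rfl, hpn⟩ y ⟨q, m, hq, rfl, hqm⟩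
      refine ⟨p * q, n + m, ?_, ?_, ?_⟩
      · rcases hp with rfl | hp
        · rw [one_mul]; exact hq
        · rcases hq with rfl | hq
          · rw [mul_one]; exact Or.inr hp
          · exact Or.inr (hP.1 _ hp _ hq)
      · rw [pow_add]
        calc p * b ^ n * (q * b ^ m) = p * (b ^ n * q) * b ^ m := by group
        _ = p * (q * b ^ n) * b ^ m := by rw [comm (b ^ n) q]
        _ = p * q * (b ^ n * b ^ m) := by group
      · rcases hpn with hn | hp'
        · exact Or.inl (by omega)
        · rcases hqm with hm | hq'
          · exact Or.inl (by omega)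
          · exact Or.inr (by
              rcases hp with rfl | hp
              · rw [one_mul]; exact hq'
              · exact hP.1 _ hp _ hq')
    have hPQ : P ⊆ Q := fun p hp => ⟨p, 0, Or.inr hp, by rw [pow_zero, mul_one], Or.inr hp⟩
    have hbQ : b ∈ Q := ⟨1, 1, Or.inl rfl, by rw [pow_one, one_mul], Or.inl one_pos⟩
    by_cases h1Q : (1 : A) ∈ Q
    · obtain ⟨p, n, hp, h1, hpn⟩ := h1Q
      exact ⟨p, n, hp, h1, hpn⟩
    · exfalso
      have hQS : Q ∈ S := ⟨hQmul, h1Q⟩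
      have hQP : Q = P := hPmax.eq_of_ge hQS hPQ
      rw [hQP] at hbQ
      exact hbP hbQ
  -- totality of the cone
  have htotal : ∀ a : A, a ≠ 1 → a ∈ P ∨ a⁻¹ ∈ P := by
    intro a ha1
    by_contra hc
    push_neg at hc
    obtain ⟨haP, haiP⟩ := hc
    obtain ⟨p, n, hp, h1, hpn⟩ := hext a haP ha1
    obtain ⟨q, m, hq, h2, hqm⟩ := hext a⁻¹ haiP (by simpa using ha1)
    rcases hp with rfl | hp
    · rw [one_mul] at h1
      rcases hpn with hn | hP1
      · exact ha1 (tf a ((isOfFinOrder_iff_pow_eq_one).mpr ⟨n, hn, h1.symm⟩))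
      · exact hP.2 hP1
    rcases hq with rfl | hq
    · rw [one_mul] at h2
      rcases hqm with hm | hQ1
      · have : a⁻¹ = 1 := tf _ ((isOfFinOrder_iff_pow_eq_one).mpr ⟨m, hm, h2.symm⟩)
        exact ha1 (by simpa using this)
      · exact hP.2 hQ1
    -- p, q ∈ P, p * a^n = 1, q * a⁻¹^m = 1
    have hn : 0 < n := by
      rcases Nat.eq_zero_or_pos n with h | h
      · subst h; rw [pow_zero, mul_one] at h1; exact absurd (by rwa [← h1] at hp) hP.2
      · exact h
    have hm : 0 < m := by
      rcases Nat.eq_zero_or_pos m with h | h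
      · subst h; rw [pow_zero, mul_one] at h2; exact absurd (by rwa [← h2] at hq) hP.2
      · exact h
    -- p^m * q^n = 1
    have key : p ^ m * q ^ n = 1 := by
      have e1 : p * a ^ n = 1 := h1.symm
      have e2 : q * (a ^ m)⁻¹ = 1 := by rw [← inv_pow]; exact h2.symm
      have ep : p = (a ^ n)⁻¹ := eq_inv_of_mul_eq_one_left e1
      have eq' : q = a ^ m := mul_inv_eq_one.mp e2
      rw [ep, eq']
      group
    have hmem : p ^ m * q ^ n ∈ P := hP.1 _ (hpow p hp m hm) _ (hpow q hq n hn)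
    rw [key] at hmem
    exact hP.2 hmem
  -- asymmetry
  have hasym : ∀ a ∈ P, a⁻¹ ∉ P := by
    intro a ha hai
    have := hP.1 a ha a⁻¹ hai
    rw [mul_inv_cancel] at this
    exact hP.2 this
  -- the order
  refine ⟨fun x y => x⁻¹ * y ∈ P, ?_, ?_⟩
  · refine { trichotomous := ?_, irrefl := ?_, trans := ?_ }
    · intro a b
      by_cases h : a = b
      · exact fun _ _ => h
      · have hne : a⁻¹ * b ≠ 1 := fun e => h (inv_mul_eq_one.mp e)
        rcases htotal _ hne with hmem | hmem
        · exact fun hn _ => absurd hmem hn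
        · refine fun _ hn => absurd ?_ hn
          rwa [mul_inv_rev, inv_inv] at hmem
    · intro a
      simp only [inv_mul_cancel]
      exact hP.2
    · intro a b c hab hbc
      have e : (a⁻¹ * b) * (b⁻¹ * c) = a⁻¹ * c := by group
      rw [← e]
      exact hP.1 _ hab _ hbc
  · intro h a b hab
    have : (h * a)⁻¹ * (h * b) = a⁻¹ * b := by group
    rwa [this]




/-- (universal central extension is left-orderable) -/

theorem universal_extension_leftOrderable
    (G : Type u) (A : Type u) (Gu : Type u) [Group G] [Group A] [Group Gu]
    (hG : IsCircularlyOrderable G)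
    (hH1 : ∃ ι : Type u, Nonempty (Additive (Abelianization G) ≃+ FreeAbelianGroup ι))
    (hH2 : ∀ a : H2 G, IsOfFinOrder a → a = 1)
    (i : A →* Gu) (π : Gu →* G)
    (hi : Function.Injective i) (hπ : Function.Surjective π)
    (hker : π.ker = i.range) (hcent : i.range ≤ Subgroup.center Gu)
    (hA : Nonempty (A ≃* H2 G))
    (huniv : ∀ (B E : Type u) [Group B] [Group E] (j : B →* E) (p : E →* G),
      Function.Injective j → Function.Surjective p → p.ker = j.range →
      j.range ≤ Subgroup.center E → ∃ f : Gu →* E, p.comp f = π) :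
    IsLeftOrderable Gu := by
  classical
  obtain ⟨c, hv, hz, hco, hlinv⟩ := hG
  set co : CircCocycle G := ⟨c, hv, hz, hco, hlinv⟩ with hco_def
  -- the left-orderable central extension coming from the circular order
  obtain ⟨f, hf⟩ :=
    huniv (↥(CircExt.proj (co := co)).ker) (CircExt co)
      (CircExt.proj (co := co)).ker.subtype (CircExt.proj (co := co))
      (Subgroup.subtype_injective _) CircExt.proj_surjective
      (Subgroup.range_subtype _).symm
      (by rw [Subgroup.range_subtype]; exact CircExt.ker_proj_central)
  have hfπ : ∀ x : Gu, CircExt.proj (f x) = π x := fun x => DFunLike.congr_fun hf x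
  -- `A` is abelian and torsion-free
  have comm : ∀ a b : A, a * b = b * a := by
    intro a b
    apply hi
    have hc : i b * i a = i a * i b :=
      Subgroup.mem_center_iff.mp (hcent ⟨a, rfl⟩) (i b)
    rw [map_mul, map_mul, hc]
  have tf : ∀ a : A, IsOfFinOrder a → a = 1 := by
    intro a ha
    obtain ⟨e⟩ := hA
    have h1 : IsOfFinOrder (e a) := e.toMonoidHom.isOfFinOrder ha
    have h2 : e a = 1 := hH2 _ h1
    apply e.injective
    rw [h2, map_one]
  obtain ⟨rA, hsto, hrAinv⟩ := exists_leftOrder_of_comm_torsionFree comm tf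
  haveI := hsto
  -- the partial inverse of `i`
  set σ : Gu → A := Function.invFun i with hσdef
  have hσ : ∀ x : Gu, x ∈ i.range → i (σ x) = x := by
    intro x hx
    exact Function.invFun_eq (MonoidHom.mem_range.mp hx)
  have kerf_sub : ∀ x : Gu, f x = 1 → x ∈ i.range := by
    intro x hx
    have : π x = 1 := by rw [← hfπ, hx, map_one]
    rw [← hker]
    exact this
  have hmemσ : ∀ {a b : Gu}, f a = f b → i (σ (a⁻¹ * b)) = a⁻¹ * b := by
    intro a b hab
    refine hσ _ (kerf_sub _ ?_)
    rw [map_mul, map_inv, hab, inv_mul_cancel]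
  have σ1 : σ (1 : Gu) = 1 := by
    apply hi
    rw [hσ 1 (one_mem _), map_one]
  -- helper facts about rA
  have rA_one_mul : ∀ x y : A, rA 1 x → rA 1 y → rA 1 (x * y) := by
    intro x y hx hy
    have := hrAinv x 1 y hy
    rw [mul_one] at this
    exact trans_of rA hx this
  have rA_inv : ∀ x : A, rA x 1 → rA 1 x⁻¹ := by
    intro x hx
    have := hrAinv x⁻¹ x 1 hx
    rwa [inv_mul_cancel, mul_one] at this
  -- the order on Gu
  refine ⟨fun a b => CircExt.elt (f a) (f b) ∨ (f a = f b ∧ rA 1 (σ (a⁻¹ * b))), ?_, ?_⟩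
  · apply isSTO_of
    · -- irreflexive
      rintro a (h | ⟨_, h⟩)
      · exact CircExt.elt_irrefl _ h
      · rw [inv_mul_cancel, σ1] at h
        exact irrefl_of rA 1 h
    · -- transitive
      rintro a b d (h1 | ⟨e1, h1⟩) (h2 | ⟨e2, h2⟩)
      · exact Or.inl (CircExt.elt_trans h1 h2)
      · exact Or.inl (e2 ▸ h1)
      · exact Or.inl (e1 ▸ h2)
      · refine Or.inr ⟨e1.trans e2, ?_⟩
        have hmul : σ (a⁻¹ * d) = σ (a⁻¹ * b) * σ (b⁻¹ * d) := by
          apply hi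
          rw [map_mul, hmemσ e1, hmemσ e2, hmemσ (e1.trans e2)]
          group
        rw [hmul]
        exact rA_one_mul _ _ h1 h2
    · -- total
      intro a b hab
      by_cases hfab : f a = f b
      · have hne : a⁻¹ * b ≠ 1 := fun e => hab (inv_mul_eq_one.mp e)
        have htne : σ (a⁻¹ * b) ≠ 1 := by
          intro e
          apply hne
          rw [← hmemσ hfab, e, map_one]
        rcases trichotomous_of rA 1 (σ (a⁻¹ * b)) with h | h | h
        · exact Or.inl (Or.inr ⟨hfab, h⟩)
        · exact absurd h.symm htne
        · refine Or.inr (Or.inr ⟨hfab.symm, ?_⟩)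
          have hinv : σ (b⁻¹ * a) = (σ (a⁻¹ * b))⁻¹ := by
            apply hi
            rw [map_inv, hmemσ hfab.symm, hmemσ hfab]
            group
          rw [hinv]
          exact rA_inv _ h
      · rcases CircExt.elt_total hfab with h | h
        · exact Or.inl (Or.inl h)
        · exact Or.inr (Or.inl h)
  · -- left-invariance
    rintro h a b (h1 | ⟨e1, h1⟩)
    · refine Or.inl ?_
      rw [map_mul, map_mul]
      exact CircExt.elt_invariant (f h) _ _ h1
    · refine Or.inr ⟨by rw [map_mul, map_mul, e1], ?_⟩
      rwa [show (h * a)⁻¹ * (h * b) = a⁻¹ * b by group]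
end

section
/- Let G be a group with H₁(G) ≅ ℤᵏ for some k and H₂(G) finite. Let 1 → A → G_u → G → 1 be a central extension with A ≅ H₂(G) (for example, a universal central extension of G). Then H₂(G_u) is finite. -/
universe u

open scoped commutatorElement
open scoped IsMulCommutative

section Aux

open Subgroup

variable {F : Type*} [Group F]

lemma aux_mk_mem_center (N : Subgroup F) [N.Normal] {r : F} (hr : r ∈ N) :
    (QuotientGroup.mk r : F ⧸ ⁅(⊤ : Subgroup F), N⁆) ∈
      Subgroup.center (F ⧸ ⁅(⊤ : Subgroup F), N⁆) := by
  rw [Subgroup.mem_center_iff]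
  intro q
  induction q using QuotientGroup.induction_on with
  | _ f =>
    have h1 : ⁅f, r⁆ ∈ ⁅(⊤ : Subgroup F), N⁆ :=
      Subgroup.commutator_mem_commutator (Subgroup.mem_top f) hr
    have h2 : (QuotientGroup.mk ⁅f, r⁆ : F ⧸ ⁅(⊤ : Subgroup F), N⁆) = 1 :=
      (QuotientGroup.eq_one_iff _).mpr h1
    have h3 : ⁅QuotientGroup.mk' ⁅(⊤ : Subgroup F), N⁆ f, QuotientGroup.mk' ⁅(⊤ : Subgroup F), N⁆ r⁆ = 1 := by
      rw [← map_commutatorElement]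
      exact (QuotientGroup.eq_one_iff _).mpr h1
    exact (commutatorElement_eq_one_iff_commute.mp h3).eq

lemma aux_two_lifts {F₁ G₂ : Type*} [Group F₁] [Group G₂] (p : F →* G₂)
    (l₁ l₂ : F₁ →* F) (h : p.comp l₁ = p.comp l₂) {x : F₁} (hx : x ∈ commutator F₁) :
    l₁ x * (l₂ x)⁻¹ ∈ ⁅(⊤ : Subgroup F), p.ker⁆ := by
  haveI : (⁅(⊤ : Subgroup F), p.ker⁆).Normal := Subgroup.commutator_normal ⊤ p.ker
  have hker : ∀ y : F₁, l₁ y * (l₂ y)⁻¹ ∈ p.ker := by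
    intro y
    have hy : p (l₁ y) = p (l₂ y) := by
      have := congrArg (fun f : F₁ →* G₂ => f y) h
      simpa using this
    simp [MonoidHom.mem_ker, hy]
  have hcent : ∀ y : F₁,
      (QuotientGroup.mk (l₁ y * (l₂ y)⁻¹) : F ⧸ ⁅(⊤ : Subgroup F), p.ker⁆) ∈
        Subgroup.center (F ⧸ ⁅(⊤ : Subgroup F), p.ker⁆) :=
    fun y => aux_mk_mem_center p.ker (hker y)
  let c : F₁ →* Subgroup.center (F ⧸ ⁅(⊤ : Subgroup F), p.ker⁆) :=
  { toFun := fun y => ⟨QuotientGroup.mk (l₁ y * (l₂ y)⁻¹), hcent y⟩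
    map_one' := by ext; simp
    map_mul' := by
      intro a b
      have hb := Subgroup.mem_center_iff.mp (hcent b)
      apply Subtype.ext
      show (QuotientGroup.mk (l₁ (a * b) * (l₂ (a * b))⁻¹) :
              F ⧸ ⁅(⊤ : Subgroup F), p.ker⁆)
          = QuotientGroup.mk (l₁ a * (l₂ a)⁻¹) * QuotientGroup.mk (l₁ b * (l₂ b)⁻¹)
      have e1 : (QuotientGroup.mk (l₁ (a * b) * (l₂ (a * b))⁻¹) :
              F ⧸ ⁅(⊤ : Subgroup F), p.ker⁆)
          = QuotientGroup.mk (l₁ a) * QuotientGroup.mk (l₁ b * (l₂ b)⁻¹) *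
              (QuotientGroup.mk (l₂ a))⁻¹ := by
        simp [QuotientGroup.mk_mul, QuotientGroup.mk_inv, mul_assoc]
      rw [e1, mul_assoc, ← hb ((QuotientGroup.mk (l₂ a) :
          F ⧸ ⁅(⊤ : Subgroup F), p.ker⁆)⁻¹), ← mul_assoc]
      simp [QuotientGroup.mk_mul, QuotientGroup.mk_inv, mul_assoc] }
  have hcomm : commutator F₁ ≤ c.ker := Abelianization.commutator_subset_ker c
  have h1 := hcomm hx
  rw [MonoidHom.mem_ker] at h1
  have h2 : (QuotientGroup.mk (l₁ x * (l₂ x)⁻¹) : F ⧸ ⁅(⊤ : Subgroup F), p.ker⁆) = 1 :=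
    congrArg Subtype.val h1
  exact (QuotientGroup.eq_one_iff _).mp h2

end Aux

section Aux2

lemma aux_core {Q : Type*} [Group Q] (R' : Subgroup Q) (Sg Z : Set Q)
    (hSg : Sg.Finite) (hZfin : Z.Finite) (hZR : Z ⊆ (R' : Set Q))
    (n : ℕ) (hn : 0 < n)
    (hRc : ∀ r ∈ R', ∀ q : Q, ⁅q, r⁆ ∈ Subgroup.center Q)
    (htors : ∀ z ∈ Z, z ^ n ∈ Subgroup.center Q)
    (hrep : ∀ r ∈ R', ∃ z ∈ Z, ∃ s ∈ Subgroup.center Q, r = z * s)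
    (hgen : ∀ q : Q, q ∈ Subgroup.closure Sg ⊔ Subgroup.center Q ⊔ commutator Q) :
    ∃ L : Subgroup Q, Finite L ∧ ⁅(⊤ : Subgroup Q), R'⁆ ≤ L := by
  classical
  have hcentr_eq : ∀ q s : Q, s ∈ Subgroup.center Q → ⁅q, s⁆ = 1 := by
    intro q s hs
    exact commutatorElement_eq_one_iff_commute.mpr (Subgroup.mem_center_iff.mp hs q)
  have hmulleft : ∀ a b r : Q, ⁅b, r⁆ ∈ Subgroup.center Q →
      ⁅a * b, r⁆ = ⁅b, r⁆ * ⁅a, r⁆ := by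
    intro a b r hb
    have hb' := Subgroup.mem_center_iff.mp hb
    have e1 : ⁅a * b, r⁆ = a * ⁅b, r⁆ * a⁻¹ * ⁅a, r⁆ := by
      simp only [commutatorElement_def]; group
    have e2 : a * ⁅b, r⁆ * a⁻¹ = ⁅b, r⁆ := by
      rw [hb' a]; group
    rw [e1, e2]
  have hmulright : ∀ q r r' : Q, ⁅q, r'⁆ ∈ Subgroup.center Q →
      ⁅q, r * r'⁆ = ⁅q, r⁆ * ⁅q, r'⁆ := by
    intro q r r' hc
    have hc' := Subgroup.mem_center_iff.mp hc
    have e1 : ⁅q, r * r'⁆ = ⁅q, r⁆ * (r * ⁅q, r'⁆ * r⁻¹) := by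
      simp only [commutatorElement_def]; group
    have e2 : r * ⁅q, r'⁆ * r⁻¹ = ⁅q, r'⁆ := by
      rw [hc' r]; group
    rw [e1, e2]
  have hpow : ∀ z ∈ Z, ∀ q : Q, ∀ m : ℕ, ⁅q, z ^ m⁆ = ⁅q, z⁆ ^ m := by
    intro z hz q m
    induction m with
    | zero => simp
    | succ m ih =>
        rw [pow_succ, hmulright q (z ^ m) z (hRc z (hZR hz) q), ih, pow_succ]
  have hgen_tors : ∀ z ∈ Z, ∀ q : Q, ⁅q, z⁆ ^ n = 1 := by
    intro z hz q
    rw [← hpow z hz q n]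
    exact hcentr_eq q _ (htors z hz)
  set T : Set ↥(Subgroup.center Q) :=
    {t : ↥(Subgroup.center Q) | (t : Q) ∈ Set.image2 (fun a b => ⁅a, b⁆) Sg Z} with hT
  have hTfin : T.Finite :=
    Set.Finite.preimage (Set.injOn_of_injective Subtype.coe_injective)
      (Set.Finite.image2 _ hSg hZfin)
  set L' : Subgroup ↥(Subgroup.center Q) := Subgroup.closure T with hL'
  haveI hfg : Group.FG ↥L' := by
    rw [Group.fg_iff_subgroup_fg, Subgroup.fg_iff]
    exact ⟨T, rfl, hTfin⟩
  have hKn : L' ≤ (powMonoidHom n : ↥(Subgroup.center Q) →* ↥(Subgroup.center Q)).ker := by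
    rw [hL', Subgroup.closure_le]
    rintro t ht
    obtain ⟨a, ha, b, hb, hab⟩ := ht
    simp only [SetLike.mem_coe, MonoidHom.mem_ker, powMonoidHom_apply]
    apply Subtype.ext
    rw [SubmonoidClass.coe_pow]
    rw [← hab]
    exact hgen_tors b hb a
  have hLtors : Monoid.IsTorsion ↥L' := by
    intro x
    rw [isOfFinOrder_iff_pow_eq_one]
    refine ⟨n, hn, ?_⟩
    have hx := hKn x.2
    rw [MonoidHom.mem_ker, powMonoidHom_apply] at hx
    apply Subtype.ext
    rw [SubmonoidClass.coe_pow]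
    exact hx
  haveI hfin : Finite ↥L' := CommGroup.finite_of_fg_torsion ↥L' hLtors
  refine ⟨L'.map (Subgroup.center Q).subtype, ?_, ?_⟩
  · apply Finite.of_surjective
      (fun x : ↥L' => (⟨(x : ↥(Subgroup.center Q)).1,
        Subgroup.mem_map_of_mem _ x.2⟩ : ↥(L'.map (Subgroup.center Q).subtype)))
    rintro ⟨y, hy⟩
    rw [Subgroup.mem_map] at hy
    obtain ⟨x, hx, rfl⟩ := hy
    exact ⟨⟨x, hx⟩, rfl⟩
  · rw [Subgroup.commutator_le]
    intro q _ r hr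
    obtain ⟨z, hz, s, hs, rfl⟩ := hrep r hr
    have hqz : ⁅q, z * s⁆ = ⁅q, z⁆ := by
      rw [hmulright q z s (by rw [hcentr_eq q s hs]; exact Subgroup.one_mem _),
        hcentr_eq q s hs, mul_one]
    rw [hqz]
    let χ : Q →* ↥(Subgroup.center Q) :=
    { toFun := fun a => ⟨⁅a, z⁆, hRc z (hZR hz) a⟩
      map_one' := Subtype.ext (commutatorElement_one_left z)
      map_mul' := by
        intro a b
        show (⟨⁅a * b, z⁆, hRc z (hZR hz) (a * b)⟩ : ↥(Subgroup.center Q))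
            = ⟨⁅a, z⁆, hRc z (hZR hz) a⟩ * ⟨⁅b, z⁆, hRc z (hZR hz) b⟩
        rw [mul_comm]
        exact Subtype.ext (hmulleft a b z (hRc z (hZR hz) b)) }
    have hχ : ∀ a : Q, χ a ∈ L' := by
      intro a
      have hsup : Subgroup.closure Sg ⊔ Subgroup.center Q ⊔ commutator Q ≤ L'.comap χ := by
        refine sup_le (sup_le ?_ ?_) ?_
        · rw [Subgroup.closure_le]
          intro σ hσ
          exact Subgroup.subset_closure (Set.mem_image2_of_mem hσ hz)
        · intro s' hs'
          rw [Subgroup.mem_comap]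
          have h1 : χ s' = 1 := Subtype.ext
            (commutatorElement_eq_one_iff_commute.mpr
              ((Subgroup.mem_center_iff.mp hs' z).symm))
          rw [h1]
          exact Subgroup.one_mem _
        · refine le_trans (Abelianization.commutator_subset_ker χ) ?_
          intro y hy
          rw [MonoidHom.mem_ker] at hy
          rw [Subgroup.mem_comap, hy]
          exact Subgroup.one_mem _
      exact Subgroup.mem_comap.mp (hsup (hgen a))
    exact Subgroup.mem_map.mpr ⟨χ q, hχ q, rfl⟩

end Aux2

section Aux3

lemma aux_gu_gen {G Gu A : Type*} [Group G] [Group Gu] [Group A] [Finite A] {k : ℕ}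
    (e : Additive (Abelianization G) ≃+ (Fin k → ℤ))
    (i : A →* Gu) (π : Gu →* G) (hπ : Function.Surjective π)
    (hker : π.ker = i.range) :
    ∃ Sig : Set Gu, Sig.Finite ∧
      ∀ x : Gu, x ∈ Subgroup.closure Sig ⊔ commutator Gu := by
  classical
  have hofsurj : Function.Surjective (Abelianization.of : G →* Abelianization G) :=
    fun b => QuotientGroup.mk'_surjective (commutator G) b
  set γ : Fin k → G :=
    fun j => Function.surjInv hofsurj (Additive.toMul (e.symm (Pi.single j 1))) with hγdef
  have hγ : ∀ j, Abelianization.of (γ j) = Additive.toMul (e.symm (Pi.single j 1)) :=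
    fun j => Function.surjInv_eq hofsurj _
  set uu : Fin k → Gu := fun j => Function.surjInv hπ (γ j) with huudef
  have hu : ∀ j, π (uu j) = γ j := fun j => Function.surjInv_eq hπ _
  refine ⟨Set.range i ∪ Set.range uu,
    (Set.finite_range i).union (Set.finite_range uu), ?_⟩
  intro x
  set v : Fin k → ℤ := e (Additive.ofMul (Abelianization.of (π x))) with hv
  set w : G := (List.ofFn fun j => γ j ^ (v j)).prod with hw
  have hofw : Abelianization.of w = Abelianization.of (π x) := by
    have h1 : Abelianization.of w = ∏ j, (Abelianization.of (γ j)) ^ (v j) := by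
      rw [hw, map_list_prod, List.map_ofFn, List.prod_ofFn]
      exact Finset.prod_congr rfl fun j _ => map_zpow Abelianization.of (γ j) (v j)
    have h2 : Additive.ofMul (Abelianization.of w) = e.symm v := by
      rw [h1]
      have h3 : Additive.ofMul (∏ j, (Abelianization.of (γ j)) ^ (v j))
          = ∑ j, (v j) • Additive.ofMul (Abelianization.of (γ j)) := by
        rw [ofMul_prod]
        exact Finset.sum_congr rfl fun j _ => ofMul_zpow _ _
      rw [h3]
      have h4 : ∀ j, Additive.ofMul (Abelianization.of (γ j)) = e.symm (Pi.single j 1) := by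
        intro j; rw [hγ j]; simp
      have h5 : (∑ j, (v j) • Additive.ofMul (Abelianization.of (γ j)))
          = e.symm (∑ j, (v j) • (Pi.single j 1 : Fin k → ℤ)) := by
        rw [map_sum]
        exact Finset.sum_congr rfl fun j _ => by rw [h4 j, map_zsmul]
      rw [h5]
      congr 1
      have h6 : ∀ j, (v j) • (Pi.single j 1 : Fin k → ℤ) = Pi.single j (v j) := by
        intro j
        funext l
        by_cases hl : l = j <;> simp [Pi.single_apply, hl]
      calc (∑ j, (v j) • (Pi.single j 1 : Fin k → ℤ))
          = ∑ j, Pi.single j (v j) := Finset.sum_congr rfl fun j _ => h6 j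
        _ = v := Finset.univ_sum_single v
    have h7 : Additive.ofMul (Abelianization.of w) = Additive.ofMul (Abelianization.of (π x)) := by
      rw [h2, hv]; simp
    exact h7
  have hcom : π x * w⁻¹ ∈ commutator G := by
    have h8 : Abelianization.of (π x * w⁻¹) = 1 := by
      rw [map_mul, map_inv, ← hofw, mul_inv_cancel]
    exact (QuotientGroup.eq_one_iff _).mp h8
  have hmaptop : Subgroup.map π ⊤ = ⊤ := by
    rw [← MonoidHom.range_eq_map]
    exact MonoidHom.range_eq_top_of_surjective π hπ
  have hmapc : Subgroup.map π (commutator Gu) = commutator G := by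
    rw [commutator_def, Subgroup.map_commutator, hmaptop, commutator_def]
  obtain ⟨c', hc', hπc'⟩ : ∃ c' ∈ commutator Gu, π c' = π x * w⁻¹ := by
    have h9 : π x * w⁻¹ ∈ Subgroup.map π (commutator Gu) := by rw [hmapc]; exact hcom
    rwa [Subgroup.mem_map] at h9
  set wu : Gu := (List.ofFn fun j => uu j ^ (v j)).prod with hwu
  have hπwu : π wu = w := by
    rw [hwu, map_list_prod, List.map_ofFn, hw]
    exact congrArg List.prod (congrArg List.ofFn (funext fun j => by simp [map_zpow, hu j]))
  have hkx : x * (c' * wu)⁻¹ ∈ π.ker := by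
    rw [MonoidHom.mem_ker, map_mul, map_inv, map_mul, hπc', hπwu]
    group
  obtain ⟨a, ha⟩ : ∃ a, i a = x * (c' * wu)⁻¹ := by
    rw [hker] at hkx; exact hkx
  have hx : x = i a * (c' * wu) := by rw [ha]; group
  rw [hx]
  refine Subgroup.mul_mem _ ?_ (Subgroup.mul_mem _ ?_ ?_)
  · exact SetLike.le_def.mp le_sup_left
      (Subgroup.subset_closure (Or.inl ⟨a, rfl⟩))
  · exact SetLike.le_def.mp le_sup_right hc'
  · refine SetLike.le_def.mp le_sup_left ?_
    apply Subgroup.list_prod_mem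
    intro g hg
    rw [List.mem_ofFn] at hg
    obtain ⟨j, rfl⟩ := hg
    exact Subgroup.zpow_mem (Subgroup.closure (Set.range i ∪ Set.range uu))
      (Subgroup.subset_closure (Set.mem_union_right _ ⟨j, rfl⟩)) _

end Aux3

theorem finite_H2_of_central_extension_by_H2
    (G : Type u) (A : Type u) (Gu : Type u) [Group G] [Group A] [Group Gu]
    (k : ℕ) (hH1 : Nonempty (Additive (Abelianization G) ≃+ (Fin k → ℤ)))
    (hH2 : Finite (H2 G))
    (i : A →* Gu) (π : Gu →* G)
    (hi : Function.Injective i) (hπ : Function.Surjective π)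
    (hker : π.ker = i.range) (hcent : i.range ≤ Subgroup.center Gu)
    (hA : Nonempty (A ≃* H2 G)) :
    Finite (H2 Gu) := by
  classical
  obtain ⟨eH1⟩ := hH1
  obtain ⟨eA⟩ := hA
  haveI hFA : Finite A := Finite.of_equiv _ eA.toEquiv.symm
  haveI hFk : Finite ↥π.ker := by
    rw [hker]
    exact Finite.of_equiv _ (MonoidHom.ofInjective hi).toEquiv
  obtain ⟨Sig0, hSig0fin, hSig0gen⟩ := aux_gu_gen eH1 i π hπ hker
  set n : ℕ := Nat.card ↥π.ker with hn
  have hnpos : 0 < n := Nat.card_pos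
  have hzn : ∀ z ∈ π.ker, z ^ n = 1 := by
    intro z hz
    have h1 : (⟨z, hz⟩ : ↥π.ker) ^ n = 1 := pow_card_eq_one'
    have h2 := congrArg Subtype.val h1
    simpa using h2
  set ε : FreeGroup Gu →* Gu := FreeGroup.lift (id : Gu → Gu) with hε
  set p : FreeGroup Gu →* G := π.comp ε with hp
  have hmemS : ∀ {x : FreeGroup Gu}, x ∈ presKernel Gu ↔ ε x = 1 := fun {x} => Iff.rfl
  have hεof : ∀ g : Gu, ε (FreeGroup.of g) = g := fun g => FreeGroup.lift_apply_of
  have hεsurj : Function.Surjective ε := fun g => ⟨FreeGroup.of g, hεof g⟩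
  set D : Subgroup (FreeGroup Gu) := ⁅(⊤ : Subgroup (FreeGroup Gu)), presKernel Gu⁆ with hD
  haveI hDn : D.Normal := Subgroup.commutator_normal ⊤ (presKernel Gu)
  have hscentral : ∀ {x : FreeGroup Gu}, x ∈ presKernel Gu →
      (QuotientGroup.mk x : FreeGroup Gu ⧸ D) ∈ Subgroup.center (FreeGroup Gu ⧸ D) :=
    fun {x} hx => aux_mk_mem_center (presKernel Gu) hx
  have hkerc : ∀ {u : Gu}, π u = 1 → ∀ g : Gu, g * u = u * g := by
    intro u hu g
    have h1 : u ∈ i.range := by rw [← hker]; exact hu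
    exact Subgroup.mem_center_iff.mp (hcent h1) g
  have hFRS : ∀ (f r : FreeGroup Gu), r ∈ p.ker → ⁅f, r⁆ ∈ presKernel Gu := by
    intro f r hr
    rw [hmemS, map_commutatorElement]
    exact commutatorElement_eq_one_iff_commute.mpr (hkerc (by exact hr) (ε f))
  set R' : Subgroup (FreeGroup Gu ⧸ D) := Subgroup.map (QuotientGroup.mk' D) p.ker with hR'
  have hRc : ∀ r ∈ R', ∀ q : FreeGroup Gu ⧸ D,
      ⁅q, r⁆ ∈ Subgroup.center (FreeGroup Gu ⧸ D) := by
    intro r hr q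
    obtain ⟨ρ, hρ, rfl⟩ := Subgroup.mem_map.mp hr
    induction q using QuotientGroup.induction_on with
    | _ f =>
      show ⁅(QuotientGroup.mk f : FreeGroup Gu ⧸ D), QuotientGroup.mk ρ⁆ ∈ _
      have h1 : ⁅(QuotientGroup.mk f : FreeGroup Gu ⧸ D), QuotientGroup.mk ρ⁆
          = QuotientGroup.mk ⁅f, ρ⁆ :=
        (map_commutatorElement (QuotientGroup.mk' D) f ρ).symm
      rw [h1]
      exact hscentral (hFRS f ρ hρ)
  set Zs : Set (FreeGroup Gu ⧸ D) :=
    (fun z : Gu => (QuotientGroup.mk (FreeGroup.of z) : FreeGroup Gu ⧸ D)) ''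
      (π.ker : Set Gu) with hZs
  have hZfin : Zs.Finite := Set.Finite.image _ (Set.toFinite _)
  have hofker : ∀ {z : Gu}, z ∈ π.ker → FreeGroup.of z ∈ p.ker := by
    intro z hz
    show π (ε (FreeGroup.of z)) = 1
    rw [hεof]; exact hz
  have hZR : Zs ⊆ (R' : Set (FreeGroup Gu ⧸ D)) := by
    rintro _ ⟨z, hz, rfl⟩
    exact Subgroup.mem_map.mpr ⟨FreeGroup.of z, hofker hz, rfl⟩
  have htors : ∀ z ∈ Zs, z ^ n ∈ Subgroup.center (FreeGroup Gu ⧸ D) := by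
    rintro _ ⟨z, hz, rfl⟩
    have h1 : (QuotientGroup.mk (FreeGroup.of z) : FreeGroup Gu ⧸ D) ^ n
        = QuotientGroup.mk ((FreeGroup.of z) ^ n) :=
      (map_pow (QuotientGroup.mk' D) (FreeGroup.of z) n).symm
    rw [h1]
    apply hscentral
    rw [hmemS, map_pow, hεof]
    exact hzn z hz
  have hrep : ∀ r ∈ R', ∃ z ∈ Zs, ∃ s ∈ Subgroup.center (FreeGroup Gu ⧸ D), r = z * s := by
    intro r hr
    obtain ⟨ρ, hρ, rfl⟩ := Subgroup.mem_map.mp hr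
    have hζ : ε ρ ∈ π.ker := hρ
    refine ⟨QuotientGroup.mk (FreeGroup.of (ε ρ)), ⟨ε ρ, hζ, rfl⟩,
      QuotientGroup.mk ((FreeGroup.of (ε ρ))⁻¹ * ρ), ?_, ?_⟩
    · apply hscentral
      rw [hmemS, map_mul, map_inv, hεof]
      simp
    · show QuotientGroup.mk ρ = _
      rw [← QuotientGroup.mk_mul]
      congr 1
      group
  have hgen : ∀ q : FreeGroup Gu ⧸ D,
      q ∈ Subgroup.closure
          ((fun g : Gu => (QuotientGroup.mk (FreeGroup.of g) : FreeGroup Gu ⧸ D)) '' Sig0)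
        ⊔ Subgroup.center (FreeGroup Gu ⧸ D) ⊔ commutator (FreeGroup Gu ⧸ D) := by
    have hle : Subgroup.closure (FreeGroup.of '' Sig0) ⊔ commutator (FreeGroup Gu)
        ≤ Subgroup.comap (QuotientGroup.mk' D)
            (Subgroup.closure
              ((fun g : Gu => (QuotientGroup.mk (FreeGroup.of g) : FreeGroup Gu ⧸ D)) '' Sig0)
              ⊔ Subgroup.center (FreeGroup Gu ⧸ D) ⊔ commutator (FreeGroup Gu ⧸ D)) := by
      refine sup_le ?_ ?_
      · rw [Subgroup.closure_le]
        rintro _ ⟨g, hg, rfl⟩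
        rw [SetLike.mem_coe, Subgroup.mem_comap]
        have hmem : (QuotientGroup.mk (FreeGroup.of g) : FreeGroup Gu ⧸ D) ∈
            Subgroup.closure
              ((fun g : Gu => (QuotientGroup.mk (FreeGroup.of g) : FreeGroup Gu ⧸ D)) '' Sig0) :=
          Subgroup.subset_closure ⟨g, hg, rfl⟩
        exact SetLike.le_def.mp (le_trans le_sup_left le_sup_left) hmem
      · rw [commutator_def, Subgroup.commutator_le]
        intro a _ b _
        rw [Subgroup.mem_comap, map_commutatorElement]
        exact SetLike.le_def.mp le_sup_right
          (Subgroup.commutator_mem_commutator (Subgroup.mem_top _) (Subgroup.mem_top _))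
    intro q
    induction q using QuotientGroup.induction_on with
    | _ f =>
      have hx := hSig0gen (ε f)
      have hmaptopε : Subgroup.map ε ⊤ = ⊤ := by
        rw [← MonoidHom.range_eq_map]
        exact MonoidHom.range_eq_top_of_surjective ε hεsurj
      have hmapcl : Subgroup.map ε (Subgroup.closure (FreeGroup.of '' Sig0))
          = Subgroup.closure Sig0 := by
        rw [MonoidHom.map_closure, Set.image_image]
        congr 1
        funext g
        simp [hεof]
      have hmapcom : Subgroup.map ε (commutator (FreeGroup Gu)) = commutator Gu := by
        rw [commutator_def, Subgroup.map_commutator, hmaptopε, commutator_def]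
      have hx2 : ε f ∈ Subgroup.map ε
          (Subgroup.closure (FreeGroup.of '' Sig0) ⊔ commutator (FreeGroup Gu)) := by
        rw [Subgroup.map_sup, hmapcl, hmapcom]; exact hx
      obtain ⟨y, hy, hyx⟩ := Subgroup.mem_map.mp hx2
      have hfy : f * y⁻¹ ∈ presKernel Gu := by
        rw [hmemS, map_mul, map_inv, hyx]
        simp
      have h2 : (QuotientGroup.mk f : FreeGroup Gu ⧸ D)
          = QuotientGroup.mk (f * y⁻¹) * QuotientGroup.mk y := by
        rw [← QuotientGroup.mk_mul]
        congr 1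
        group
      rw [h2]
      refine Subgroup.mul_mem _ ?_ (Subgroup.mem_comap.mp (hle hy))
      exact SetLike.le_def.mp (le_trans le_sup_right le_sup_left) (hscentral hfy)
  obtain ⟨L, hLfin, hLle⟩ := aux_core R'
    ((fun g : Gu => (QuotientGroup.mk (FreeGroup.of g) : FreeGroup Gu ⧸ D)) '' Sig0) Zs
    (hSig0fin.image _) hZfin hZR n hnpos hRc htors hrep hgen
  -- comparison maps between the canonical presentations
  set lam : FreeGroup Gu →* FreeGroup G :=
    FreeGroup.lift (fun x : Gu => FreeGroup.of (π x)) with hlamdef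
  have hlam : (FreeGroup.lift (id : G → G)).comp lam = p := by
    apply FreeGroup.ext_hom
    intro a
    simp [hlamdef, FreeGroup.lift_apply_of, hεof, hp]
  set sec : G → Gu := Function.surjInv hπ with hsecdef
  have hsec : ∀ g, π (sec g) = g := fun g => Function.surjInv_eq hπ g
  set mu : FreeGroup G →* FreeGroup Gu :=
    FreeGroup.lift (fun g : G => FreeGroup.of (sec g)) with hmudef
  have hmu : p.comp mu = FreeGroup.lift (id : G → G) := by
    apply FreeGroup.ext_hom
    intro a
    simp [hmudef, FreeGroup.lift_apply_of, hεof, hsec, hp]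
  have hlamS : ∀ {x : FreeGroup Gu}, x ∈ presKernel Gu → lam x ∈ presKernel G := by
    intro x hx
    show (FreeGroup.lift (id : G → G)) (lam x) = 1
    have h1 := congrArg (fun f : FreeGroup Gu →* G => f x) hlam
    simp only [MonoidHom.comp_apply] at h1
    rw [h1]
    show π (ε x) = 1
    rw [hmemS.mp hx]
    simp
  have hlamC : ∀ {x : FreeGroup Gu}, x ∈ commutator (FreeGroup Gu) →
      lam x ∈ commutator (FreeGroup G) := by
    intro x hx
    have h1 : Subgroup.map lam (commutator (FreeGroup Gu)) ≤ commutator (FreeGroup G) := by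
      rw [commutator_def, Subgroup.map_commutator]
      exact Subgroup.commutator_mono le_top le_top
    exact h1 (Subgroup.mem_map_of_mem _ hx)
  have hlamD : ∀ {x : FreeGroup Gu}, x ∈ D →
      lam x ∈ ⁅(⊤ : Subgroup (FreeGroup G)), presKernel G⁆ := by
    intro x hx
    have h1 : Subgroup.map lam D ≤ ⁅(⊤ : Subgroup (FreeGroup G)), presKernel G⁆ := by
      rw [hD, Subgroup.map_commutator]
      refine Subgroup.commutator_mono le_top ?_
      rintro _ ⟨y, hy, rfl⟩
      exact hlamS hy
    exact h1 (Subgroup.mem_map_of_mem _ hx)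
  have hres : ∀ x : ↥(presKernel Gu ⊓ commutator (FreeGroup Gu)),
      (lam.comp (presKernel Gu ⊓ commutator (FreeGroup Gu)).subtype) x
        ∈ presKernel G ⊓ commutator (FreeGroup G) :=
    fun x => ⟨hlamS x.2.1, hlamC x.2.2⟩
  set f0 : ↥(presKernel Gu ⊓ commutator (FreeGroup Gu)) →*
      ↥(presKernel G ⊓ commutator (FreeGroup G)) :=
    MonoidHom.codRestrict (lam.comp (presKernel Gu ⊓ commutator (FreeGroup Gu)).subtype)
      (presKernel G ⊓ commutator (FreeGroup G)) hres with hf0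
  haveI hN1 : ((⁅(⊤ : Subgroup (FreeGroup Gu)), presKernel Gu⁆).subgroupOf
      (presKernel Gu ⊓ commutator (FreeGroup Gu))).Normal := Subgroup.normal_subgroupOf
  haveI hN2 : ((⁅(⊤ : Subgroup (FreeGroup G)), presKernel G⁆).subgroupOf
      (presKernel G ⊓ commutator (FreeGroup G))).Normal := Subgroup.normal_subgroupOf
  have hcond : (⁅(⊤ : Subgroup (FreeGroup Gu)), presKernel Gu⁆).subgroupOf
      (presKernel Gu ⊓ commutator (FreeGroup Gu)) ≤
      Subgroup.comap f0
        ((⁅(⊤ : Subgroup (FreeGroup G)), presKernel G⁆).subgroupOf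
          (presKernel G ⊓ commutator (FreeGroup G))) := by
    intro x hx
    rw [Subgroup.mem_comap, Subgroup.mem_subgroupOf]
    exact hlamD (Subgroup.mem_subgroupOf.mp hx)
  set Φ := QuotientGroup.map
      ((⁅(⊤ : Subgroup (FreeGroup Gu)), presKernel Gu⁆).subgroupOf
        (presKernel Gu ⊓ commutator (FreeGroup Gu)))
      ((⁅(⊤ : Subgroup (FreeGroup G)), presKernel G⁆).subgroupOf
        (presKernel G ⊓ commutator (FreeGroup G)))
      f0 hcond with hΦ
  -- the embedding of H2 Gu into FreeGroup Gu ⧸ D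
  have hψker : (⁅(⊤ : Subgroup (FreeGroup Gu)), presKernel Gu⁆).subgroupOf
      (presKernel Gu ⊓ commutator (FreeGroup Gu)) ≤
      ((QuotientGroup.mk' D).comp
        (presKernel Gu ⊓ commutator (FreeGroup Gu)).subtype).ker := by
    intro x hx
    rw [MonoidHom.mem_ker, MonoidHom.comp_apply]
    exact (QuotientGroup.eq_one_iff _).mpr (Subgroup.mem_subgroupOf.mp hx)
  set ψ := QuotientGroup.lift
      ((⁅(⊤ : Subgroup (FreeGroup Gu)), presKernel Gu⁆).subgroupOf
        (presKernel Gu ⊓ commutator (FreeGroup Gu)))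
      ((QuotientGroup.mk' D).comp (presKernel Gu ⊓ commutator (FreeGroup Gu)).subtype)
      hψker with hψ
  have hψinj : Function.Injective ψ := by
    rw [← MonoidHom.ker_eq_bot_iff, Subgroup.eq_bot_iff_forall]
    intro q hq
    induction q using QuotientGroup.induction_on with
    | _ x =>
      rw [MonoidHom.mem_ker] at hq
      have h1 : (QuotientGroup.mk x.1 : FreeGroup Gu ⧸ D) = 1 := hq
      have h2 : x.1 ∈ D := (QuotientGroup.eq_one_iff _).mp h1
      exact (QuotientGroup.eq_one_iff _).mpr (Subgroup.mem_subgroupOf.mpr h2)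
  have hkerL : ∀ q, q ∈ Φ.ker → ψ q ∈ L := by
    intro q
    induction q using QuotientGroup.induction_on with
    | _ x =>
      intro hqker
      rw [MonoidHom.mem_ker] at hqker
      have h1 : (QuotientGroup.mk (f0 x) :
          ↥(presKernel G ⊓ commutator (FreeGroup G)) ⧸
            ((⁅(⊤ : Subgroup (FreeGroup G)), presKernel G⁆).subgroupOf
              (presKernel G ⊓ commutator (FreeGroup G)))) = 1 := hqker
      have h2 : lam x.1 ∈ ⁅(⊤ : Subgroup (FreeGroup G)), presKernel G⁆ :=
        Subgroup.mem_subgroupOf.mp ((QuotientGroup.eq_one_iff _).mp h1)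
      have h4 : p.comp (mu.comp lam) = p.comp (MonoidHom.id (FreeGroup Gu)) := by
        rw [← MonoidHom.comp_assoc, hmu, hlam, MonoidHom.comp_id]
      have h5 : (mu.comp lam) x.1 * ((MonoidHom.id (FreeGroup Gu)) x.1)⁻¹
          ∈ ⁅(⊤ : Subgroup (FreeGroup Gu)), p.ker⁆ :=
        aux_two_lifts p (mu.comp lam) (MonoidHom.id (FreeGroup Gu)) h4 x.2.2
      have h6 : mu (lam x.1) ∈ ⁅(⊤ : Subgroup (FreeGroup Gu)), p.ker⁆ := by
        have h7 : Subgroup.map mu ⁅(⊤ : Subgroup (FreeGroup G)), presKernel G⁆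
            ≤ ⁅(⊤ : Subgroup (FreeGroup Gu)), p.ker⁆ := by
          rw [Subgroup.map_commutator]
          refine Subgroup.commutator_mono le_top ?_
          rintro _ ⟨y, hy, rfl⟩
          have h8 := congrArg (fun f : FreeGroup G →* G => f y) hmu
          simp only [MonoidHom.comp_apply] at h8
          show p (mu y) = 1
          rw [h8]
          exact hy
        exact h7 (Subgroup.mem_map_of_mem _ h2)
      have h8 : x.1 ∈ ⁅(⊤ : Subgroup (FreeGroup Gu)), p.ker⁆ := by
        have h9 : x.1 = ((mu.comp lam) x.1 * ((MonoidHom.id (FreeGroup Gu)) x.1)⁻¹)⁻¹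
            * (mu (lam x.1)) := by
          simp only [MonoidHom.comp_apply, MonoidHom.id_apply]
          group
        rw [h9]
        exact Subgroup.mul_mem _ (Subgroup.inv_mem _ h5) h6
      have hmk_top : Subgroup.map (QuotientGroup.mk' D) ⊤ = ⊤ := by
        rw [← MonoidHom.range_eq_map]
        exact MonoidHom.range_eq_top_of_surjective _ (QuotientGroup.mk'_surjective D)
      have h10 : Subgroup.map (QuotientGroup.mk' D)
          ⁅(⊤ : Subgroup (FreeGroup Gu)), p.ker⁆ ≤ L := by
        rw [Subgroup.map_commutator, hmk_top]
        exact hLle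
      exact h10 (Subgroup.mem_map_of_mem _ h8)
  haveI hKfin : Finite ↥Φ.ker := by
    have hinj : Function.Injective
        (fun c : ↥Φ.ker => (⟨ψ c.1, hkerL c.1 c.2⟩ : ↥L)) := by
      intro c₁ c₂ h
      apply Subtype.ext
      apply hψinj
      exact congrArg Subtype.val h
    exact Finite.of_injective _ hinj
  haveI hH2G : Finite (↥(presKernel G ⊓ commutator (FreeGroup G)) ⧸
      ((⁅(⊤ : Subgroup (FreeGroup G)), presKernel G⁆).subgroupOf
        (presKernel G ⊓ commutator (FreeGroup G)))) := hH2
  haveI hQfin : Finite ((↥(presKernel Gu ⊓ commutator (FreeGroup Gu)) ⧸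
      ((⁅(⊤ : Subgroup (FreeGroup Gu)), presKernel Gu⁆).subgroupOf
        (presKernel Gu ⊓ commutator (FreeGroup Gu)))) ⧸ Φ.ker) :=
    Finite.of_injective (QuotientGroup.kerLift Φ) (QuotientGroup.kerLift_injective Φ)
  show Finite (↥(presKernel Gu ⊓ commutator (FreeGroup Gu)) ⧸
      ((⁅(⊤ : Subgroup (FreeGroup Gu)), presKernel Gu⁆).subgroupOf
        (presKernel Gu ⊓ commutator (FreeGroup Gu))))
  exact Finite.of_equiv _ (Subgroup.groupEquivQuotientProdSubgroup (s := Φ.ker)).symm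
end

section
/- Let 1 → A → G → H → 1 be a central extension of groups where A is finitely generated and H is finite. Then either the nonabelian tensor square G ⊗ G has a nontrivial torsion element, or G ⊗ G is a Bieberbach group of dimension k with k ≤ 2·rank(A ⊗_ℤ G_ab). -/
universe u v w
open scoped commutatorElement
/-- The defining relators of the nonabelian tensor square `G ⊗ G`. -/
def tensorSquareRels (G : Type u) [Group G] : Set (FreeGroup (G × G)) :=
  {r | ∃ g h k : G,
    r = FreeGroup.of (g * h, k) *
        (FreeGroup.of (g * h * g⁻¹, g * k * g⁻¹) * FreeGroup.of (g, k))⁻¹ ∨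
    r = FreeGroup.of (g, h * k) *
        (FreeGroup.of (g, h) * FreeGroup.of (h * g * h⁻¹, h * k * h⁻¹))⁻¹}

/-- The nonabelian tensor square `G ⊗ G`. -/
def TensorSquare (G : Type u) [Group G] : Type u :=
  PresentedGroup (tensorSquareRels G)

instance (G : Type u) [Group G] : Group (TensorSquare G) := by
  unfold TensorSquare; infer_instance

/-- The generator `g ⊗ h` of the nonabelian tensor square. -/
def tmul {G : Type u} [Group G] (g h : G) : TensorSquare G :=
  PresentedGroup.of (g, h)

/-- `Γ` is a Bieberbach group of dimension `k`: it is torsion-free and contains a finitely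
generated maximal abelian torsion-free subgroup of finite index, free abelian of rank `k`. -/
def IsBieberbachOfDim (Γ : Type u) [Group Γ] (k : ℕ) : Prop :=
  (∀ x : Γ, IsOfFinOrder x → x = 1) ∧
  ∃ L : Subgroup Γ, L.FiniteIndex ∧
    (∀ L' : Subgroup Γ, IsMulCommutative L' → L ≤ L' → L' = L) ∧
    Nonempty (L ≃* Multiplicative (Fin k → ℤ))


namespace TensorSquareAux

variable {G : Type u} [Group G]

lemma tmul_congr {a a' b b' : G} (h1 : a = a') (h2 : b = b') : tmul a b = tmul a' b' := by
  subst h1; subst h2; rfl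

lemma rel_one : ∀ r ∈ tensorSquareRels G,
    (PresentedGroup.mk (tensorSquareRels G) r : TensorSquare G) = 1 := fun _ hr =>
  (QuotientGroup.eq_one_iff _).mpr (Subgroup.subset_normalClosure hr)

lemma tmul_rel1 (g h k : G) :
    tmul (g * h) k = tmul (g * h * g⁻¹) (g * k * g⁻¹) * tmul g k := by
  have h1 := rel_one _ ⟨g, h, k, Or.inl rfl⟩
  rw [map_mul, map_inv, mul_inv_eq_one, map_mul] at h1
  exact h1

lemma tmul_rel2 (g h k : G) :
    tmul g (h * k) = tmul g h * tmul (h * g * h⁻¹) (h * k * h⁻¹) := by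
  have h1 := rel_one _ ⟨g, h, k, Or.inr rfl⟩
  rw [map_mul, map_inv, mul_inv_eq_one, map_mul] at h1
  exact h1

lemma hom_ext {T : Type*} [Group T] {f g : TensorSquare G →* T}
    (h : ∀ x y : G, f (tmul x y) = g (tmul x y)) : f = g :=
  PresentedGroup.ext (fun ⟨x, y⟩ => h x y)

/-- The commutator map `κ : G ⊗ G →* G`. -/
def kappa : TensorSquare G →* G :=
  PresentedGroup.toGroup (f := fun p : G × G => p.1 * p.2 * p.1⁻¹ * p.2⁻¹) (by
    rintro r ⟨g, h, k, rfl | rfl⟩ <;>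
      simp only [map_mul, map_inv, FreeGroup.lift_apply_of] <;> group)

@[simp] lemma kappa_tmul (g h : G) : kappa (tmul g h) = g * h * g⁻¹ * h⁻¹ :=
  PresentedGroup.toGroup.of _

/-- The conjugation action of `G` on `G ⊗ G`. -/
def phi (w : G) : TensorSquare G →* TensorSquare G :=
  PresentedGroup.toGroup (f := fun p : G × G => tmul (w * p.1 * w⁻¹) (w * p.2 * w⁻¹)) (by
    rintro r ⟨g, h, k, rfl | rfl⟩ <;>
        simp only [map_mul, map_inv, FreeGroup.lift_apply_of] <;> rw [mul_inv_eq_one]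
    · calc tmul (w * (g * h) * w⁻¹) (w * k * w⁻¹)
          = tmul ((w * g * w⁻¹) * (w * h * w⁻¹)) (w * k * w⁻¹) := tmul_congr (by group) rfl
        _ = tmul ((w * g * w⁻¹) * (w * h * w⁻¹) * (w * g * w⁻¹)⁻¹)
              ((w * g * w⁻¹) * (w * k * w⁻¹) * (w * g * w⁻¹)⁻¹) * tmul (w * g * w⁻¹) (w * k * w⁻¹) :=
            tmul_rel1 _ _ _
        _ = tmul (w * (g * h * g⁻¹) * w⁻¹) (w * (g * k * g⁻¹) * w⁻¹) *
              tmul (w * g * w⁻¹) (w * k * w⁻¹) := by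
            rw [tmul_congr (show (w * g * w⁻¹) * (w * h * w⁻¹) * (w * g * w⁻¹)⁻¹ =
                w * (g * h * g⁻¹) * w⁻¹ by group)
              (show (w * g * w⁻¹) * (w * k * w⁻¹) * (w * g * w⁻¹)⁻¹ =
                w * (g * k * g⁻¹) * w⁻¹ by group)]
    · calc tmul (w * g * w⁻¹) (w * (h * k) * w⁻¹)
          = tmul (w * g * w⁻¹) ((w * h * w⁻¹) * (w * k * w⁻¹)) := tmul_congr rfl (by group)
        _ = tmul (w * g * w⁻¹) (w * h * w⁻¹) *
              tmul ((w * h * w⁻¹) * (w * g * w⁻¹) * (w * h * w⁻¹)⁻¹)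
                ((w * h * w⁻¹) * (w * k * w⁻¹) * (w * h * w⁻¹)⁻¹) := tmul_rel2 _ _ _
        _ = tmul (w * g * w⁻¹) (w * h * w⁻¹) *
              tmul (w * (h * g * h⁻¹) * w⁻¹) (w * (h * k * h⁻¹) * w⁻¹) := by
            rw [tmul_congr (show (w * h * w⁻¹) * (w * g * w⁻¹) * (w * h * w⁻¹)⁻¹ =
                w * (h * g * h⁻¹) * w⁻¹ by group)
              (show (w * h * w⁻¹) * (w * k * w⁻¹) * (w * h * w⁻¹)⁻¹ =
                w * (h * k * h⁻¹) * w⁻¹ by group)])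

@[simp] lemma phi_tmul (w x y : G) :
    phi w (tmul x y) = tmul (w * x * w⁻¹) (w * y * w⁻¹) :=
  PresentedGroup.toGroup.of _

lemma phi_phi (v w : G) (z : TensorSquare G) : phi v (phi w z) = phi (v * w) z := by
  have : (phi v).comp (phi w) = (phi (v * w) : TensorSquare G →* TensorSquare G) := by
    apply hom_ext
    intro x y
    simp only [MonoidHom.comp_apply, phi_tmul]
    exact tmul_congr (by group) (by group)
  exact DFunLike.congr_fun this z

lemma phi_one (z : TensorSquare G) : phi 1 z = z := by
  have : (phi 1 : TensorSquare G →* TensorSquare G) = MonoidHom.id _ := by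
    apply hom_ext
    intro x y
    simp only [MonoidHom.id_apply, phi_tmul]
    exact tmul_congr (by group) (by group)
  exact DFunLike.congr_fun this z

end TensorSquareAux

namespace TensorSquareAux

variable {G : Type u} [Group G]

lemma rel1' (g h k : G) : tmul (g * h) k = phi g (tmul h k) * tmul g k := by
  rw [phi_tmul]; exact tmul_rel1 g h k

lemma rel2' (g h k : G) : tmul g (h * k) = tmul g h * phi h (tmul g k) := by
  rw [phi_tmul]; exact tmul_rel2 g h k

/-- Key commutation: `⟨g,k⟩ · φ(kg)(z) = φ(gk)(z) · ⟨g,k⟩`, first for generators. -/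
lemma comm_gen (g k h l : G) :
    tmul g k * phi (k * g) (tmul h l) = phi (g * k) (tmul h l) * tmul g k := by
  have wayA : tmul (g * h) (k * l) =
      phi g (tmul h k) * (phi (g * k) (tmul h l) * (tmul g k * phi k (tmul g l))) := by
    rw [rel1' g h (k * l), rel2' h k l, rel2' g k l, map_mul, phi_phi]
    group
  have wayB : tmul (g * h) (k * l) =
      phi g (tmul h k) * (tmul g k * (phi (k * g) (tmul h l) * phi k (tmul g l))) := by
    rw [rel2' (g * h) k l, rel1' g h k, rel1' g h l, map_mul, phi_phi]
    group
  have h1 := mul_left_cancel (wayA.symm.trans wayB)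
  rw [← mul_assoc, ← mul_assoc] at h1
  exact (mul_right_cancel h1).symm

lemma comm_all (g k : G) (z : TensorSquare G) :
    tmul g k * phi (k * g) z = phi (g * k) z * tmul g k := by
  have key : (MulAut.conj (tmul g k)).toMonoidHom.comp (phi (k * g)) =
      (phi (g * k) : TensorSquare G →* TensorSquare G) := by
    apply hom_ext
    intro x y
    simp only [MonoidHom.comp_apply, MulEquiv.coe_toMonoidHom, MulAut.conj_apply]
    calc tmul g k * phi (k * g) (tmul x y) * (tmul g k)⁻¹
        = phi (g * k) (tmul x y) * tmul g k * (tmul g k)⁻¹ := by rw [comm_gen g k x y]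
      _ = phi (g * k) (tmul x y) := by group
  have h2 := DFunLike.congr_fun key z
  simp only [MonoidHom.comp_apply, MulEquiv.coe_toMonoidHom, MulAut.conj_apply] at h2
  calc tmul g k * phi (k * g) z
      = tmul g k * phi (k * g) z * (tmul g k)⁻¹ * tmul g k := by group
    _ = phi (g * k) z * tmul g k := by rw [h2]

/-- Conjugation in `G ⊗ G` is the action of `κ`. -/
lemma conj_eq (m z : TensorSquare G) : m * z * m⁻¹ = phi (kappa m) z := by
  revert z
  let S : Subgroup (TensorSquare G) :=
    { carrier := {m | ∀ z, m * z * m⁻¹ = phi (kappa m) z}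
      one_mem' := by intro z; simp [phi_one]
      mul_mem' := by
        intro a b ha hb z
        calc a * b * z * (a * b)⁻¹ = a * (b * z * b⁻¹) * a⁻¹ := by group
          _ = a * phi (kappa b) z * a⁻¹ := by rw [hb z]
          _ = phi (kappa a) (phi (kappa b) z) := ha _
          _ = phi (kappa (a * b)) z := by rw [phi_phi, map_mul]
      inv_mem' := by
        intro a ha z
        have h1 := ha (a⁻¹ * z * a)
        have h2 : a * (a⁻¹ * z * a) * a⁻¹ = z := by group
        rw [h2] at h1
        have h3 : phi (kappa a)⁻¹ z = a⁻¹ * z * a := by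
          conv_lhs => rw [h1]
          rw [phi_phi, inv_mul_cancel, phi_one]
        rw [map_inv]
        calc a⁻¹ * z * a⁻¹⁻¹ = a⁻¹ * z * a := by group
          _ = phi (kappa a)⁻¹ z := h3.symm }
  have hm : ∀ m : TensorSquare G, m ∈ S := by
    intro m
    apply PresentedGroup.generated_by
    rintro ⟨x, y⟩ z
    show tmul x y * z * (tmul x y)⁻¹ = phi (kappa (tmul x y)) z
    have h1 := comm_all x y (phi (y * x)⁻¹ z)
    rw [phi_phi, mul_inv_cancel, phi_one, phi_phi] at h1
    have h2 : kappa (tmul x y) = (x * y) * (y * x)⁻¹ := by rw [kappa_tmul]; group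
    rw [h2]
    calc tmul x y * z * (tmul x y)⁻¹
        = phi (x * y * (y * x)⁻¹) z * tmul x y * (tmul x y)⁻¹ := by rw [← h1]
      _ = phi (x * y * (y * x)⁻¹) z := by group
  exact hm m

/-- `G ⊗ G` is generated by the elementary tensors. -/
lemma mem_closure_tmul (z : TensorSquare G) :
    z ∈ Subgroup.closure (Set.range fun p : G × G => tmul p.1 p.2) := by
  apply PresentedGroup.generated_by
  rintro ⟨x, y⟩
  exact Subgroup.subset_closure ⟨(x, y), rfl⟩

end TensorSquareAux

namespace TensorSquareAux

variable {G : Type u} [Group G]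

lemma kappa_range : (kappa : TensorSquare G →* G).range = _root_.commutator G := by
  apply le_antisymm
  · rintro x ⟨z, rfl⟩
    have hz := mem_closure_tmul z
    have hle : Subgroup.closure (Set.range fun p : G × G => tmul p.1 p.2) ≤
        Subgroup.comap kappa (_root_.commutator G) := by
      rw [Subgroup.closure_le]
      rintro _ ⟨⟨x, y⟩, rfl⟩
      show kappa (tmul x y) ∈ _root_.commutator G
      rw [kappa_tmul, show x * y * x⁻¹ * y⁻¹ = ⁅x, y⁆ from rfl]
      exact Subgroup.commutator_mem_commutator (Subgroup.mem_top x) (Subgroup.mem_top y)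
    exact hle hz
  · rw [commutator_eq_closure, Subgroup.closure_le]
    rintro _ ⟨g, h, rfl⟩
    exact ⟨tmul g h, by rw [kappa_tmul]; rfl⟩

lemma commutator_central {a b z w : G} (hz : z ∈ Subgroup.center G)
    (hw : w ∈ Subgroup.center G) : ⁅a * z, b * w⁆ = ⁅a, b⁆ := by
  have hzc : ∀ x : G, z * x = x * z := fun x => (Subgroup.mem_center_iff.mp hz x).symm
  have hwc : ∀ x : G, w * x = x * w := fun x => (Subgroup.mem_center_iff.mp hw x).symm
  have h1 : ⁅a * z, b * w⁆ = a * (z * (b * w) * z⁻¹) * a⁻¹ * (b * w)⁻¹ := by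
    show (a * z) * (b * w) * (a * z)⁻¹ * (b * w)⁻¹ = _
    group
  have h2 : z * (b * w) * z⁻¹ = b * w := by rw [hzc (b * w)]; group
  have h3 : a * (b * w) * a⁻¹ * (b * w)⁻¹ = a * b * (w * a⁻¹ * w⁻¹) * b⁻¹ := by group
  have h4 : w * a⁻¹ * w⁻¹ = a⁻¹ := by rw [hwc a⁻¹]; group
  rw [h1, h2, h3, h4]; rfl

/-- If the center has finite index, the set of commutators is finite. -/
lemma finite_commutatorSet_of_center [Subgroup.FiniteIndex (Subgroup.center G)] :
    Finite (commutatorSet G) := by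
  set Z := Subgroup.center G
  have : Finite (G ⧸ Z) := Z.finite_quotient_of_finiteIndex
  apply Set.Finite.to_subtype
  apply Set.Finite.subset (Set.finite_range
    (fun p : (G ⧸ Z) × (G ⧸ Z) => ⁅Quotient.out p.1, Quotient.out p.2⁆))
  rintro _ ⟨g, h, rfl⟩
  refine ⟨((g : G ⧸ Z), (h : G ⧸ Z)), ?_⟩
  set a := Quotient.out (g : G ⧸ Z) with ha
  set b := Quotient.out (h : G ⧸ Z) with hb
  have hg : a⁻¹ * g ∈ Z := by rw [← QuotientGroup.eq]; exact QuotientGroup.out_eq' _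
  have hh : b⁻¹ * h ∈ Z := by rw [← QuotientGroup.eq]; exact QuotientGroup.out_eq' _
  have hg' : g = a * (a⁻¹ * g) := by group
  have hh' : h = b * (b⁻¹ * h) := by group
  show ⁅a, b⁆ = ⁅g, h⁆
  conv_rhs => rw [hg', hh']
  rw [commutator_central hg hh]

end TensorSquareAux


namespace TensorSquareAux

theorem tf_case
    (A : Type v) (G : Type u) (H : Type w) [CommGroup A] [Group G] [Group H]
    (i : A →* G) (π : G →* H)
    (hi : Function.Injective i) (hπ : Function.Surjective π)
    (hker : π.ker = i.range) (hcent : i.range ≤ Subgroup.center G)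
    (hA : Group.FG A) (hH : Finite H)
    (TF : ∀ x : TensorSquare G, IsOfFinOrder x → x = 1) :
    ∃ k : ℕ, IsBieberbachOfDim (TensorSquare G) k ∧
      k ≤ 2 * Module.finrank ℤ
        (TensorProduct ℤ (Additive A) (Additive (Abelianization G))) := by
  classical
  -- ## Step 1 : G is finitely generated
  have hGfg : Group.FG G := by
    obtain ⟨SA, hSAc, hSAf⟩ := Group.fg_iff.mp hA
    let r : H → G := fun h => (hπ h).choose
    have hr : ∀ h, π (r h) = h := fun h => (hπ h).choose_spec
    refine Group.fg_iff.mpr ⟨(i '' SA) ∪ Set.range r, ?_, ?_⟩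
    · rw [eq_top_iff]
      intro g _
      have h1 : π (g * (r (π g))⁻¹) = 1 := by
        rw [map_mul, map_inv, hr]; group
      have h2 : g * (r (π g))⁻¹ ∈ i.range := by rw [← hker]; exact h1
      obtain ⟨a, ha⟩ := h2
      have hmem : i a ∈ Subgroup.closure (i '' SA) := by
        rw [← MonoidHom.map_closure, hSAc]
        exact Subgroup.mem_map_of_mem i trivial
      have hmem2 : i a ∈ Subgroup.closure ((i '' SA) ∪ Set.range r) :=
        Subgroup.closure_mono Set.subset_union_left hmem
      have hmem3 : r (π g) ∈ Subgroup.closure ((i '' SA) ∪ Set.range r) :=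
        Subgroup.subset_closure (Or.inr ⟨π g, rfl⟩)
      have : g = i a * r (π g) := by rw [ha]; group
      rw [this]
      exact Subgroup.mul_mem _ hmem2 hmem3
    · exact (hSAf.image i).union (Set.finite_range r)
  -- ## Step 2 : the center of G has finite index, hence G' is finite
  have hqfin : Finite (G ⧸ π.ker) :=
    Finite.of_equiv H (QuotientGroup.quotientKerEquivOfSurjective π hπ).symm.toEquiv
  haveI : π.ker.FiniteIndex := by
    haveI := hqfin; exact Subgroup.finiteIndex_of_finite_quotient
  haveI : (Subgroup.center G).FiniteIndex :=
    Subgroup.finiteIndex_of_le (fun x hx => hcent (hker ▸ hx))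
  haveI : Finite (commutatorSet G) := finite_commutatorSet_of_center
  haveI hGcf : Finite (_root_.commutator G) := inferInstance
  -- ## Step 3 : the center of G ⊗ G has finite index
  have hkerle : (kappa : TensorSquare G →* G).ker ≤ Subgroup.center (TensorSquare G) := by
    intro m hm
    rw [Subgroup.mem_center_iff]
    intro z
    have h1 := conj_eq m z
    rw [MonoidHom.mem_ker.mp hm, phi_one] at h1
    calc z * m = m * z * m⁻¹ * m := by rw [h1]
      _ = m * z := by group
  haveI : Finite ((kappa : TensorSquare G →* G).range) := by
    rw [kappa_range]; exact hGcf
  have hqfin2 : Finite (TensorSquare G ⧸ (kappa : TensorSquare G →* G).ker) :=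
    Finite.of_equiv _ (QuotientGroup.quotientKerEquivRange _).symm.toEquiv
  haveI : (kappa : TensorSquare G →* G).ker.FiniteIndex := by
    haveI := hqfin2; exact Subgroup.finiteIndex_of_finite_quotient
  haveI : (Subgroup.center (TensorSquare G)).FiniteIndex :=
    Subgroup.finiteIndex_of_le hkerle
  haveI : Finite (commutatorSet (TensorSquare G)) := finite_commutatorSet_of_center
  haveI hMcf : Finite (_root_.commutator (TensorSquare G)) := inferInstance
  -- ## Step 4 : G ⊗ G is abelian
  have pow_card_sub : ∀ (K : Subgroup (TensorSquare G)) (_ : Finite K) (c : TensorSquare G),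
      c ∈ K → c ^ Nat.card K = 1 ∧ 0 < Nat.card K := by
    intro K hK c hc
    haveI := hK
    refine ⟨?_, Nat.card_pos⟩
    have h1 := pow_card_eq_one' (G := K) (x := ⟨c, hc⟩)
    have h2 := congrArg Subtype.val h1
    rw [SubgroupClass.coe_pow] at h2
    exact h2
  have hcomm : ∀ a b : TensorSquare G, a * b = b * a := by
    intro a b
    have hc : ⁅a, b⁆ ∈ _root_.commutator (TensorSquare G) :=
      Subgroup.commutator_mem_commutator (Subgroup.mem_top a) (Subgroup.mem_top b)
    obtain ⟨hpow, hpos⟩ := pow_card_sub _ hMcf _ hc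
    have := TF _ (isOfFinOrder_iff_pow_eq_one.mpr ⟨_, hpos, hpow⟩)
    exact commutatorElement_eq_one_iff_mul_comm.mp this
  -- ## Step 5 : commutators of G act trivially on G ⊗ G
  have phi_comm_triv : ∀ (g h : G) (z : TensorSquare G), phi ⁅g, h⁆ z = z := by
    intro g h z
    have h1 := conj_eq (tmul g h) z
    rw [hcomm (tmul g h) z] at h1
    have h2 : z = phi (kappa (tmul g h)) z := by
      rw [← h1]; group
    rw [kappa_tmul] at h2
    exact h2.symm
  -- ## Step 6 : ⟨⁅x,g⁆, y⟩ = 1 = ⟨y, ⁅x,g⁆⟩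
  have tmul_one_right : ∀ y : G, tmul y 1 = 1 := by
    intro y
    have h := tmul_rel2 y 1 1
    simp only [mul_one, one_mul, inv_one] at h
    exact (mul_eq_left.mp h.symm)
  have tmul_one_left : ∀ y : G, tmul 1 y = 1 := by
    intro y
    have h := tmul_rel1 1 1 y
    simp only [mul_one, one_mul, inv_one] at h
    exact (mul_eq_left.mp h.symm)
  have tmul_comm_right : ∀ (y x g : G), tmul y ⁅x, g⁆ = 1 := by
    intro y x g
    set c := ⁅x, g⁆ with hcdef
    have hφ : ∀ z, phi c z = z := phi_comm_triv x g
    have claim : ∀ j : ℕ, tmul y (c ^ (j + 1)) = tmul y c ^ (j + 1) := by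
      intro j
      induction j with
      | zero => simp
      | succ j ih =>
        have : c ^ (j + 1 + 1) = c * c ^ (j + 1) := pow_succ' c (j + 1)
        rw [this, tmul_rel2 y c (c ^ (j+1)), ← phi_tmul, hφ, ih]
        exact (pow_succ' (tmul y c) (j+1)).symm
    have hcmem : c ∈ _root_.commutator G :=
      Subgroup.commutator_mem_commutator (Subgroup.mem_top x) (Subgroup.mem_top g)
    have hpowc : c ^ Nat.card (_root_.commutator G) = 1 := by
      have h1 := pow_card_eq_one' (G := _root_.commutator G) (x := ⟨c, hcmem⟩)
      have h2 := congrArg Subtype.val h1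
      rw [SubgroupClass.coe_pow] at h2
      exact h2
    have hposc : 0 < Nat.card (_root_.commutator G) := Nat.card_pos
    obtain ⟨m, hm⟩ := Nat.exists_eq_add_of_lt hposc
    have h3 : tmul y c ^ (m + 1) = 1 := by
      rw [← claim m, show m + 1 = Nat.card (_root_.commutator G) from by omega, hpowc,
        tmul_one_right]
    exact TF _ (isOfFinOrder_iff_pow_eq_one.mpr ⟨m + 1, Nat.succ_pos m, h3⟩)
  have tmul_comm_left : ∀ (y x g : G), tmul ⁅x, g⁆ y = 1 := by
    intro y x g
    set c := ⁅x, g⁆ with hcdef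
    have hφ : ∀ z, phi c z = z := phi_comm_triv x g
    have claim : ∀ j : ℕ, tmul (c ^ (j + 1)) y = tmul c y ^ (j + 1) := by
      intro j
      induction j with
      | zero => simp
      | succ j ih =>
        have : c ^ (j + 1 + 1) = c * c ^ (j + 1) := pow_succ' c (j + 1)
        rw [this, tmul_rel1 c (c ^ (j+1)) y, ← phi_tmul, hφ, ih]
        exact (pow_succ (tmul c y) (j+1)).symm
    have hcmem : c ∈ _root_.commutator G :=
      Subgroup.commutator_mem_commutator (Subgroup.mem_top x) (Subgroup.mem_top g)
    have hpowc : c ^ Nat.card (_root_.commutator G) = 1 := by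
      have h1 := pow_card_eq_one' (G := _root_.commutator G) (x := ⟨c, hcmem⟩)
      have h2 := congrArg Subtype.val h1
      rw [SubgroupClass.coe_pow] at h2
      exact h2
    have hposc : 0 < Nat.card (_root_.commutator G) := Nat.card_pos
    obtain ⟨m, hm⟩ := Nat.exists_eq_add_of_lt hposc
    have h3 : tmul c y ^ (m + 1) = 1 := by
      rw [← claim m, show m + 1 = Nat.card (_root_.commutator G) from by omega, hpowc,
        tmul_one_left]
    exact TF _ (isOfFinOrder_iff_pow_eq_one.mpr ⟨m + 1, Nat.succ_pos m, h3⟩)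
  -- ## Step 7 : the action of G on G ⊗ G is trivial
  have phi_triv : ∀ (w : G) (z : TensorSquare G), phi w z = z := by
    intro w
    have : (phi w : TensorSquare G →* TensorSquare G) = MonoidHom.id _ := by
      apply hom_ext
      intro g h
      simp only [phi_tmul, MonoidHom.id_apply]
      have e1 : w * g * w⁻¹ = ⁅w, g⁆ * g := by group
      have e2 : w * h * w⁻¹ = ⁅w, h⁆ * h := by group
      rw [e1, e2, tmul_rel1, ← phi_tmul, phi_comm_triv, tmul_comm_left, mul_one,
        tmul_rel2, ← phi_tmul, phi_comm_triv, tmul_comm_right, one_mul]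
    intro z
    exact DFunLike.congr_fun this z
  -- ## Step 8 : bilinearity
  have tmul_mul_left : ∀ g h k : G, tmul (g * h) k = tmul g k * tmul h k := by
    intro g h k; rw [rel1', phi_triv, hcomm]
  have tmul_mul_right : ∀ g h k : G, tmul g (h * k) = tmul g h * tmul g k := by
    intro g h k; rw [rel2', phi_triv]
  have tmul_inv_left : ∀ g k : G, tmul g⁻¹ k = (tmul g k)⁻¹ := by
    intro g k
    have h1 : tmul (g⁻¹ * g) k = tmul g⁻¹ k * tmul g k := tmul_mul_left _ _ _
    rw [inv_mul_cancel, tmul_one_left] at h1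
    exact eq_inv_of_mul_eq_one_left h1.symm
  have tmul_inv_right : ∀ g k : G, tmul g k⁻¹ = (tmul g k)⁻¹ := by
    intro g k
    have h1 : tmul g (k⁻¹ * k) = tmul g k⁻¹ * tmul g k := tmul_mul_right _ _ _
    rw [inv_mul_cancel, tmul_one_right] at h1
    exact eq_inv_of_mul_eq_one_left h1.symm
  -- ## Step 9 : G ⊗ G is finitely generated
  have hMfg : Group.FG (TensorSquare G) := by
    obtain ⟨S, hSc, hSf⟩ := Group.fg_iff.mp hGfg
    refine Group.fg_iff.mpr
      ⟨(fun p : G × G => tmul p.1 p.2) '' (S ×ˢ S), ?_, (hSf.prod hSf).image _⟩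
    rw [eq_top_iff]
    intro z _
    have hz := mem_closure_tmul z
    set K := Subgroup.closure ((fun p : G × G => tmul p.1 p.2) '' (S ×ˢ S)) with hK
    have hle : Subgroup.closure (Set.range fun p : G × G => tmul p.1 p.2) ≤ K := by
      rw [Subgroup.closure_le]
      rintro _ ⟨⟨x, y⟩, rfl⟩
      have hx : x ∈ Subgroup.closure S := by rw [hSc]; trivial
      have hy : y ∈ Subgroup.closure S := by rw [hSc]; trivial
      refine Subgroup.closure_induction₂ (p := fun x y _ _ => tmul x y ∈ K)
        ?_ ?_ ?_ ?_ ?_ ?_ ?_ hx hy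
      · intro x y hxS hyS
        exact Subgroup.subset_closure ⟨(x, y), ⟨hxS, hyS⟩, rfl⟩
      · intro x _
        rw [tmul_one_left]; exact one_mem K
      · intro x _
        rw [tmul_one_right]; exact one_mem K
      · intro x y z _ _ _ h1 h2
        rw [tmul_mul_left]; exact mul_mem h1 h2
      · intro y z x _ _ _ h1 h2
        rw [tmul_mul_right]; exact mul_mem h1 h2
      · intro x y _ _ h1
        rw [tmul_inv_left]; exact inv_mem h1
      · intro x y _ _ h1
        rw [tmul_inv_right]; exact inv_mem h1
    exact hle hz
  -- ## Step 10 : the pairing kills the commutator subgroup (left and right)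
  have tmul_commutator_right : ∀ (y : G), ∀ c ∈ _root_.commutator G, tmul y c = 1 := by
    intro y c hc
    let f : G →* TensorSquare G := MonoidHom.mk' (fun x => tmul y x)
      (fun a b => tmul_mul_right y a b)
    have : _root_.commutator G ≤ f.ker := by
      rw [commutator_eq_closure, Subgroup.closure_le]
      rintro _ ⟨g, h, rfl⟩
      exact tmul_comm_right y g h
    exact this hc
  -- ## Step 11 : commutative group structure and ℤ-module structure
  letI : CommGroup (TensorSquare G) :=
    { (inferInstance : Group (TensorSquare G)) with mul_comm := hcomm }
  haveI : AddGroup.FG (Additive (TensorSquare G)) := GroupFG.iff_add_fg.mp hMfg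
  haveI : Module.Finite ℤ (Additive (TensorSquare G)) := Module.Finite.iff_addGroup_fg.mpr this
  haveI : NoZeroSMulDivisors ℤ (Additive (TensorSquare G)) := by
    refine ⟨fun {c x} hcx => ?_⟩
    by_cases hc0 : c = 0
    · exact Or.inl hc0
    · refine Or.inr ?_
      have h1 : Additive.toMul x ^ c = 1 := by
        rw [← toMul_zsmul, hcx]; rfl
      have h2 : IsOfFinOrder (Additive.toMul x) :=
        isOfFinOrder_iff_zpow_eq_one.mpr ⟨c, hc0, h1⟩
      have h3 := TF _ h2
      exact h3
  haveI : Module.Free ℤ (Additive (TensorSquare G)) := Module.free_of_finite_type_torsion_free'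
  set k := Module.finrank ℤ (Additive (TensorSquare G)) with hkdef
  let b : Module.Basis (Fin k) ℤ (Additive (TensorSquare G)) := Module.finBasis ℤ _
  -- the multiplicative equivalence with ℤ^k
  let e₁ : Additive (TensorSquare G) ≃ₗ[ℤ] (Fin k → ℤ) := b.equivFun
  let e₂ : Multiplicative (Additive (TensorSquare G)) ≃* Multiplicative (Fin k → ℤ) :=
    AddEquiv.toMultiplicative e₁.toAddEquiv
  let e : TensorSquare G ≃* Multiplicative (Fin k → ℤ) :=
    { toFun := fun m => e₂ (Multiplicative.ofAdd (Additive.ofMul m))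
      invFun := fun p => Additive.toMul (Multiplicative.toAdd (e₂.symm p))
      left_inv := fun m => by simp
      right_inv := fun p => by simp
      map_mul' := fun m₁ m₂ => by
        simpa using map_mul e₂ (Multiplicative.ofAdd (Additive.ofMul m₁))
          (Multiplicative.ofAdd (Additive.ofMul m₂)) }
  -- ## Step 12 : instances on the tensor product side
  haveI : AddGroup.FG (Additive A) := GroupFG.iff_add_fg.mp hA
  haveI : Module.Finite ℤ (Additive A) := Module.Finite.iff_addGroup_fg.mpr this
  have habsurj : Function.Surjective (Abelianization.of : G →* Abelianization G) :=
    fun x => QuotientGroup.induction_on x fun g => ⟨g, rfl⟩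
  haveI : Group.FG (Abelianization G) := Group.fg_of_surjective habsurj
  haveI : AddGroup.FG (Additive (Abelianization G)) := GroupFG.iff_add_fg.mp this
  haveI : Module.Finite ℤ (Additive (Abelianization G)) := Module.Finite.iff_addGroup_fg.mpr this
  haveI : Module.Finite ℤ (TensorProduct ℤ (Additive A) (Additive (Abelianization G))) :=
    Module.Finite.tensorProduct ℤ _ _
  -- ## Step 13 : the linear map Θ : A ⊗ G_ab → G ⊗ G
  let F : A → (Abelianization G →* TensorSquare G) := fun a =>
    Abelianization.lift (MonoidHom.mk' (fun y => tmul (i a) y)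
      (fun y z => tmul_mul_right (i a) y z))
  have F_of : ∀ (a : A) (g : G), F a (Abelianization.of g) = tmul (i a) g :=
    fun a g => Abelianization.lift_apply_of _ _
  have F_mul : ∀ a a' : A, F (a * a') = F a * F a' := by
    intro a a'
    refine Abelianization.hom_ext _ _ ?_
    ext g
    show F (a * a') (Abelianization.of g) = F a (Abelianization.of g) * F a' (Abelianization.of g)
    rw [F_of, F_of, F_of, map_mul, tmul_mul_left]
  let inner : A → (Additive (Abelianization G) →ₗ[ℤ] Additive (TensorSquare G)) := fun a =>
    (MonoidHom.toAdditive (F a)).toIntLinearMap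
  let Θbil : Additive A →ₗ[ℤ] Additive (Abelianization G) →ₗ[ℤ] Additive (TensorSquare G) :=
    AddMonoidHom.toIntLinearMap
      (AddMonoidHom.mk' (fun a => inner (Additive.toMul a)) (by
        intro a a'
        refine LinearMap.ext fun x => ?_
        show Additive.ofMul (F (Additive.toMul a * Additive.toMul a') (Additive.toMul x)) = _
        rw [F_mul]
        rfl))
  let Θ : TensorProduct ℤ (Additive A) (Additive (Abelianization G)) →ₗ[ℤ]
      Additive (TensorSquare G) := TensorProduct.lift Θbil
  have Θ_apply : ∀ (a : A) (g : G),
      Θ (Additive.ofMul a ⊗ₜ[ℤ] Additive.ofMul (Abelianization.of g)) =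
        Additive.ofMul (tmul (i a) g) := by
    intro a g
    show Θbil (Additive.ofMul a) (Additive.ofMul (Abelianization.of g)) = _
    show Additive.ofMul (F a (Abelianization.of g)) = _
    rw [F_of]
  -- ## Step 14 : n-th powers land in the range of Θ
  haveI : Nonempty H := ⟨1⟩
  set n := Nat.card H with hndef
  have hnpos : 0 < n := Nat.card_pos
  have hpow_mem : ∀ z : TensorSquare G,
      (n : ℤ) • Additive.ofMul z ∈ LinearMap.range Θ := by
    have key : ∀ p : G × G, (n : ℤ) • Additive.ofMul (tmul p.1 p.2) ∈ LinearMap.range Θ := by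
      rintro ⟨x, y⟩
      have h1 : (π x) ^ n = 1 := pow_card_eq_one'
      have h2 : x ^ n ∈ i.range := by
        rw [← hker]
        show π (x ^ n) = 1
        rw [map_pow, h1]
      obtain ⟨a, ha⟩ := h2
      have h3 : tmul x y ^ n = tmul (i a) y := by
        let f : G →* TensorSquare G := MonoidHom.mk' (fun x => tmul x y)
          (fun u v => tmul_mul_left u v y)
        have : f (x ^ n) = f x ^ n := map_pow f x n
        rw [← ha] at this
        exact this.symm
      refine ⟨Additive.ofMul a ⊗ₜ[ℤ] Additive.ofMul (Abelianization.of y), ?_⟩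
      rw [Θ_apply, ← h3]
      rw [show ((n : ℤ) • Additive.ofMul (tmul x y)) = Additive.ofMul (tmul x y ^ (n : ℤ)) from
        (ofMul_zpow _ _).symm]
      norm_cast
    intro z
    let S' : Subgroup (TensorSquare G) :=
      { carrier := {z | (n : ℤ) • Additive.ofMul z ∈ LinearMap.range Θ}
        one_mem' := by
          show (n : ℤ) • Additive.ofMul (1 : TensorSquare G) ∈ LinearMap.range Θ
          rw [show Additive.ofMul (1 : TensorSquare G) = 0 from rfl, smul_zero]
          exact zero_mem _
        mul_mem' := by
          intro u v hu hv
          have hu' : (n : ℤ) • Additive.ofMul u ∈ LinearMap.range Θ := hu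
          have hv' : (n : ℤ) • Additive.ofMul v ∈ LinearMap.range Θ := hv
          show (n : ℤ) • Additive.ofMul (u * v) ∈ LinearMap.range Θ
          rw [show Additive.ofMul (u * v) = Additive.ofMul u + Additive.ofMul v from rfl,
            smul_add]
          exact add_mem hu' hv'
        inv_mem' := by
          intro u hu
          have hu' : (n : ℤ) • Additive.ofMul u ∈ LinearMap.range Θ := hu
          show (n : ℤ) • Additive.ofMul u⁻¹ ∈ LinearMap.range Θ
          rw [show Additive.ofMul u⁻¹ = -Additive.ofMul u from rfl, smul_neg]
          exact neg_mem hu' }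
    have : z ∈ S' := by
      apply PresentedGroup.generated_by
      rintro ⟨x, y⟩
      exact key (x, y)
    exact this
  -- ## Step 15 : k ≤ finrank of the tensor product
  have hchoice : ∀ j : Fin k, ∃ t, Θ t = (n : ℤ) • b j := by
    intro j
    obtain ⟨t, ht⟩ := hpow_mem (Additive.toMul (b j))
    exact ⟨t, ht⟩
  choose t ht using hchoice
  have hli : LinearIndependent ℤ t := by
    rw [Fintype.linearIndependent_iff]
    intro g hg j
    have h1 : Θ (∑ i, g i • t i) = 0 := by rw [hg, map_zero]
    rw [map_sum] at h1
    simp only [map_smul, ht] at h1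
    have h2 : ∑ i, (g i * n) • b i = 0 := by
      rw [← h1]
      refine Finset.sum_congr rfl fun i _ => ?_
      rw [mul_smul]
    have h3 := (Fintype.linearIndependent_iff.mp b.linearIndependent) (fun i => g i * n) h2 j
    have hn0 : (n : ℤ) ≠ 0 := by exact_mod_cast hnpos.ne'
    exact (mul_eq_zero.mp h3).resolve_right hn0
  have hkle : k ≤ Module.finrank ℤ
      (TensorProduct ℤ (Additive A) (Additive (Abelianization G))) := by
    have := hli.fintype_card_le_finrank
    simpa using this
  -- ## Step 16 : conclusion
  refine ⟨k, ⟨TF, ⊤, inferInstance, ?_, ⟨Subgroup.topEquiv.trans e⟩⟩, ?_⟩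
  · intro L' _ hle
    exact eq_top_iff.mpr hle
  · omega

end TensorSquareAux

/-- For a central extension `1 → A → G → H → 1` with `A` finitely
generated and `H` finite, the tensor square `G ⊗ G` either has a nontrivial torsion
element, or is a Bieberbach group of dimension `k ≤ 2 · rank (A ⊗_ℤ G_ab)`. -/
theorem tensorSquare_torsion_or_bieberbach
    (A : Type v) (G : Type u) (H : Type w) [CommGroup A] [Group G] [Group H]
    (i : A →* G) (π : G →* H)
    (hi : Function.Injective i) (hπ : Function.Surjective π)
    (hker : π.ker = i.range) (hcent : i.range ≤ Subgroup.center G)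
    (hA : Group.FG A) (hH : Finite H) :
    (∃ t : TensorSquare G, t ≠ 1 ∧ IsOfFinOrder t) ∨
    ∃ k : ℕ, IsBieberbachOfDim (TensorSquare G) k ∧
      k ≤ 2 * Module.finrank ℤ
        (TensorProduct ℤ (Additive A) (Additive (Abelianization G))) := by
  by_cases h : ∃ t : TensorSquare G, t ≠ 1 ∧ IsOfFinOrder t
  · exact Or.inl h
  · right
    push_neg at h
    have TF : ∀ x : TensorSquare G, IsOfFinOrder x → x = 1 := by
      intro x hx
      by_contra hx1
      exact h x hx1 hx
    exact TensorSquareAux.tf_case A G H i π hi hπ hker hcent hA hH TF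
end

section
/- Let 1 → A → G → H → 1 be a central extension of groups where H is finite and G_ab ≅ ℤ and A ≅ ℤ. Then the nonabelian tensor square G ⊗ G is torsion-free if and only if either G ⊗ G is isomorphic to ℤ and H ⊗ H is cyclic, or G ⊗ G is isomorphic to ℤ ⊕ ℤ. -/
universe u v w

open scoped commutatorElement

namespace TS

variable {G : Type u} [Group G]

lemma tmul_rel1 (g h k : G) :
    tmul (g * h) k = tmul (g * h * g⁻¹) (g * k * g⁻¹) * tmul g k := by
  have hr : (FreeGroup.of (g * h, k) *
      (FreeGroup.of (g * h * g⁻¹, g * k * g⁻¹) * FreeGroup.of (g, k))⁻¹) ∈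
      Subgroup.normalClosure (tensorSquareRels G) :=
    Subgroup.subset_normalClosure ⟨g, h, k, Or.inl rfl⟩
  have h1 : (QuotientGroup.mk (FreeGroup.of (g * h, k) *
      (FreeGroup.of (g * h * g⁻¹, g * k * g⁻¹) * FreeGroup.of (g, k))⁻¹) :
      PresentedGroup (tensorSquareRels G)) = 1 :=
    (QuotientGroup.eq_one_iff _).mpr hr
  rw [QuotientGroup.mk_mul, QuotientGroup.mk_inv, QuotientGroup.mk_mul] at h1
  have h2 := mul_eq_one_iff_eq_inv.mp h1
  rw [inv_inv] at h2
  exact h2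

lemma tmul_rel2 (g h k : G) :
    tmul g (h * k) = tmul g h * tmul (h * g * h⁻¹) (h * k * h⁻¹) := by
  have hr : (FreeGroup.of (g, h * k) *
      (FreeGroup.of (g, h) * FreeGroup.of (h * g * h⁻¹, h * k * h⁻¹))⁻¹) ∈
      Subgroup.normalClosure (tensorSquareRels G) :=
    Subgroup.subset_normalClosure ⟨g, h, k, Or.inr rfl⟩
  have h1 : (QuotientGroup.mk (FreeGroup.of (g, h * k) *
      (FreeGroup.of (g, h) * FreeGroup.of (h * g * h⁻¹, h * k * h⁻¹))⁻¹) :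
      PresentedGroup (tensorSquareRels G)) = 1 :=
    (QuotientGroup.eq_one_iff _).mpr hr
  rw [QuotientGroup.mk_mul, QuotientGroup.mk_inv, QuotientGroup.mk_mul] at h1
  have h2 := mul_eq_one_iff_eq_inv.mp h1
  rw [inv_inv] at h2
  exact h2

def lift {K : Type v} [Group K] (f : G → G → K)
    (h1 : ∀ g h k : G, f (g * h) k = f (g * h * g⁻¹) (g * k * g⁻¹) * f g k)
    (h2 : ∀ g h k : G, f g (h * k) = f g h * f (h * g * h⁻¹) (h * k * h⁻¹)) :
    TensorSquare G →* K :=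
  PresentedGroup.toGroup (f := fun p : G × G => f p.1 p.2) (by
    rintro r ⟨g, h, k, (rfl | rfl)⟩ <;>
      simp only [map_mul, map_inv, FreeGroup.lift_apply_of] <;>
      [rw [h1 g h k]; rw [h2 g h k]] <;> group)

@[simp] lemma lift_tmul {K : Type v} [Group K] (f : G → G → K) (h1) (h2) (g h : G) :
    lift f h1 h2 (tmul g h) = f g h :=
  PresentedGroup.toGroup.of _

lemma hom_ext {K : Type v} [Group K] {φ ψ : TensorSquare G →* K}
    (h : ∀ g h' : G, φ (tmul g h') = ψ (tmul g h')) : φ = ψ :=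
  PresentedGroup.ext (fun ⟨g, h'⟩ => h g h')

lemma generated_by (S : Subgroup (TensorSquare G)) (h : ∀ g h' : G, tmul g h' ∈ S) :
    ∀ t : TensorSquare G, t ∈ S :=
  fun t => PresentedGroup.generated_by _ S (fun ⟨g, h'⟩ => h g h') t

lemma tmul_one_left (k : G) : tmul (1 : G) k = 1 := by
  have h := tmul_rel1 (1 : G) 1 k
  simp only [one_mul, mul_one, inv_one] at h
  have h2 := mul_left_cancel (a := tmul (1 : G) k)
    (show tmul (1 : G) k * 1 = tmul (1 : G) k * tmul (1 : G) k by rw [mul_one, ← h])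
  exact h2.symm

lemma tmul_one_right (g : G) : tmul g (1 : G) = 1 := by
  have h := tmul_rel2 g 1 1
  simp only [one_mul, mul_one, inv_one] at h
  have h2 := mul_left_cancel (a := tmul g (1 : G))
    (show tmul g (1 : G) * 1 = tmul g (1 : G) * tmul g (1 : G) by rw [mul_one, ← h])
  exact h2.symm

/-- The commutator homomorphism `κ : G ⊗ G →* G`. -/
def comm : TensorSquare G →* G :=
  lift (fun g h => g * h * g⁻¹ * h⁻¹) (by intros; group) (by intros; group)

@[simp] lemma comm_tmul (g h : G) : comm (tmul g h) = g * h * g⁻¹ * h⁻¹ :=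
  lift_tmul _ _ _ _ _

/-- The action of `G` on its tensor square. -/
def act (g : G) : TensorSquare G →* TensorSquare G :=
  lift (fun x y => tmul (g * x * g⁻¹) (g * y * g⁻¹))
    (by
      intro x y k
      rw [show g * (x * y) * g⁻¹ = (g * x * g⁻¹) * (g * y * g⁻¹) by group]
      rw [tmul_rel1 (g * x * g⁻¹) (g * y * g⁻¹) (g * k * g⁻¹)]
      rw [show g * x * g⁻¹ * (g * y * g⁻¹) * (g * x * g⁻¹)⁻¹ = g * (x * y * x⁻¹) * g⁻¹ by group]
      rw [show g * x * g⁻¹ * (g * k * g⁻¹) * (g * x * g⁻¹)⁻¹ = g * (x * k * x⁻¹) * g⁻¹ by group])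
    (by
      intro x y k
      rw [show g * (y * k) * g⁻¹ = (g * y * g⁻¹) * (g * k * g⁻¹) by group]
      rw [tmul_rel2 (g * x * g⁻¹) (g * y * g⁻¹) (g * k * g⁻¹)]
      rw [show g * y * g⁻¹ * (g * x * g⁻¹) * (g * y * g⁻¹)⁻¹ = g * (y * x * y⁻¹) * g⁻¹ by group]
      rw [show g * y * g⁻¹ * (g * k * g⁻¹) * (g * y * g⁻¹)⁻¹ = g * (y * k * y⁻¹) * g⁻¹ by group])

@[simp] lemma act_tmul (g x y : G) :
    act g (tmul x y) = tmul (g * x * g⁻¹) (g * y * g⁻¹) :=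
  lift_tmul _ _ _ _ _

lemma act_one (s : TensorSquare G) : act (1 : G) s = s := by
  have : act (1 : G) = MonoidHom.id (TensorSquare G) := by
    apply hom_ext; intro x y; simp
  rw [this]; rfl

lemma act_mul (g h : G) (s : TensorSquare G) : act (g * h) s = act g (act h s) := by
  have : act (g * h) = (act g).comp (act h) := by
    apply hom_ext; intro x y
    simp only [act_tmul, MonoidHom.comp_apply]
    rw [show g * (h * x * h⁻¹) * g⁻¹ = g * h * x * (g * h)⁻¹ by group,
      show g * (h * y * h⁻¹) * g⁻¹ = g * h * y * (g * h)⁻¹ by group]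
  rw [this]; rfl

lemma act_inv (g : G) (s : TensorSquare G) : act g⁻¹ (act g s) = s := by
  rw [← act_mul, inv_mul_cancel, act_one]

lemma conj_tmul (a c p q : G) :
    tmul a c * tmul p q * (tmul a c)⁻¹ =
      tmul (a * c * a⁻¹ * c⁻¹ * p * (a * c * a⁻¹ * c⁻¹)⁻¹)
        (a * c * a⁻¹ * c⁻¹ * q * (a * c * a⁻¹ * c⁻¹)⁻¹) := by
  have main : ∀ b d : G,
      tmul ((a * c * a⁻¹) * (a * b * a⁻¹) * (a * c * a⁻¹)⁻¹)
          ((a * c * a⁻¹) * (a * d * a⁻¹) * (a * c * a⁻¹)⁻¹) * tmul a c =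
        tmul a c *
          tmul ((c * a * c⁻¹) * (c * b * c⁻¹) * (c * a * c⁻¹)⁻¹)
            ((c * a * c⁻¹) * (c * d * c⁻¹) * (c * a * c⁻¹)⁻¹) := by
    intro b d
    have w1 : tmul (a * b) (c * d) =
        tmul (a * b * a⁻¹) (a * c * a⁻¹) *
          tmul ((a * c * a⁻¹) * (a * b * a⁻¹) * (a * c * a⁻¹)⁻¹)
            ((a * c * a⁻¹) * (a * d * a⁻¹) * (a * c * a⁻¹)⁻¹) *
          (tmul a c * tmul (c * a * c⁻¹) (c * d * c⁻¹)) := by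
      rw [tmul_rel1 a b (c * d), tmul_rel2 a c d,
        show a * (c * d) * a⁻¹ = (a * c * a⁻¹) * (a * d * a⁻¹) by group,
        tmul_rel2 (a * b * a⁻¹) (a * c * a⁻¹) (a * d * a⁻¹)]
    have w2 : tmul (a * b) (c * d) =
        tmul (a * b * a⁻¹) (a * c * a⁻¹) * tmul a c *
          (tmul ((c * a * c⁻¹) * (c * b * c⁻¹) * (c * a * c⁻¹)⁻¹)
              ((c * a * c⁻¹) * (c * d * c⁻¹) * (c * a * c⁻¹)⁻¹) *
            tmul (c * a * c⁻¹) (c * d * c⁻¹)) := by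
      rw [tmul_rel2 (a * b) c d, tmul_rel1 a b c,
        show c * (a * b) * c⁻¹ = (c * a * c⁻¹) * (c * b * c⁻¹) by group,
        tmul_rel1 (c * a * c⁻¹) (c * b * c⁻¹) (c * d * c⁻¹)]
    have h := w1.symm.trans w2
    rw [mul_assoc (tmul (a * b * a⁻¹) (a * c * a⁻¹)),
      mul_assoc (tmul (a * b * a⁻¹) (a * c * a⁻¹))] at h
    have h2 := mul_left_cancel h
    have h3 := congrArg (fun z => z * (tmul (c * a * c⁻¹) (c * d * c⁻¹))⁻¹) h2
    simp only [mul_assoc, mul_inv_cancel, mul_one] at h3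
    simp only [mul_assoc]
    exact h3
  have key := main (a⁻¹ * (c⁻¹ * p * c) * a) (a⁻¹ * (c⁻¹ * q * c) * a)
  rw [show (a * c * a⁻¹) * (a * (a⁻¹ * (c⁻¹ * p * c) * a) * a⁻¹) * (a * c * a⁻¹)⁻¹ =
      a * c * a⁻¹ * c⁻¹ * p * (a * c * a⁻¹ * c⁻¹)⁻¹ by group,
    show (a * c * a⁻¹) * (a * (a⁻¹ * (c⁻¹ * q * c) * a) * a⁻¹) * (a * c * a⁻¹)⁻¹ =
      a * c * a⁻¹ * c⁻¹ * q * (a * c * a⁻¹ * c⁻¹)⁻¹ by group,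
    show (c * a * c⁻¹) * (c * (a⁻¹ * (c⁻¹ * p * c) * a) * c⁻¹) * (c * a * c⁻¹)⁻¹ = p by group,
    show (c * a * c⁻¹) * (c * (a⁻¹ * (c⁻¹ * q * c) * a) * c⁻¹) * (c * a * c⁻¹)⁻¹ = q by group]
    at key
  rw [← key]
  group

lemma conj_act (t s : TensorSquare G) : t * s * t⁻¹ = act (comm t) s := by
  let S : Subgroup (TensorSquare G) :=
  { carrier := {t | ∀ s, t * s * t⁻¹ = act (comm t) s}
    one_mem' := by
      intro s
      simp only [map_one]
      rw [act_one]
      group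
    mul_mem' := by
      intro t1 t2 ht1 ht2 s
      calc t1 * t2 * s * (t1 * t2)⁻¹ = t1 * (t2 * s * t2⁻¹) * t1⁻¹ := by group
        _ = t1 * act (comm t2) s * t1⁻¹ := by rw [ht2]
        _ = act (comm t1) (act (comm t2) s) := ht1 _
        _ = act (comm t1 * comm t2) s := (act_mul _ _ _).symm
        _ = act (comm (t1 * t2)) s := by rw [map_mul]
    inv_mem' := by
      intro t ht s
      have h0 := ht (t⁻¹ * s * t)
      rw [show t * (t⁻¹ * s * t) * t⁻¹ = s by group] at h0
      have h1 := congrArg (act ((comm t)⁻¹)) h0.symm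
      rw [act_inv] at h1
      rw [inv_inv, map_inv]
      exact h1 }
  have base : ∀ a c : G, tmul a c ∈ S := by
    intro a c
    intro s
    have he : ((MulAut.conj (tmul a c)).toMonoidHom : TensorSquare G →* TensorSquare G) =
        act (comm (tmul a c)) := by
      apply hom_ext
      intro p q
      simp only [MulEquiv.coe_toMonoidHom, MulAut.conj_apply, comm_tmul, act_tmul]
      exact conj_tmul a c p q
    calc tmul a c * s * (tmul a c)⁻¹
        = ((MulAut.conj (tmul a c)).toMonoidHom : TensorSquare G →* TensorSquare G) s := by
          simp [MulAut.conj_apply]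
      _ = act (comm (tmul a c)) s := by rw [he]
  exact generated_by S base t s

lemma comm_mem_commutator (t : TensorSquare G) : comm t ∈ commutator G := by
  refine generated_by ((commutator G).comap comm) (fun g h => ?_) t
  simp only [Subgroup.mem_comap, comm_tmul]
  have : g * h * g⁻¹ * h⁻¹ = ⁅g, h⁆ := (commutatorElement_def g h).symm
  rw [this]
  exact Subgroup.commutator_mem_commutator (Subgroup.mem_top g) (Subgroup.mem_top h)

lemma exists_comm_preimage {c : G} (hc : c ∈ commutator G) : ∃ t, comm t = c := by
  have hle : commutator G ≤ (comm (G := G)).range := by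
    rw [commutator_eq_closure]
    refine Subgroup.closure_le _ |>.mpr ?_
    rintro x ⟨g, h, rfl⟩
    exact ⟨tmul g h, by rw [comm_tmul, commutatorElement_def]⟩
  exact hle hc

lemma comm_central_shift {x y z w : G} (hz : z ∈ Subgroup.center G)
    (hw : w ∈ Subgroup.center G) : ⁅x * z, y * w⁆ = ⁅x, y⁆ := by
  have hz' := Subgroup.mem_center_iff.mp hz
  have hw' := Subgroup.mem_center_iff.mp hw
  have hzc : ∀ g : G, z * g * z⁻¹ = g := fun g => by rw [← hz' g]; group
  have hwc : ∀ g : G, w * g * w⁻¹ = g := fun g => by rw [← hw' g]; group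
  calc ⁅x * z, y * w⁆ = x * z * y * (w * (z⁻¹ * x⁻¹) * w⁻¹) * y⁻¹ := by
        rw [commutatorElement_def]; group
    _ = x * z * y * (z⁻¹ * x⁻¹) * y⁻¹ := by rw [hwc]
    _ = x * (z * y * z⁻¹) * (x⁻¹ * y⁻¹) := by group
    _ = x * y * (x⁻¹ * y⁻¹) := by rw [hzc]
    _ = ⁅x, y⁆ := by rw [commutatorElement_def]; group

lemma finite_commutatorSet_of_finiteIndex_center (G : Type u) [Group G]
    [(Subgroup.center G).FiniteIndex] : Finite (commutatorSet G) := by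
  have hfin : Finite (G ⧸ Subgroup.center G) :=
    Subgroup.finite_quotient_of_finiteIndex
  let F : (G ⧸ Subgroup.center G) × (G ⧸ Subgroup.center G) → G :=
    fun p => ⁅p.1.out, p.2.out⁆
  have hsub : commutatorSet G ⊆ Set.range F := by
    rintro x ⟨g, h, rfl⟩
    refine ⟨(QuotientGroup.mk g, QuotientGroup.mk h), ?_⟩
    obtain ⟨z, hz⟩ := QuotientGroup.mk_out_eq_mul (Subgroup.center G) g
    obtain ⟨w, hw⟩ := QuotientGroup.mk_out_eq_mul (Subgroup.center G) h
    show ⁅(QuotientGroup.mk g : G ⧸ Subgroup.center G).out,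
      (QuotientGroup.mk h : G ⧸ Subgroup.center G).out⁆ = ⁅g, h⁆
    rw [hz, hw]
    exact comm_central_shift z.2 w.2
  exact Set.Finite.to_subtype (Set.Finite.subset (Set.finite_range F) hsub)

lemma ker_comm_le_center : (comm (G := G)).ker ≤ Subgroup.center (TensorSquare G) := by
  intro t ht
  rw [Subgroup.mem_center_iff]
  intro s
  have h := conj_act t s
  rw [MonoidHom.mem_ker.mp ht, act_one] at h
  calc s * t = t * s * t⁻¹ * t := by rw [h]
    _ = t * s := by group

lemma mul_comm_of_torsionfree [(Subgroup.center G).FiniteIndex]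
    (τ : ∀ t : TensorSquare G, IsOfFinOrder t → t = 1) :
    ∀ u v : TensorSquare G, u * v = v * u := by
  haveI := finite_commutatorSet_of_finiteIndex_center G
  haveI : Finite (_root_.commutator G) := inferInstance
  haveI : Finite (comm (G := G)).range := by
    have hsub : ((comm (G := G)).range : Set G) ⊆ ((commutator G : Subgroup G) : Set G) := by
      rintro x ⟨t, rfl⟩
      exact comm_mem_commutator t
    exact Set.Finite.to_subtype (Set.Finite.subset (Set.toFinite _) hsub)
  haveI : (comm (G := G)).ker.FiniteIndex := Subgroup.finiteIndex_ker _
  haveI : (Subgroup.center (TensorSquare G)).FiniteIndex :=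
    Subgroup.finiteIndex_of_le ker_comm_le_center
  haveI := finite_commutatorSet_of_finiteIndex_center (TensorSquare G)
  haveI : Finite (_root_.commutator (TensorSquare G)) := inferInstance
  intro u v
  rw [← commutatorElement_eq_one_iff_mul_comm]
  refine τ _ ?_
  have hmem : ⁅u, v⁆ ∈ _root_.commutator (TensorSquare G) :=
    Subgroup.commutator_mem_commutator (Subgroup.mem_top u) (Subgroup.mem_top v)
  have : IsOfFinOrder (⟨⁅u, v⁆, hmem⟩ : _root_.commutator (TensorSquare G)) :=
    isOfFinOrder_of_finite _
  exact (_root_.commutator (TensorSquare G)).subtype.isOfFinOrder this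

lemma zpow_of_add {K : Type v} [Group K] (F : ℤ → K) (h : ∀ a b : ℤ, F (a + b) = F a * F b) :
    ∀ n : ℤ, F n = F 1 ^ n := by
  have h0 : F 0 = 1 := by
    have := h 0 0
    rw [add_zero] at this
    exact (left_eq_mul.mp this)
  have hneg : F (-1) = (F 1)⁻¹ := by
    have := h 1 (-1)
    rw [add_neg_cancel, h0] at this
    exact (inv_eq_of_mul_eq_one_right this.symm).symm
  intro n
  induction n using Int.induction_on with
  | zero => rw [h0, zpow_zero]
  | succ n ih =>
    have h2 := h n 1
    rw [ih] at h2
    rw [h2, ← zpow_add_one]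
  | pred n ih =>
    have h2 := h (-n) (-1)
    rw [ih, hneg] at h2
    rw [show (-(n : ℤ) - 1) = -(n : ℤ) + -1 by ring, h2, ← sub_eq_add_neg, zpow_sub_one]

lemma main_structure (G : Type u) [Group G] [(Subgroup.center G).FiniteIndex]
    (φ : G →* Multiplicative ℤ)
    (hker : ∀ g : G, φ g = 1 → g ∈ _root_.commutator G)
    (g₀ : G) (hg₀ : φ g₀ = Multiplicative.ofAdd 1)
    (τ : ∀ t : TensorSquare G, IsOfFinOrder t → t = 1) :
    (∀ g k : G, tmul g k = tmul g₀ g₀ ^ ((φ g).toAdd * (φ k).toAdd)) ∧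
      Nonempty (TensorSquare G ≃* Multiplicative ℤ) := by
  haveI := finite_commutatorSet_of_finiteIndex_center G
  haveI : Finite (_root_.commutator G) := inferInstance
  have hc : ∀ u v : TensorSquare G, u * v = v * u := mul_comm_of_torsionfree τ
  -- the action is trivial on the commutator subgroup
  have hact : ∀ c ∈ _root_.commutator G, ∀ s : TensorSquare G, act c s = s := by
    intro c hcmem s
    obtain ⟨t, rfl⟩ := exists_comm_preimage hcmem
    rw [← conj_act t s, hc t s, mul_inv_cancel_right]
  -- elements of the commutator subgroup have finite order
  have hford : ∀ c ∈ _root_.commutator G, ∃ n : ℕ, 0 < n ∧ c ^ n = 1 := by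
    intro c hcmem
    have h1 : IsOfFinOrder (⟨c, hcmem⟩ : _root_.commutator G) := isOfFinOrder_of_finite _
    have h2 := (_root_.commutator G).subtype.isOfFinOrder h1
    exact isOfFinOrder_iff_pow_eq_one.mp h2
  -- vanishing on the left
  have hvanl : ∀ c k : G, c ∈ _root_.commutator G → tmul c k = 1 := by
    intro c k hcmem
    have hpow : ∀ n : ℕ, tmul (c ^ n) k = tmul c k ^ n := by
      intro n
      induction n with
      | zero => rw [pow_zero, pow_zero, tmul_one_left]
      | succ n ih =>
        calc tmul (c ^ (n + 1)) k = tmul (c ^ n * c) k := by rw [pow_succ]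
          _ = act (c ^ n) (tmul c k) * tmul (c ^ n) k := by
              rw [tmul_rel1 (c ^ n) c k, ← act_tmul]
          _ = tmul c k * tmul c k ^ n := by rw [hact _ (pow_mem hcmem n), ih]
          _ = tmul c k ^ (n + 1) := (pow_succ' _ _).symm
    obtain ⟨n, hn, hcn⟩ := hford c hcmem
    have : tmul c k ^ n = 1 := by rw [← hpow, hcn, tmul_one_left]
    exact τ _ (isOfFinOrder_iff_pow_eq_one.mpr ⟨n, hn, this⟩)
  -- vanishing on the right
  have hvanr : ∀ k c : G, c ∈ _root_.commutator G → tmul k c = 1 := by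
    intro k c hcmem
    have hpow : ∀ n : ℕ, tmul k (c ^ n) = tmul k c ^ n := by
      intro n
      induction n with
      | zero => rw [pow_zero, pow_zero, tmul_one_right]
      | succ n ih =>
        calc tmul k (c ^ (n + 1)) = tmul k (c * c ^ n) := by rw [pow_succ']
          _ = tmul k c * act c (tmul k (c ^ n)) := by
              rw [tmul_rel2 k c (c ^ n), ← act_tmul]
          _ = tmul k c * tmul k c ^ n := by rw [hact _ hcmem, ih]
          _ = tmul k c ^ (n + 1) := (pow_succ' _ _).symm
    obtain ⟨n, hn, hcn⟩ := hford c hcmem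
    have : tmul k c ^ n = 1 := by rw [← hpow, hcn, tmul_one_right]
    exact τ _ (isOfFinOrder_iff_pow_eq_one.mpr ⟨n, hn, this⟩)
  -- decomposition of an arbitrary element
  have hdec : ∀ g : G, ∃ c ∈ _root_.commutator G, g = g₀ ^ (φ g).toAdd * c := by
    intro g
    refine ⟨(g₀ ^ (φ g).toAdd)⁻¹ * g, ?_, by group⟩
    apply hker
    have h1 : φ (g₀ ^ (φ g).toAdd) = φ g := by
      rw [map_zpow, hg₀]
      apply Multiplicative.toAdd.injective
      rw [toAdd_zpow, toAdd_ofAdd]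
      simp
    rw [map_mul, map_inv, h1, inv_mul_cancel]
  have hconj : ∀ a b : ℤ, g₀ ^ a * g₀ ^ b * (g₀ ^ a)⁻¹ = g₀ ^ b := by
    intro a b
    rw [← zpow_add, add_comm, zpow_add, mul_inv_cancel_right]
  -- step 1
  have step1 : ∀ g k : G, tmul g k = tmul (g₀ ^ (φ g).toAdd) k := by
    intro g k
    obtain ⟨c, hcmem, hgc⟩ := hdec g
    calc tmul g k = tmul (g₀ ^ (φ g).toAdd * c) k := by rw [← hgc]
      _ = tmul (g₀ ^ (φ g).toAdd * c * (g₀ ^ (φ g).toAdd)⁻¹)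
            (g₀ ^ (φ g).toAdd * k * (g₀ ^ (φ g).toAdd)⁻¹) * tmul (g₀ ^ (φ g).toAdd) k :=
          tmul_rel1 _ _ _
      _ = tmul (g₀ ^ (φ g).toAdd) k := by
          rw [hvanl (g₀ ^ (φ g).toAdd * c * (g₀ ^ (φ g).toAdd)⁻¹) _
            (Subgroup.Normal.conj_mem inferInstance c hcmem _), one_mul]
  -- step 2
  have step2 : ∀ (m : ℤ) (k : G), tmul (g₀ ^ m) k = tmul (g₀ ^ m) (g₀ ^ (φ k).toAdd) := by
    intro m k
    obtain ⟨d, hdmem, hkd⟩ := hdec k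
    calc tmul (g₀ ^ m) k = tmul (g₀ ^ m) (g₀ ^ (φ k).toAdd * d) := by rw [← hkd]
      _ = tmul (g₀ ^ m) (g₀ ^ (φ k).toAdd) *
            tmul (g₀ ^ (φ k).toAdd * (g₀ ^ m) * (g₀ ^ (φ k).toAdd)⁻¹)
              (g₀ ^ (φ k).toAdd * d * (g₀ ^ (φ k).toAdd)⁻¹) := tmul_rel2 _ _ _
      _ = tmul (g₀ ^ m) (g₀ ^ (φ k).toAdd) := by
          rw [hvanr _ (g₀ ^ (φ k).toAdd * d * (g₀ ^ (φ k).toAdd)⁻¹)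
            (Subgroup.Normal.conj_mem inferInstance d hdmem _), mul_one]
  -- step 3
  have step3 : ∀ m n : ℤ, tmul (g₀ ^ m) (g₀ ^ n) = tmul g₀ g₀ ^ (m * n) := by
    have sub2 : ∀ m : ℤ, tmul (g₀ ^ m) g₀ = tmul g₀ g₀ ^ m := by
      have hadd : ∀ a b : ℤ, tmul (g₀ ^ (a + b)) g₀ = tmul (g₀ ^ a) g₀ * tmul (g₀ ^ b) g₀ := by
        intro a b
        calc tmul (g₀ ^ (a + b)) g₀ = tmul (g₀ ^ a * g₀ ^ b) g₀ := by rw [zpow_add]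
          _ = tmul (g₀ ^ a * g₀ ^ b * (g₀ ^ a)⁻¹) (g₀ ^ a * g₀ * (g₀ ^ a)⁻¹) *
                tmul (g₀ ^ a) g₀ := tmul_rel1 _ _ _
          _ = tmul (g₀ ^ b) g₀ * tmul (g₀ ^ a) g₀ := by
              rw [hconj a b, show g₀ ^ a * g₀ * (g₀ ^ a)⁻¹ = g₀ from by
                have := hconj a 1; rwa [zpow_one] at this]
          _ = tmul (g₀ ^ a) g₀ * tmul (g₀ ^ b) g₀ := hc _ _
      intro m
      have := zpow_of_add (fun n => tmul (g₀ ^ n) g₀) hadd m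
      rwa [zpow_one] at this
    have sub1 : ∀ (m : ℤ), ∀ n : ℤ, tmul (g₀ ^ m) (g₀ ^ n) = tmul (g₀ ^ m) g₀ ^ n := by
      intro m
      have hadd : ∀ a b : ℤ,
          tmul (g₀ ^ m) (g₀ ^ (a + b)) = tmul (g₀ ^ m) (g₀ ^ a) * tmul (g₀ ^ m) (g₀ ^ b) := by
        intro a b
        calc tmul (g₀ ^ m) (g₀ ^ (a + b)) = tmul (g₀ ^ m) (g₀ ^ a * g₀ ^ b) := by rw [zpow_add]
          _ = tmul (g₀ ^ m) (g₀ ^ a) *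
                tmul (g₀ ^ a * g₀ ^ m * (g₀ ^ a)⁻¹) (g₀ ^ a * g₀ ^ b * (g₀ ^ a)⁻¹) :=
              tmul_rel2 _ _ _
          _ = tmul (g₀ ^ m) (g₀ ^ a) * tmul (g₀ ^ m) (g₀ ^ b) := by rw [hconj a m, hconj a b]
      intro n
      have := zpow_of_add (fun n => tmul (g₀ ^ m) (g₀ ^ n)) hadd n
      rwa [zpow_one] at this
    intro m n
    rw [sub1 m n, sub2 m, ← zpow_mul]
  have master : ∀ g k : G, tmul g k = tmul g₀ g₀ ^ ((φ g).toAdd * (φ k).toAdd) := by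
    intro g k
    rw [step1 g k, step2 _ k, step3]
  refine ⟨master, ?_⟩
  -- build the isomorphism
  have hφconj : ∀ g h : G, φ (g * h * g⁻¹) = φ h := by
    intro g h
    rw [map_mul, map_mul, map_inv, mul_comm, ← mul_assoc, inv_mul_cancel, one_mul]
  let ψ : TensorSquare G →* Multiplicative ℤ :=
    lift (fun g h => Multiplicative.ofAdd ((φ g).toAdd * (φ h).toAdd))
      (by
        intro g h k
        rw [hφconj g h, hφconj g k, map_mul φ g h, toAdd_mul, ← ofAdd_add]
        exact congrArg Multiplicative.ofAdd (by ring))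
      (by
        intro g h k
        rw [hφconj h g, hφconj h k, map_mul φ h k, toAdd_mul, ← ofAdd_add]
        exact congrArg Multiplicative.ofAdd (by ring))
  have hψ : ∀ g k : G, ψ (tmul g k) = Multiplicative.ofAdd ((φ g).toAdd * (φ k).toAdd) :=
    fun g k => lift_tmul _ _ _ _ _
  let α : Multiplicative ℤ →* TensorSquare G := zpowersHom _ (tmul g₀ g₀)
  have h₁ : α.comp ψ = MonoidHom.id (TensorSquare G) := by
    apply hom_ext
    intro g k
    simp only [MonoidHom.comp_apply, MonoidHom.id_apply, hψ, α, zpowersHom_apply]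
    rw [toAdd_ofAdd, ← master]
  have h₂ : ψ.comp α = MonoidHom.id (Multiplicative ℤ) := by
    apply MonoidHom.ext_mint
    simp only [MonoidHom.comp_apply, MonoidHom.id_apply, α, zpowersHom_apply]
    rw [toAdd_ofAdd, zpow_one, hψ, hg₀]
    simp
  exact ⟨MonoidHom.toMulEquiv ψ α h₁ h₂⟩

/-- Functoriality of the tensor square. -/
def map {H : Type w} [Group H] (π : G →* H) : TensorSquare G →* TensorSquare H :=
  lift (fun g h => tmul (π g) (π h))
    (by
      intro g h k
      simp only [map_mul, map_inv]
      exact tmul_rel1 _ _ _)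
    (by
      intro g h k
      simp only [map_mul, map_inv]
      exact tmul_rel2 _ _ _)

lemma map_surjective {H : Type w} [Group H] (π : G →* H) (hπ : Function.Surjective π) :
    Function.Surjective (map π) := by
  intro t
  have : ∀ t : TensorSquare H, t ∈ (map (G := G) π).range := by
    refine generated_by _ (fun a b => ?_)
    obtain ⟨x, hx⟩ := hπ a
    obtain ⟨y, hy⟩ := hπ b
    exact ⟨tmul x y, by rw [show map π (tmul x y) = tmul (π x) (π y) from lift_tmul _ _ _ _ _,
      hx, hy]⟩
  exact this t

lemma torsionfree_of_iso {T : Type u} [Group T] {M : Type v} [AddGroup M]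
    (e : T ≃* Multiplicative M) (hM : ∀ (n : ℕ) (x : M), 0 < n → n • x = 0 → x = 0) :
    ∀ t : T, IsOfFinOrder t → t = 1 := by
  intro t ht
  obtain ⟨n, hn, hpow⟩ := isOfFinOrder_iff_pow_eq_one.mp ht
  have h1 : (e t) ^ n = 1 := by rw [← map_pow, hpow, map_one]
  have h2 : n • (e t).toAdd = 0 := by
    rw [← toAdd_pow, h1, toAdd_one]
  have h3 : (e t).toAdd = 0 := hM n _ hn h2
  apply e.injective
  apply Multiplicative.toAdd.injective
  rw [h3, map_one, toAdd_one]

end TS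

/-- For a central extension `1 → A → G → H → 1` with `H` finite,
`G_ab ≅ ℤ` and `A ≅ ℤ`, the tensor square `G ⊗ G` is torsion-free if and only if
either `G ⊗ G ≅ ℤ` and `H ⊗ H` is cyclic, or `G ⊗ G ≅ ℤ ⊕ ℤ`. -/
theorem tensorSquare_torsionFree_iff
    (A : Type v) (G : Type u) (H : Type w) [Group A] [Group G] [Group H]
    (i : A →* G) (π : G →* H)
    (hi : Function.Injective i) (hπ : Function.Surjective π)
    (hker : π.ker = i.range) (hcent : i.range ≤ Subgroup.center G)
    (hH : Finite H)
    (hab : Nonempty (Abelianization G ≃* Multiplicative ℤ))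
    (hA : Nonempty (A ≃* Multiplicative ℤ)) :
    (∀ t : TensorSquare G, IsOfFinOrder t → t = 1) ↔
      ((Nonempty (TensorSquare G ≃* Multiplicative ℤ) ∧ IsCyclic (TensorSquare H)) ∨
        Nonempty (TensorSquare G ≃* Multiplicative (ℤ × ℤ))) := by
  constructor
  · intro τ
    left
    haveI := hH
    haveI : Finite (G ⧸ π.ker) :=
      Finite.of_equiv H (QuotientGroup.quotientKerEquivOfSurjective π hπ).symm.toEquiv
    haveI : π.ker.FiniteIndex := Subgroup.finiteIndex_of_finite_quotient
    have hle : π.ker ≤ Subgroup.center G := by rw [hker]; exact hcent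
    haveI : (Subgroup.center G).FiniteIndex := Subgroup.finiteIndex_of_le hle
    obtain ⟨eab⟩ := hab
    set φ : G →* Multiplicative ℤ := eab.toMonoidHom.comp Abelianization.of with hφ
    have hkerφ : ∀ g : G, φ g = 1 → g ∈ _root_.commutator G := by
      intro g hg
      have h1 : Abelianization.of g = 1 := by
        apply eab.injective
        rw [map_one]
        exact hg
      exact (QuotientGroup.eq_one_iff g).mp h1
    have hφsurj : Function.Surjective φ := by
      intro x
      obtain ⟨y, hy⟩ := eab.surjective x
      obtain ⟨g, hg⟩ := QuotientGroup.mk_surjective (s := _root_.commutator G) y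
      exact ⟨g, by rw [hφ, MonoidHom.comp_apply, show Abelianization.of g = y from hg]; exact hy⟩
    obtain ⟨g₀, hg₀⟩ := hφsurj (Multiplicative.ofAdd 1)
    obtain ⟨master, ⟨iso⟩⟩ := TS.main_structure G φ hkerφ g₀ hg₀ τ
    refine ⟨⟨iso⟩, ?_⟩
    haveI : IsCyclic (TensorSquare G) := isCyclic_of_surjective iso.symm iso.symm.surjective
    exact isCyclic_of_surjective (TS.map π) (TS.map_surjective π hπ)
  · rintro (⟨he, -⟩ | he) <;> obtain ⟨e⟩ := he
    · refine TS.torsionfree_of_iso e ?_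
      intro n x hn hx
      have h1 : (n : ℤ) * x = 0 := by rwa [nsmul_eq_mul] at hx
      rcases mul_eq_zero.mp h1 with h | h
      · exact absurd h (by exact_mod_cast hn.ne')
      · exact h
    · refine TS.torsionfree_of_iso e ?_
      intro n x hn hx
      have h1 : n • x.1 = 0 := by
        have := congrArg Prod.fst hx
        simpa using this
      have h2 : n • x.2 = 0 := by
        have := congrArg Prod.snd hx
        simpa using this
      have hx1 : x.1 = 0 := by
        have : (n : ℤ) * x.1 = 0 := by rwa [nsmul_eq_mul] at h1
        rcases mul_eq_zero.mp this with h | h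
        · exact absurd h (by exact_mod_cast hn.ne')
        · exact h
      have hx2 : x.2 = 0 := by
        have : (n : ℤ) * x.2 = 0 := by rwa [nsmul_eq_mul] at h2
        rcases mul_eq_zero.mp this with h | h
        · exact absurd h (by exact_mod_cast hn.ne')
        · exact h
      exact Prod.ext hx1 hx2
end
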